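/- arXiv:1107.4623 — 11 statements merged into one kernel-verified Lean document; each statement's English description precedes it below -/
import Mathlib

section
/- Let Q ⊆ ℂⁿ, A ∈ ℂ^{m×n}, y = A x* + e, η > 0, and suppose x⊥ ∈ Q. Let x^k ∈ ℂⁿ and let x^{k+1} ∈ Q satisfy ‖x^{k+1} − (x^k − η·Aᴴ(A x^k − y))‖₂ ≤ ‖u − (x^k − η·Aᴴ(A x^k − y))‖₂ for all u ∈ Q (i.e., x^{k+1} is a projection of the gradient step onto Q). Set d^k = x^k − x⊥, d^{k+1} = x^{k+1} − x⊥, and d* = x* − x⊥. Then ‖d^{k+1}‖₂² ≤ 2·Re[⟨d^k, d^{k+1}⟩ − η⟨A d^k, A d^{k+1}⟩] + 2η·Re⟨A d^{k+1}, A d* + e⟩. -/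
open scoped Classical

noncomputable def l2norm {n : ℕ} (v : Fin n → ℂ) : ℝ :=
  Real.sqrt (∑ i, ‖v i‖ ^ 2)

noncomputable def l1norm {n : ℕ} (v : Fin n → ℂ) : ℝ :=
  ∑ i, ‖v i‖

noncomputable def lpPow {n : ℕ} (p : ℝ) (v : Fin n → ℂ) : ℝ :=
  ∑ i, ‖v i‖ ^ p

noncomputable def lpnorm {n : ℕ} (p : ℝ) (v : Fin n → ℂ) : ℝ :=
  (∑ i, ‖v i‖ ^ p) ^ (1/p)

noncomputable def Fball {n : ℕ} (p c : ℝ) : Set (Fin n → ℂ) :=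
  {x | ∑ i, ‖x i‖ ^ p ≤ c}

def IsProj {n : ℕ} (p c : ℝ) (x xp : Fin n → ℂ) : Prop :=
  xp ∈ Fball p c ∧ ∀ u ∈ Fball p c, l2norm (x - xp) ≤ l2norm (x - u)

def Sparse {n : ℕ} (t : ℕ) (v : Fin n → ℂ) : Prop :=
  (Finset.univ.filter fun i => v i ≠ 0).card ≤ t

noncomputable def herm {n : ℕ} (u v : Fin n → ℂ) : ℂ :=
  ∑ i, (starRingEnd ℂ) (u i) * v i

noncomputable def restrict {n : ℕ} (I : Finset (Fin n)) (d : Fin n → ℂ) : Fin n → ℂ :=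
  fun i => if i ∈ I then d i else 0

lemma herm_self_re {n : ℕ} (v : Fin n → ℂ) :
    (herm v v).re = ∑ i, ‖v i‖ ^ 2 := by
  rw [herm, Complex.re_sum]
  exact Finset.sum_congr rfl fun i _ => by
    rw [Complex.sq_norm, ← Complex.normSq_eq_conj_mul_self, Complex.ofReal_re]

lemma l2norm_sq {n : ℕ} (v : Fin n → ℂ) :
    l2norm v ^ 2 = (herm v v).re := by
  rw [herm_self_re, l2norm, Real.sq_sqrt]
  positivity

lemma herm_comm {n : ℕ} (u v : Fin n → ℂ) :
    herm u v = (starRingEnd ℂ) (herm v u) := by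
  simp [herm, map_sum, map_mul, mul_comm]

lemma herm_sub_right {n : ℕ} (u v w : Fin n → ℂ) :
    herm u (v - w) = herm u v - herm u w := by
  simp [herm, mul_sub, Finset.sum_sub_distrib]

lemma herm_smul_right {n : ℕ} (c : ℂ) (u v : Fin n → ℂ) :
    herm u (c • v) = c * herm u v := by
  simp [herm, Finset.mul_sum]
  exact Finset.sum_congr rfl fun i _ => by ring

lemma herm_adjoint {m n : ℕ} (A : Matrix (Fin m) (Fin n) ℂ)
    (u : Fin n → ℂ) (v : Fin m → ℂ) :
    herm u (A.conjTranspose.mulVec v) = herm (A.mulVec u) v := by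
  simp only [herm, Matrix.mulVec, dotProduct, Matrix.conjTranspose_apply,
    map_sum, map_mul, Finset.mul_sum, Finset.sum_mul]
  rw [Finset.sum_comm]
  exact Finset.sum_congr rfl fun i _ => Finset.sum_congr rfl fun j _ => by
    rw [← starRingEnd_apply]; ring

lemma herm_expand {n : ℕ} (a b : Fin n → ℂ) :
    herm (a - b) (a - b) = herm a a - herm a b - herm b a + herm b b := by
  simp only [herm, Pi.sub_apply, map_sub, sub_mul, mul_sub,
    Finset.sum_sub_distrib]
  abel

lemma key_ineq {n : ℕ} (a b : Fin n → ℂ)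
    (h : (herm (a - b) (a - b)).re ≤ (herm (0 - b) (0 - b)).re) :
    (herm a a).re ≤ 2 * (herm a b).re := by
  rw [herm_expand, herm_expand] at h
  have hba : (herm b a).re = (herm a b).re := by rw [herm_comm]; exact Complex.conj_re _
  have h0 : herm (0 : Fin n → ℂ) (0 : Fin n → ℂ) = 0 := by simp [herm]
  have h1 : herm (0 : Fin n → ℂ) b = 0 := by simp [herm]
  have h2 : herm b (0 : Fin n → ℂ) = 0 := by simp [herm]
  rw [h0, h1, h2] at h
  simp only [Complex.add_re, Complex.sub_re, Complex.zero_re] at h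
  linarith

theorem pgd_iterate_inequality
    {m n : ℕ} (Q : Set (Fin n → ℂ))
    (A : Matrix (Fin m) (Fin n) ℂ)
    (xstar xperp xk xk1 : Fin n → ℂ) (e y : Fin m → ℂ)
    (hy : y = A.mulVec xstar + e)
    (η : ℝ) (hη : 0 < η)
    (hxperp : xperp ∈ Q) (hxk1Q : xk1 ∈ Q)
    (hproj : ∀ u ∈ Q,
      l2norm (xk1 - (xk - (η : ℂ) • (A.conjTranspose.mulVec (A.mulVec xk - y)))) ≤
      l2norm (u - (xk - (η : ℂ) • (A.conjTranspose.mulVec (A.mulVec xk - y))))) :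
    l2norm (xk1 - xperp) ^ 2 ≤
      2 * (herm (xk - xperp) (xk1 - xperp)
            - (η : ℂ) * herm (A.mulVec (xk - xperp)) (A.mulVec (xk1 - xperp))).re
      + 2 * η * (herm (A.mulVec (xk1 - xperp)) (A.mulVec (xstar - xperp) + e)).re := by
  have h := hproj xperp hxperp
  set g := xk - (η : ℂ) • (A.conjTranspose.mulVec (A.mulVec xk - y)) with hg
  have hnn : 0 ≤ l2norm (xk1 - g) := Real.sqrt_nonneg _
  have hsq : l2norm (xk1 - g) ^ 2 ≤ l2norm (xperp - g) ^ 2 :=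
    pow_le_pow_left₀ hnn h 2
  rw [l2norm_sq, l2norm_sq] at hsq
  have e1 : xk1 - g = (xk1 - xperp) - (g - xperp) := by abel
  have e2 : xperp - g = (0 : Fin n → ℂ) - (g - xperp) := by abel
  rw [e1, e2] at hsq
  have key := key_ineq (xk1 - xperp) (g - xperp) hsq
  have hwval : g - xperp = (xk - xperp)
      - (η : ℂ) • (A.conjTranspose.mulVec (A.mulVec xk - y)) := by
    rw [hg]; abel
  have hv : A.mulVec xk - y = A.mulVec (xk - xperp) - (A.mulVec (xstar - xperp) + e) := by
    rw [hy, Matrix.mulVec_sub, Matrix.mulVec_sub]; abel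
  have hdw : herm (xk1 - xperp) (g - xperp) = herm (xk1 - xperp) (xk - xperp)
      - (η : ℂ) * (herm (A.mulVec (xk1 - xperp)) (A.mulVec (xk - xperp))
          - herm (A.mulVec (xk1 - xperp)) (A.mulVec (xstar - xperp) + e)) := by
    rw [hwval, herm_sub_right, herm_smul_right, herm_adjoint, hv, herm_sub_right,
      herm_sub_right]
  have hre1 : (herm (xk - xperp) (xk1 - xperp)).re
      = (herm (xk1 - xperp) (xk - xperp)).re := by
    rw [herm_comm]; exact Complex.conj_re _
  have hre2 : (herm (A.mulVec (xk - xperp)) (A.mulVec (xk1 - xperp))).re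
      = (herm (A.mulVec (xk1 - xperp)) (A.mulVec (xk - xperp))).re := by
    rw [herm_comm]; exact Complex.conj_re _
  rw [l2norm_sq]
  calc (herm (xk1 - xperp) (xk1 - xperp)).re
      ≤ 2 * (herm (xk1 - xperp) (g - xperp)).re := key
    _ = _ := by
        rw [hdw]
        simp only [Complex.sub_re, Complex.re_ofReal_mul]
        rw [hre1, hre2]
        ring
end

section
/- (Shifting inequality) Let 0 < p < 2, let l, r ≥ 1 be integers, and let u₁ ≥ u₂ ≥ ⋯ ≥ u_{l+r} ≥ 0 be real numbers. Then (Σ_{i=l+1}^{l+r} uᵢ²)^{1/2} ≤ C·(Σ_{i=1}^{r} uᵢ^p)^{1/p}, where C = max{ r^{1/2−1/p}, √(p/2)·((2/(2−p))·l)^{1/2−1/p} }. -/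
open scoped Classical

open Finset

lemma amgm_scalar {q L K : ℝ} (hq : 1 < q) (hL : 0 < L) (hLK : L ≤ K) :
    (K - L) * K ^ (-q) ≤ q⁻¹ * ((q - 1) / q) ^ (q - 1) * L ^ (1 - q) := by
  have hq0 : (0:ℝ) < q := by linarith
  have hq1 : (0:ℝ) < q - 1 := by linarith
  have hK : 0 < K := lt_of_lt_of_le hL hLK
  set A : ℝ := q * (K - L) with hA
  set B : ℝ := L * q / (q - 1) with hB
  have hA0 : 0 ≤ A := by
    have : 0 ≤ K - L := by linarith
    positivity
  have hB0 : 0 < B := by positivity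
  have hw : 1/q + (q-1)/q = 1 := by field_simp; ring
  have hgeom : A ^ (1/q) * B ^ ((q-1)/q) ≤ K := by
    have h := Real.geom_mean_le_arith_mean2_weighted
      (by positivity : (0:ℝ) ≤ 1/q) (by positivity : (0:ℝ) ≤ (q-1)/q) hA0 hB0.le hw
    calc A ^ (1/q) * B ^ ((q-1)/q) ≤ 1/q * A + (q-1)/q * B := h
      _ = K := by rw [hA, hB]; field_simp; ring
  have eA : (A ^ (1/q)) ^ q = A := by
    rw [← Real.rpow_mul hA0, one_div_mul_cancel hq0.ne', Real.rpow_one]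
  have eB : (B ^ ((q-1)/q)) ^ q = B ^ (q-1) := by
    rw [← Real.rpow_mul hB0.le, div_mul_cancel₀ _ hq0.ne']
  have hABq : A * B ^ (q - 1) ≤ K ^ q := by
    have h2 : (A ^ (1/q) * B ^ ((q-1)/q)) ^ q ≤ K ^ q :=
      Real.rpow_le_rpow
        (mul_nonneg (Real.rpow_nonneg hA0 _) (Real.rpow_nonneg hB0.le _)) hgeom hq0.le
    calc A * B ^ (q-1) = (A ^ (1/q)) ^ q * (B ^ ((q-1)/q)) ^ q := by rw [eA, eB]
      _ = (A ^ (1/q) * B ^ ((q-1)/q)) ^ q := by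
          rw [Real.mul_rpow (Real.rpow_nonneg hA0 _) (Real.rpow_nonneg hB0.le _)]
      _ ≤ K ^ q := h2
  have hBpow : 0 < B ^ (q-1) := Real.rpow_pos_of_pos hB0 _
  have hKq : 0 < K ^ q := Real.rpow_pos_of_pos hK _
  have e6 : B ^ (1-q) = ((q-1)/q) ^ (q-1) * L ^ (1-q) := by
    have hqq : (0:ℝ) < q / (q-1) := by positivity
    have : B = L * (q/(q-1)) := by rw [hB]; ring
    rw [this, Real.mul_rpow hL.le hqq.le,
      show (1-q : ℝ) = -(q-1) by ring, Real.rpow_neg hqq.le,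
      ← Real.inv_rpow hqq.le, inv_div]
    ring
  have h4 : (q * B ^ (q-1))⁻¹ = q⁻¹ * ((q - 1) / q) ^ (q - 1) * L ^ (1 - q) := by
    rw [mul_inv, ← Real.rpow_neg hB0.le, show (-(q-1):ℝ) = 1 - q by ring, e6]
    ring
  rw [← h4, Real.rpow_neg hK.le, ← div_eq_mul_inv, div_le_iff₀ hKq, inv_mul_eq_div,
    le_div_iff₀ (by positivity)]
  calc (K - L) * (q * B ^ (q-1)) = A * B ^ (q-1) := by ring
    _ ≤ K ^ q := hABq

lemma scalar_max {q : ℝ} (hq : 1 < q) {l r k : ℕ} (hl : 1 ≤ l) (hr : 1 ≤ r)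
    (hk1 : l + 1 ≤ k) (hk2 : k ≤ l + r) :
    ((k:ℝ) - l) * (((min k r : ℕ)):ℝ) ^ (-q) ≤
      max ((r:ℝ) ^ (1-q)) (q⁻¹ * ((q-1)/q) ^ (q-1) * (l:ℝ) ^ (1-q)) := by
  have hr0 : (0:ℝ) < r := by exact_mod_cast hr
  rcases le_or_gt k r with h | h
  · rw [min_eq_left h]
    refine le_trans (le_trans (le_of_eq rfl)
      (amgm_scalar hq (by exact_mod_cast hl) (by
        exact_mod_cast hk1.trans' (Nat.le_succ l) : (l:ℝ) ≤ k)))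
      (le_max_right _ _)
  · rw [min_eq_right h.le]
    refine le_trans ?_ (le_max_left _ _)
    have hkl : (k:ℝ) - l ≤ r := by
      have : (k:ℝ) ≤ l + r := by exact_mod_cast hk2
      linarith
    calc ((k:ℝ) - l) * (r:ℝ) ^ (-q) ≤ (r:ℝ) * (r:ℝ) ^ (-q) :=
          mul_le_mul_of_nonneg_right hkl (Real.rpow_nonneg hr0.le _)
      _ = (r:ℝ) ^ (1-q) := by
          rw [show (1:ℝ) - q = 1 + -q by ring, Real.rpow_add hr0, Real.rpow_one]

lemma core_shift {q : ℝ} (hq : 1 < q) (l r : ℕ) (hl : 1 ≤ l) (hr : 1 ≤ r) (a : ℕ → ℝ)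
    (hnn : ∀ i, 1 ≤ i → i ≤ l + r → 0 ≤ a i)
    (hdec : ∀ i j, 1 ≤ i → i ≤ j → j ≤ l + r → a j ≤ a i) :
    ∑ i ∈ Icc (l+1) (l+r), a i ^ q ≤
      max ((r:ℝ)^(1-q)) (q⁻¹ * ((q-1)/q)^(q-1) * (l:ℝ)^(1-q)) * (∑ i ∈ Icc 1 r, a i) ^ q := by
  have hq0 : (0:ℝ) < q := by linarith
  set N := l + r with hN
  set M : ℝ := max ((r:ℝ)^(1-q)) (q⁻¹ * ((q-1)/q)^(q-1) * (l:ℝ)^(1-q)) with hM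
  have hM0 : 0 < M := lt_max_of_lt_left (Real.rpow_pos_of_pos (by exact_mod_cast hr) _)
  set S : ℝ := ∑ i ∈ Icc 1 r, a i with hS
  have hrN : r ≤ N := by omega
  have hS0 : 0 ≤ S := Finset.sum_nonneg fun i hi => by
    rw [mem_Icc] at hi; exact hnn i hi.1 (hi.2.trans hrN)
  -- difference sequence
  set b : ℕ → ℝ := fun k => if k ≤ N then a k else 0 with hb
  set v : ℕ → ℝ := fun k => b k - b (k+1) with hv
  have hv0 : ∀ k, 1 ≤ k → 0 ≤ v k := by
    intro k hk
    simp only [hv, hb]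
    split_ifs with h1 h2 h2
    · exact sub_nonneg.mpr (hdec k (k+1) hk (Nat.le_succ k) h2)
    · simpa using hnn k hk h1
    · omega
    · simp
  have htel : ∀ i, 1 ≤ i → i ≤ N → a i = ∑ k ∈ Icc i N, v k := by
    intro i hi1 hi2
    rw [← Finset.Ico_add_one_right_eq_Icc, Finset.sum_Ico_eq_sum_range]
    have := Finset.sum_range_sub' (fun j => b (i + j)) (N + 1 - i)
    simp only [← Nat.add_assoc] at this
    rw [this]
    have e1 : i + (N + 1 - i) = N + 1 := by omega
    simp only [Nat.add_zero, e1, hb]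
    simp [Nat.not_succ_le_self, hi2]
  have hsub : ∀ i, 1 ≤ i → ∑ k ∈ Icc i N, v k = ∑ k ∈ Icc 1 N, if i ≤ k then v k else 0 := by
    intro i hi
    rw [← Finset.sum_filter]
    congr 1
    ext k
    simp only [mem_filter, mem_Icc]
    omega
  have hSv : S = ∑ k ∈ Icc 1 N, ((min k r : ℕ):ℝ) * v k := by
    rw [hS]
    have e1 : ∀ i ∈ Icc 1 r, a i = ∑ k ∈ Icc 1 N, if i ≤ k then v k else 0 := by
      intro i hi; rw [mem_Icc] at hi
      rw [htel i hi.1 (hi.2.trans hrN), hsub i hi.1]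
    rw [Finset.sum_congr rfl e1, Finset.sum_comm]
    refine Finset.sum_congr rfl fun k hk => ?_
    rw [← Finset.sum_filter]
    have e2 : (Icc 1 r).filter (fun i => i ≤ k) = Icc 1 (min k r) := by
      ext i; simp only [mem_filter, mem_Icc]; omega
    rw [e2, Finset.sum_const, Nat.card_Icc]
    simp [nsmul_eq_mul]
  rcases eq_or_lt_of_le hS0 with h0 | hpos
  · -- S = 0
    have ha0 : ∀ i ∈ Icc (l+1) N, a i ^ q = 0 := by
      intro i hi; rw [mem_Icc] at hi
      have hzero : ∀ j, 1 ≤ j → j ≤ r → a j = 0 := by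
        intro j hj1 hj2
        have := (Finset.sum_eq_zero_iff_of_nonneg fun i hi => by
          rw [mem_Icc] at hi; exact hnn i hi.1 (hi.2.trans hrN)).mp h0.symm
        exact this j (mem_Icc.mpr ⟨hj1, hj2⟩)
      have hi1 : 1 ≤ i := by omega
      have : a i = 0 := by
        rcases le_or_gt i r with h | h
        · exact hzero i hi1 h
        · have h1 : a i ≤ a r := hdec r i hr h.le hi.2
          have h2 : 0 ≤ a i := hnn i hi1 hi.2
          have := hzero r hr le_rfl
          linarith
      rw [this, Real.zero_rpow hq0.ne']
    rw [Finset.sum_eq_zero ha0, ← h0, Real.zero_rpow hq0.ne', mul_zero]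
  · -- S > 0
    set w : ℕ → ℝ := fun k => ((min k r : ℕ):ℝ) * v k / S with hw
    have hmpos : ∀ k ∈ Icc 1 N, (0:ℝ) < ((min k r : ℕ):ℝ) := by
      intro k hk; rw [mem_Icc] at hk
      have : 1 ≤ min k r := le_min hk.1 hr
      exact_mod_cast this
    have hw0 : ∀ k ∈ Icc 1 N, 0 ≤ w k := by
      intro k hk; rw [mem_Icc] at hk
      exact div_nonneg (mul_nonneg (Nat.cast_nonneg _) (hv0 k hk.1)) hS0
    have hwsum : ∑ k ∈ Icc 1 N, w k = 1 := by
      rw [hw, ← Finset.sum_div, ← hSv, div_self hpos.ne']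
    set z : ℕ → ℕ → ℝ := fun k i => if i ≤ k then S / ((min k r : ℕ):ℝ) else 0 with hz
    have hz0 : ∀ i, ∀ k ∈ Icc 1 N, 0 ≤ z k i := by
      intro i k hk
      simp only [hz]
      split_ifs with h
      · exact div_nonneg hS0 (Nat.cast_nonneg _)
      · exact le_rfl
    have hid : ∀ i ∈ Icc (l+1) N, a i = ∑ k ∈ Icc 1 N, w k * z k i := by
      intro i hi; rw [mem_Icc] at hi
      have hi1 : 1 ≤ i := by omega
      rw [htel i hi1 hi.2, hsub i hi1]
      refine Finset.sum_congr rfl fun k hk => ?_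
      simp only [hw, hz]
      split_ifs with h
      · have hm : ((min k r : ℕ):ℝ) ≠ 0 := (hmpos k hk).ne'
        have e : (↑(min k r) : ℝ) * v k / S * (S / ↑(min k r)) =
            v k * ((↑(min k r):ℝ) / ↑(min k r)) * (S / S) := by ring
        rw [e, div_self hm, div_self hpos.ne', mul_one, mul_one]
      · simp
    have hJ : ∀ i ∈ Icc (l+1) N, a i ^ q ≤ ∑ k ∈ Icc 1 N, w k * z k i ^ q := by
      intro i hi
      rw [hid i hi]
      exact Real.rpow_arith_mean_le_arith_mean_rpow _ w (fun k => z k i)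
        hw0 hwsum (hz0 i) hq.le
    have hcount : ∀ k ∈ Icc 1 N,
        ∑ i ∈ Icc (l+1) N, z k i ^ q = ((k - l : ℕ):ℝ) * (S / ((min k r : ℕ):ℝ)) ^ q := by
      intro k hk; rw [mem_Icc] at hk
      have e1 : ∀ i, z k i ^ q = if i ≤ k then (S / ((min k r : ℕ):ℝ)) ^ q else 0 := by
        intro i; simp only [hz]
        split_ifs with h
        · rfl
        · exact Real.zero_rpow hq0.ne'
      simp only [e1]
      rw [← Finset.sum_filter]
      have e2 : (Icc (l+1) N).filter (fun i => i ≤ k) = Icc (l+1) k := by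
        ext i; simp only [mem_filter, mem_Icc]; omega
      rw [e2, Finset.sum_const, Nat.card_Icc, nsmul_eq_mul]
      congr 2
      omega
    have hperk : ∀ k ∈ Icc 1 N,
        ((k - l : ℕ):ℝ) * (S / ((min k r : ℕ):ℝ)) ^ q ≤ M * S ^ q := by
      intro k hk
      have hm := hmpos k hk
      rw [mem_Icc] at hk
      rcases le_or_gt k l with h | h
      · have : k - l = 0 := by omega
        rw [this]
        simp only [Nat.cast_zero, zero_mul]
        positivity
      · have e3 : (S / ((min k r : ℕ):ℝ)) ^ q = ((min k r : ℕ):ℝ) ^ (-q) * S ^ q := by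
          rw [Real.div_rpow hS0 (Nat.cast_nonneg _), Real.rpow_neg (Nat.cast_nonneg _),
            div_eq_mul_inv, mul_comm]
        have e4 : ((k - l : ℕ):ℝ) = (k:ℝ) - l := by
          have : l ≤ k := by omega
          push_cast [this]; ring
        rw [e3, e4, ← mul_assoc]
        refine mul_le_mul_of_nonneg_right ?_ (Real.rpow_nonneg hS0 _)
        have hk1 : l + 1 ≤ k := h
        exact scalar_max hq hl hr hk1 hk.2
    calc ∑ i ∈ Icc (l+1) N, a i ^ q
        ≤ ∑ i ∈ Icc (l+1) N, ∑ k ∈ Icc 1 N, w k * z k i ^ q := Finset.sum_le_sum hJ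
      _ = ∑ k ∈ Icc 1 N, ∑ i ∈ Icc (l+1) N, w k * z k i ^ q := Finset.sum_comm
      _ = ∑ k ∈ Icc 1 N, w k * ∑ i ∈ Icc (l+1) N, z k i ^ q := by
          refine Finset.sum_congr rfl fun k hk => ?_
          rw [Finset.mul_sum]
      _ ≤ ∑ k ∈ Icc 1 N, w k * (M * S ^ q) := by
          refine Finset.sum_le_sum fun k hk => ?_
          refine mul_le_mul_of_nonneg_left ?_ (hw0 k hk)
          rw [hcount k hk]
          exact hperk k hk
      _ = M * S ^ q := by rw [← Finset.sum_mul, hwsum, one_mul]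

theorem shifting_inequality
    (p : ℝ) (hp0 : 0 < p) (hp2 : p < 2)
    (l r : ℕ) (hl : 1 ≤ l) (hr : 1 ≤ r)
    (u : ℕ → ℝ)
    (hdec : ∀ i j : ℕ, 1 ≤ i → i ≤ j → j ≤ l + r → u j ≤ u i)
    (hnonneg : ∀ i : ℕ, 1 ≤ i → i ≤ l + r → 0 ≤ u i) :
    (∑ i ∈ Finset.Icc (l + 1) (l + r), u i ^ 2) ^ ((1 : ℝ) / 2) ≤
      max ((r : ℝ) ^ ((1 : ℝ) / 2 - 1 / p))
          (Real.sqrt (p / 2) * (2 / (2 - p) * (l : ℝ)) ^ ((1 : ℝ) / 2 - 1 / p)) *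
        (∑ i ∈ Finset.Icc 1 r, u i ^ p) ^ (1 / p) := by
  have h2p : (0:ℝ) < 2 - p := by linarith
  set q : ℝ := 2 / p with hqdef
  have hq : 1 < q := (one_lt_div hp0).mpr hp2
  have hq0 : (0:ℝ) < q := by linarith
  have hq1 : (0:ℝ) < q - 1 := by linarith
  set a : ℕ → ℝ := fun i => u i ^ p with ha
  have hnnA : ∀ i, 1 ≤ i → i ≤ l + r → 0 ≤ a i := fun i h1 h2 =>
    Real.rpow_nonneg (hnonneg i h1 h2) p
  have hdecA : ∀ i j, 1 ≤ i → i ≤ j → j ≤ l + r → a j ≤ a i := fun i j h1 h2 h3 =>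
    Real.rpow_le_rpow (hnonneg j (h1.trans h2) h3) (hdec i j h1 h2 h3) hp0.le
  have hcore := core_shift hq l r hl hr a hnnA hdecA
  set S : ℝ := ∑ i ∈ Finset.Icc 1 r, a i with hS
  have hS0 : 0 ≤ S := Finset.sum_nonneg fun i hi => by
    rw [Finset.mem_Icc] at hi
    exact hnnA i hi.1 (by omega)
  set M : ℝ := max ((r:ℝ)^(1-q)) (q⁻¹ * ((q-1)/q)^(q-1) * (l:ℝ)^(1-q)) with hM
  have hM0 : 0 < M := lt_max_of_lt_left (Real.rpow_pos_of_pos (by exact_mod_cast hr) _)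
  have hsum : ∑ i ∈ Finset.Icc (l + 1) (l + r), u i ^ 2
      = ∑ i ∈ Finset.Icc (l+1) (l+r), a i ^ q := by
    refine Finset.sum_congr rfl fun i hi => ?_
    rw [Finset.mem_Icc] at hi
    have hu0 : 0 ≤ u i := hnonneg i (by omega) hi.2
    rw [ha]
    rw [← Real.rpow_mul hu0, show p * q = 2 by rw [hqdef, mul_comm, div_mul_cancel₀ _ hp0.ne']]
    rw [show (2:ℝ) = ((2:ℕ):ℝ) by norm_num, Real.rpow_natCast]
  have hX0 : 0 ≤ ∑ i ∈ Finset.Icc (l + 1) (l + r), u i ^ 2 :=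
    Finset.sum_nonneg fun i _ => sq_nonneg _
  have step1 : (∑ i ∈ Finset.Icc (l + 1) (l + r), u i ^ 2) ^ ((1:ℝ)/2)
      ≤ (M * S ^ q) ^ ((1:ℝ)/2) := by
    refine Real.rpow_le_rpow hX0 ?_ (by norm_num)
    rw [hsum]
    exact hcore
  have step2 : (M * S ^ q) ^ ((1:ℝ)/2)
      = M ^ ((1:ℝ)/2) * S ^ ((1:ℝ)/p) := by
    rw [Real.mul_rpow hM0.le (Real.rpow_nonneg hS0 _), ← Real.rpow_mul hS0,
      show q * ((1:ℝ)/2) = 1/p by rw [hqdef]; ring]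
  have hc2 : (0:ℝ) ≤ ((q-1)/q)^(q-1) := Real.rpow_nonneg (by positivity) _
  have hl0 : (0:ℝ) ≤ (l:ℝ) := Nat.cast_nonneg l
  have hexp : (1:ℝ)/2 - 1/p = (1-q) * (1/2) := by rw [hqdef]; ring
  have hfrac2 : (q-1)/q = (2-p)/2 := by
    rw [hqdef]
    field_simp
  have hAhalf : ((r:ℝ)^(1-q)) ^ ((1:ℝ)/2) = (r:ℝ) ^ ((1:ℝ)/2 - 1/p) := by
    rw [← Real.rpow_mul (Nat.cast_nonneg r), ← hexp]
  have hBhalf : (q⁻¹ * ((q-1)/q)^(q-1) * (l:ℝ)^(1-q)) ^ ((1:ℝ)/2)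
      = Real.sqrt (p/2) * (2/(2-p) * (l:ℝ)) ^ ((1:ℝ)/2 - 1/p) := by
    rw [Real.mul_rpow (mul_nonneg (by positivity) hc2) (Real.rpow_nonneg hl0 _),
        Real.mul_rpow (by positivity) hc2]
    have f1 : q⁻¹ ^ ((1:ℝ)/2) = Real.sqrt (p/2) := by
      rw [hqdef, inv_div, Real.sqrt_eq_rpow]
    have f3 : ((l:ℝ)^(1-q)) ^ ((1:ℝ)/2) = (l:ℝ) ^ ((1:ℝ)/2 - 1/p) := by
      rw [← Real.rpow_mul hl0, ← hexp]
    have h10 : (0:ℝ) < (2-p)/2 := by positivity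
    have f2 : (((q-1)/q)^(q-1)) ^ ((1:ℝ)/2) = (2/(2-p)) ^ ((1:ℝ)/2 - 1/p) := by
      rw [hfrac2, hexp, show (2:ℝ)/(2-p) = ((2-p)/2)⁻¹ by rw [inv_div],
        Real.inv_rpow h10.le, ← Real.rpow_neg h10.le, ← Real.rpow_mul h10.le]
      congr 1
      ring
    rw [Real.mul_rpow (by positivity : (0:ℝ) ≤ 2/(2-p)) hl0, f1, f2, f3, mul_assoc]
  have step4 : M ^ ((1:ℝ)/2) = max ((r : ℝ) ^ ((1 : ℝ) / 2 - 1 / p))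
      (Real.sqrt (p / 2) * (2 / (2 - p) * (l : ℝ)) ^ ((1 : ℝ) / 2 - 1 / p)) := by
    have hA0 : (0:ℝ) ≤ (r:ℝ)^(1-q) := Real.rpow_nonneg (Nat.cast_nonneg r) _
    have hB0 : (0:ℝ) ≤ q⁻¹ * ((q-1)/q)^(q-1) * (l:ℝ)^(1-q) :=
      mul_nonneg (mul_nonneg (by positivity) hc2) (Real.rpow_nonneg hl0 _)
    rw [hM, ← hAhalf, ← hBhalf]
    rcases le_total ((r:ℝ)^(1-q)) (q⁻¹ * ((q-1)/q)^(q-1) * (l:ℝ)^(1-q)) with h | h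
    · rw [max_eq_right h, max_eq_right (Real.rpow_le_rpow hA0 h (by norm_num))]
    · rw [max_eq_left h, max_eq_left (Real.rpow_le_rpow hB0 h (by norm_num))]
  calc (∑ i ∈ Finset.Icc (l + 1) (l + r), u i ^ 2) ^ ((1 : ℝ) / 2)
      ≤ (M * S ^ q) ^ ((1:ℝ)/2) := step1
    _ = M ^ ((1:ℝ)/2) * S ^ ((1:ℝ)/p) := step2
    _ = _ := by rw [step4]
end

section
/- Let p ∈ (0,1], c ≥ 0, and x* ∈ ℂⁿ. If x⊥ is a projection of x* onto F_p(c), then supp(x⊥) ⊆ supp(x*); that is, x*ᵢ = 0 implies x⊥ᵢ = 0 for every coordinate i. -/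
open scoped Classical

theorem proj_support_subset
    {n : ℕ} (p c : ℝ) (hp0 : 0 < p) (hp1 : p ≤ 1) (hc : 0 ≤ c)
    (xstar xperp : Fin n → ℂ)
    (hproj : IsProj p c xstar xperp) :
    ∀ i : Fin n, xstar i = 0 → xperp i = 0 := by
  intro i hxi
  by_contra hne
  set u := Function.update xperp i 0 with hu
  have hxb := hproj.1
  rw [Fball, Set.mem_setOf_eq] at hxb
  have huball : u ∈ Fball p c := by
    rw [Fball, Set.mem_setOf_eq]
    refine le_trans ?_ hxb
    apply Finset.sum_le_sum
    intro j _
    by_cases hj : j = i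
    · subst hj
      simp [hu, Real.rpow_natCast]
      rw [Real.zero_rpow (ne_of_gt hp0)]
      positivity
    · simp [hu, Function.update_of_ne hj]
  have hlt : l2norm (xstar - u) < l2norm (xstar - xperp) := by
    unfold l2norm
    apply Real.sqrt_lt_sqrt
    · positivity
    · apply Finset.sum_lt_sum
      · intro j _
        by_cases hj : j = i
        · subst hj
          simp [hu, hxi]
        · simp [hu, Function.update_of_ne hj]
      · refine ⟨i, Finset.mem_univ i, ?_⟩
        simp [hu, hxi]
        exact pow_pos (norm_pos_iff.mpr hne) 2
  exact absurd (hproj.2 u huball) (not_le.mpr hlt)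
end

section
/- Let p ∈ (0,1], s ≥ 1 an integer, d ∈ ℂⁿ, and let S ⊆ {1,…,n}. Suppose S₂, S₃, …, S_m are pairwise disjoint subsets of the complement of S ∪ S₁ (where S₁ ⊆ S^c is also disjoint from S₂,…,S_m), such that S₁ ∪ S₂ ∪ ⋯ ∪ S_m = S^c, |S_j| ≤ s for all j with |S_j| = s for j < m, and for every j ≥ 1 and every i ∈ S_j, i' ∈ S_{j+1} one has |d_i| ≥ |d_{i'}|. Then Σ_{j≥2} ‖d|_{S_j}‖₂ ≤ √(2p)·(2s/(2−p))^{1/2−1/p}·‖d|_{S^c}‖_p. -/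
open scoped Classical

private lemma rpow_superadd {x y r : ℝ} (hx : 0 ≤ x) (hy : 0 ≤ y) (hr : 1 ≤ r) :
    x ^ r + y ^ r ≤ (x + y) ^ r := by
  have h := NNReal.add_rpow_le_rpow_add x.toNNReal y.toNNReal hr
  have h2 : ((x.toNNReal ^ r + y.toNNReal ^ r : NNReal) : ℝ)
      ≤ (((x.toNNReal + y.toNNReal) ^ r : NNReal) : ℝ) := NNReal.coe_le_coe.2 h
  rw [NNReal.coe_add, NNReal.coe_rpow, NNReal.coe_rpow, NNReal.coe_rpow, NNReal.coe_add,
    Real.coe_toNNReal x hx, Real.coe_toNNReal y hy] at h2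
  exact h2

private lemma scalar_key {p a b v : ℝ} (hp0 : 0 < p) (hp1 : p ≤ 1)
    (ha : 0 ≤ a) (hb : 0 ≤ b) (hv : 0 ≤ v) :
    a ^ ((2 - p) / (2 * p)) * b ^ ((1:ℝ)/2) ≤
      ((2 - p) / 2) ^ ((2 - p) / (2 * p)) * Real.sqrt (p / 2) *
        ((a + b + v) ^ ((1:ℝ)/p) - v ^ ((1:ℝ)/p)) := by
  have h2p : (0:ℝ) < 2 - p := by linarith
  set θ : ℝ := (2 - p) / 2 with hθdef
  have hθpos : (0:ℝ) < θ := by rw [hθdef]; positivity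
  have h1θ : 1 - θ = p / 2 := by rw [hθdef]; ring
  have hp2 : (0:ℝ) < p / 2 := by positivity
  have h1θpos : (0:ℝ) < 1 - θ := by rw [h1θ]; exact hp2
  have hgm : a ^ θ * b ^ (1 - θ) ≤ θ ^ θ * (1 - θ) ^ (1 - θ) * (a + b) := by
    have h : (a / θ) ^ θ * (b / (1 - θ)) ^ (1 - θ) ≤ θ * (a / θ) + (1 - θ) * (b / (1 - θ)) :=
      Real.geom_mean_le_arith_mean2_weighted hθpos.le h1θpos.le
        (div_nonneg ha hθpos.le) (div_nonneg hb h1θpos.le) (by ring)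
    have e1 : (a / θ) ^ θ = a ^ θ / θ ^ θ := Real.div_rpow ha hθpos.le θ
    have e2 : (b / (1 - θ)) ^ (1 - θ) = b ^ (1-θ) / (1-θ) ^ (1-θ) :=
      Real.div_rpow hb h1θpos.le _
    have h' : θ * (a / θ) + (1 - θ) * (b / (1 - θ)) = a + b := by
      field_simp
    rw [e1, e2, h', div_mul_div_comm] at h
    have hθθ : (0:ℝ) < θ ^ θ * (1 - θ) ^ (1 - θ) := by positivity
    rw [div_le_iff₀ hθθ] at h
    linarith [h]
  have hmono := Real.rpow_le_rpow (by positivity) hgm (by positivity : (0:ℝ) ≤ 1/p)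
  have hLHS : (a ^ θ * b ^ (1 - θ)) ^ ((1:ℝ)/p)
      = a ^ ((2 - p) / (2 * p)) * b ^ ((1:ℝ)/2) := by
    rw [Real.mul_rpow (by positivity) (by positivity), ← Real.rpow_mul ha,
      ← Real.rpow_mul hb]
    have e3 : θ * (1/p) = (2 - p) / (2 * p) := by rw [hθdef]; field_simp; try ring
    have e4 : (1 - θ) * (1/p) = (1:ℝ)/2 := by rw [h1θ]; field_simp; try ring
    rw [e3, e4]
  have hRHS : (θ ^ θ * (1 - θ) ^ (1 - θ) * (a + b)) ^ ((1:ℝ)/p)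
      = ((2 - p) / 2) ^ ((2 - p) / (2 * p)) * Real.sqrt (p / 2) * (a + b) ^ ((1:ℝ)/p) := by
    rw [Real.mul_rpow (by positivity) (by positivity),
      Real.mul_rpow (by positivity) (by positivity),
      ← Real.rpow_mul hθpos.le, ← Real.rpow_mul h1θpos.le]
    have e3 : θ * (1/p) = (2 - p) / (2 * p) := by rw [hθdef]; field_simp; try ring
    have e4 : (1 - θ) * (1/p) = (1:ℝ)/2 := by rw [h1θ]; field_simp; try ring
    rw [e3, e4, h1θ, Real.sqrt_eq_rpow, hθdef]
  rw [hLHS, hRHS] at hmono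
  have hq1 : (1:ℝ) ≤ 1/p := by rw [le_div_iff₀ hp0]; linarith
  have hsup := rpow_superadd (add_nonneg ha hb) hv hq1
  have hfinal : (a + b) ^ ((1:ℝ)/p) ≤ (a + b + v) ^ ((1:ℝ)/p) - v ^ ((1:ℝ)/p) := by
    linarith [hsup]
  calc a ^ ((2 - p) / (2 * p)) * b ^ ((1:ℝ)/2)
      ≤ ((2 - p) / 2) ^ ((2 - p) / (2 * p)) * Real.sqrt (p / 2) * (a + b) ^ ((1:ℝ)/p) := hmono
    _ ≤ ((2 - p) / 2) ^ ((2 - p) / (2 * p)) * Real.sqrt (p / 2) *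
        ((a + b + v) ^ ((1:ℝ)/p) - v ^ ((1:ℝ)/p)) := by
        apply mul_le_mul_of_nonneg_left hfinal (by positivity)

private lemma tele_sum (f : ℕ → ℝ) (k : ℕ) :
    ∑ j ∈ Finset.Icc 2 (k + 2), (f j - f (j + 1)) = f 2 - f (k + 3) := by
  induction k with
  | zero => simp
  | succ k ih =>
    have h : k + 1 + 2 = (k + 2) + 1 := by omega
    rw [h, Finset.sum_Icc_succ_top (by omega), ih]
    have h2 : k + 1 + 3 = k + 2 + 1 + 1 := by omega
    rw [h2]
    ring

theorem tail_blocks_l2_lp_bound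
    {n : ℕ} (p : ℝ) (hp0 : 0 < p) (hp1 : p ≤ 1)
    (s : ℕ) (hs : 1 ≤ s) (d : Fin n → ℂ)
    (S : Finset (Fin n)) (m : ℕ) (SS : ℕ → Finset (Fin n))
    (hsub : ∀ j : ℕ, 1 ≤ j → j ≤ m → SS j ⊆ Sᶜ)
    (hdisj : ∀ j j' : ℕ, 1 ≤ j → j < j' → j' ≤ m → Disjoint (SS j) (SS j'))
    (hcover : Sᶜ = (Finset.Icc 1 m).biUnion SS)
    (hcard : ∀ j : ℕ, 1 ≤ j → j ≤ m → (SS j).card ≤ s)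
    (hfull : ∀ j : ℕ, 1 ≤ j → j < m → (SS j).card = s)
    (horder : ∀ j : ℕ, 1 ≤ j → j + 1 ≤ m →
      ∀ i ∈ SS j, ∀ i' ∈ SS (j + 1), ‖d i'‖ ≤ ‖d i‖) :
    ∑ j ∈ Finset.Icc 2 m, l2norm (restrict (SS j) d) ≤
      Real.sqrt (2 * p) * (2 * (s : ℝ) / (2 - p)) ^ ((1 : ℝ) / 2 - 1 / p) *
        lpnorm p (restrict Sᶜ d) := by
  classical
  have h2p : (0:ℝ) < 2 - p := by linarith
  have hspos : (0:ℝ) < (s:ℝ) := by exact_mod_cast Nat.lt_of_lt_of_le Nat.zero_lt_one hs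
  set E : ℝ := (2 - p) / (2 * p) with hEdef
  have hEpos : 0 < E := by rw [hEdef]; positivity
  set K : ℝ := ((2 - p) / 2) ^ E * Real.sqrt (p / 2) with hKdef
  have hK0 : 0 ≤ K := by rw [hKdef]; positivity
  set t : ℕ → ℝ := fun j => ∑ i ∈ SS j, ‖d i‖ ^ p with htdef
  have ht0 : ∀ j, 0 ≤ t j := fun j =>
    Finset.sum_nonneg fun i _ => Real.rpow_nonneg (norm_nonneg _) _
  set V : ℕ → ℝ := fun j => ∑ l ∈ Finset.Icc j m, t l with hVdef
  have hV0 : ∀ j, 0 ≤ V j := fun j => Finset.sum_nonneg fun l _ => ht0 l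
  set B : ℕ → ℝ := fun j => V j ^ ((1:ℝ)/p) with hBdef
  have hB0 : ∀ j, 0 ≤ B j := fun j => Real.rpow_nonneg (hV0 j) _
  have hVstep : ∀ j, j ≤ m → V j = t j + V (j+1) := by
    intro j h2
    have hins : Finset.Icc j m = insert j (Finset.Icc (j+1) m) := by
      ext x; simp only [Finset.mem_Icc, Finset.mem_insert]; omega
    show (∑ l ∈ Finset.Icc j m, t l) = t j + ∑ l ∈ Finset.Icc (j+1) m, t l
    rw [hins, Finset.sum_insert (by simp only [Finset.mem_Icc]; omega)]
  have hBmono : ∀ j, B (j+1) ≤ B j := by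
    intro j
    apply Real.rpow_le_rpow (hV0 _) _ (by positivity)
    apply Finset.sum_le_sum_of_subset_of_nonneg
    · exact Finset.Icc_subset_Icc_left (Nat.le_succ j)
    · intro l _ _; exact ht0 l
  -- per-block bound
  have hblock : ∀ j, 2 ≤ j → j ≤ m →
      l2norm (restrict (SS j) d) ≤ (K / (s:ℝ) ^ E) * (B (j-1) - B (j+1)) := by
    intro j hj2 hjm
    have hj11 : 1 ≤ j - 1 := by omega
    have hj1m : j - 1 < m := by omega
    have hcardfull : (SS (j-1)).card = s := hfull _ hj11 hj1m
    have hne : (SS (j-1)).Nonempty := by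
      rw [← Finset.card_pos, hcardfull]; omega
    obtain ⟨i₀, hi₀, hmin⟩ := Finset.exists_min_image (SS (j-1)) (fun i => ‖d i‖) hne
    set μ : ℝ := ‖d i₀‖ with hμdef
    have hμ0 : 0 ≤ μ := norm_nonneg _
    have hord : ∀ i ∈ SS j, ‖d i‖ ≤ μ := by
      intro i hi
      have hstep := horder (j-1) hj11 (by omega)
      have hj' : j - 1 + 1 = j := by omega
      rw [hj'] at hstep
      exact hstep i₀ hi₀ i hi
    -- the squared sum
    have hsum : (∑ i : Fin n, ‖restrict (SS j) d i‖ ^ 2)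
        = ∑ i ∈ SS j, ‖d i‖ ^ 2 := by
      have : ∀ i : Fin n, ‖restrict (SS j) d i‖ ^ 2
          = if i ∈ SS j then ‖d i‖ ^ 2 else 0 := by
        intro i
        by_cases h : i ∈ SS j <;> simp [restrict, h]
      rw [Finset.sum_congr rfl (fun i _ => this i), Finset.sum_ite_mem, Finset.univ_inter]
    have hsq : ∑ i ∈ SS j, ‖d i‖ ^ 2 ≤ μ ^ ((2:ℝ) - p) * t j := by
      have htj : μ ^ ((2:ℝ) - p) * t j = ∑ i ∈ SS j, μ ^ ((2:ℝ)-p) * ‖d i‖ ^ p := by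
        rw [htdef]; exact Finset.mul_sum _ _ _
      rw [htj]
      apply Finset.sum_le_sum
      intro i hi
      rcases eq_or_lt_of_le (norm_nonneg (d i)) with h0 | h0
      · rw [← h0]
        simp [Real.zero_rpow (ne_of_gt hp0)]
      · have hdec : ‖d i‖ ^ 2 = ‖d i‖ ^ ((2:ℝ) - p) * ‖d i‖ ^ p := by
          rw [← Real.rpow_add h0]
          norm_num
        rw [hdec]
        apply mul_le_mul_of_nonneg_right _ (Real.rpow_nonneg h0.le _)
        exact Real.rpow_le_rpow h0.le (hord i hi) (by linarith)
    have hμp : μ ^ p ≤ t (j-1) / (s:ℝ) := by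
      rw [le_div_iff₀ hspos]
      have h1 : ∑ _i ∈ SS (j-1), μ ^ p ≤ t (j-1) := by
        apply Finset.sum_le_sum
        intro i hi
        exact Real.rpow_le_rpow hμ0 (hmin i hi) hp0.le
      calc μ ^ p * (s:ℝ) = ∑ _i ∈ SS (j-1), μ ^ p := by
            rw [Finset.sum_const, hcardfull, nsmul_eq_mul]; ring
        _ ≤ t (j-1) := h1
    -- l2norm bound in rpow form
    have hl2 : l2norm (restrict (SS j) d) ≤ (t (j-1) / (s:ℝ)) ^ E * t j ^ ((1:ℝ)/2) := by
      rw [l2norm, hsum]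
      have h1 : Real.sqrt (∑ i ∈ SS j, ‖d i‖ ^ 2)
          ≤ Real.sqrt (μ ^ ((2:ℝ) - p) * t j) := Real.sqrt_le_sqrt hsq
      apply le_trans h1
      rw [Real.sqrt_eq_rpow, Real.mul_rpow (Real.rpow_nonneg hμ0 _) (ht0 j),
        ← Real.rpow_mul hμ0]
      apply mul_le_mul_of_nonneg_right _ (Real.rpow_nonneg (ht0 j) _)
      have hμE : μ ^ (((2:ℝ) - p) * (1/2)) = (μ ^ p) ^ E := by
        rw [← Real.rpow_mul hμ0]
        congr 1
        rw [hEdef]; field_simp; try ring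
      rw [hμE]
      exact Real.rpow_le_rpow (Real.rpow_nonneg hμ0 _) hμp hEpos.le
    -- combine with scalar_key
    have hVj1 : t (j-1) + t j + V (j+1) = V (j-1) := by
      have e1 : V (j-1) = t (j-1) + V ((j-1)+1) := hVstep (j-1) (by omega)
      have e2 : (j-1)+1 = j := by omega
      rw [e2] at e1
      rw [e1, hVstep j hjm]
      ring
    have hkey : t (j-1) ^ E * t j ^ ((1:ℝ)/2) ≤ K * (B (j-1) - B (j+1)) := by
      have h := scalar_key hp0 hp1 (ht0 (j-1)) (ht0 j) (hV0 (j+1))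
      rw [hVj1] at h
      rw [hKdef, hEdef]
      exact h
    calc l2norm (restrict (SS j) d) ≤ (t (j-1) / (s:ℝ)) ^ E * t j ^ ((1:ℝ)/2) := hl2
      _ = (t (j-1) ^ E * t j ^ ((1:ℝ)/2)) / (s:ℝ) ^ E := by
          rw [Real.div_rpow (ht0 _) hspos.le]; ring
      _ ≤ (K * (B (j-1) - B (j+1))) / (s:ℝ) ^ E := by
          exact (div_le_div_iff_of_pos_right (by positivity)).2 hkey
      _ = (K / (s:ℝ) ^ E) * (B (j-1) - B (j+1)) := by ring
  -- telescoping bound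
  have htel : ∑ j ∈ Finset.Icc 2 m, (B (j-1) - B (j+1)) ≤ 2 * B 1 := by
    rcases lt_or_ge m 2 with hm | hm
    · rw [Finset.Icc_eq_empty (by omega)]
      simp only [Finset.sum_empty]
      positivity
    · obtain ⟨k, rfl⟩ : ∃ k, m = k + 2 := ⟨m - 2, by omega⟩
      have hsplit : ∀ j ∈ Finset.Icc 2 (k+2), B (j-1) - B (j+1)
          = ((fun j => B (j-1)) j - (fun j => B (j-1)) (j+1)) + (B j - B (j+1)) := by
        intro j hj
        simp only [Finset.mem_Icc] at hj
        have hj1 : j + 1 - 1 = j := by omega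
        simp only [hj1]
        ring
      rw [Finset.sum_congr rfl hsplit, Finset.sum_add_distrib,
        tele_sum (fun j => B (j-1)) k, tele_sum B k]
      have e2 : (2:ℕ) - 1 = 1 := rfl
      have e3 : k + 3 - 1 = k + 2 := rfl
      rw [e2, e3]
      have h1 := hB0 (k+2)
      have h2 := hB0 (k+3)
      have h3 := hBmono 1
      linarith
  -- identify lpnorm with B 1
  have hlp : lpnorm p (restrict Sᶜ d) = B 1 := by
    show _ = V 1 ^ ((1:ℝ)/p)
    rw [lpnorm]
    congr 1
    have h1 : ∀ i : Fin n, ‖restrict Sᶜ d i‖ ^ p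
        = if i ∈ Sᶜ then ‖d i‖ ^ p else 0 := by
      intro i; by_cases h : i ∈ Sᶜ <;> simp [restrict, h, Real.zero_rpow (ne_of_gt hp0)]
    rw [Finset.sum_congr rfl (fun i _ => h1 i), Finset.sum_ite_mem, Finset.univ_inter,
      hcover, Finset.sum_biUnion]
    intro x hx y hy hxy
    simp only [Finset.coe_Icc, Set.mem_Icc] at hx hy
    rcases lt_or_gt_of_ne hxy with h | h
    · exact hdisj x y hx.1 h hy.2
    · exact (hdisj y x hy.1 h hx.2).symm
  -- main estimate
  have hmain : ∑ j ∈ Finset.Icc 2 m, l2norm (restrict (SS j) d)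
      ≤ (K / (s:ℝ)^E) * (2 * B 1) := by
    calc ∑ j ∈ Finset.Icc 2 m, l2norm (restrict (SS j) d)
        ≤ ∑ j ∈ Finset.Icc 2 m, (K / (s:ℝ)^E) * (B (j-1) - B (j+1)) := by
          apply Finset.sum_le_sum
          intro j hj
          simp only [Finset.mem_Icc] at hj
          exact hblock j hj.1 hj.2
      _ = (K / (s:ℝ)^E) * ∑ j ∈ Finset.Icc 2 m, (B (j-1) - B (j+1)) :=
          (Finset.mul_sum _ _ _).symm
      _ ≤ (K / (s:ℝ)^E) * (2 * B 1) :=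
          mul_le_mul_of_nonneg_left htel (by positivity)
  -- constant identity
  have hpne : p ≠ 0 := ne_of_gt hp0
  have hconst : Real.sqrt (2*p) * (2*(s:ℝ)/(2-p)) ^ ((1:ℝ)/2 - 1/p) = 2 * K / (s:ℝ)^E := by
    have hexp : (1:ℝ)/2 - 1/p = -E := by rw [hEdef]; field_simp; try ring
    have hbase : (0:ℝ) < 2*(s:ℝ)/(2-p) := by positivity
    rw [hexp, Real.rpow_neg hbase.le, ← Real.inv_rpow hbase.le, inv_div]
    have e1 : (2 - p) / (2*(s:ℝ)) = ((2-p)/2) / (s:ℝ) := by ring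
    rw [e1, Real.div_rpow (by positivity) hspos.le]
    have e2 : Real.sqrt (2*p) = 2 * Real.sqrt (p/2) := by
      rw [show (2*p) = (2:ℝ)^2 * (p/2) by ring, Real.sqrt_mul (by positivity),
        Real.sqrt_sq (by norm_num)]
    rw [e2, hKdef]
    ring
  rw [hlp, hconst]
  apply le_trans hmain
  apply le_of_eq
  ring
end

section
/- Let p ∈ (0,1], let x⊥ ∈ ℂⁿ with supp(x⊥) ⊆ S where S ⊆ {1,…,n} has |S| = s ≥ 1, and let x ∈ ℂⁿ satisfy ‖x‖_p^p ≤ ‖x⊥‖_p^p. Then the vector d = x − x⊥ satisfies ‖d|_{S^c}‖_p ≤ s^{1/p − 1/2}·‖d|_S‖₂. -/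
open scoped Classical

lemma real_rpow_add_le_add_rpow {p a b : ℝ} (ha : 0 ≤ a) (hb : 0 ≤ b)
    (hp : 0 ≤ p) (hp1 : p ≤ 1) : (a + b) ^ p ≤ a ^ p + b ^ p := by
  lift a to NNReal using ha
  lift b to NNReal using hb
  have := NNReal.rpow_add_le_add_rpow a b hp hp1
  exact_mod_cast this

theorem lp_l2_feasible_bound
    {n : ℕ} (p : ℝ) (hp0 : 0 < p) (hp1 : p ≤ 1)
    (s : ℕ) (hs : 1 ≤ s) (S : Finset (Fin n)) (hScard : S.card = s)
    (xperp x : Fin n → ℂ)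
    (hsupp : ∀ i : Fin n, xperp i ≠ 0 → i ∈ S)
    (hfeas : lpPow p x ≤ lpPow p xperp) :
    lpnorm p (restrict Sᶜ (x - xperp)) ≤
      (s : ℝ) ^ ((1 : ℝ) / p - 1 / 2) * l2norm (restrict S (x - xperp)) := by
  set d : Fin n → ℂ := x - xperp with hd
  set a : Fin n → ℝ := fun i => ‖d i‖ with haf
  have ha : ∀ i, 0 ≤ a i := fun i => norm_nonneg _
  -- restrict sums
  have hres : ∀ I : Finset (Fin n),
      ∑ i, ‖restrict I d i‖ ^ p = ∑ i ∈ I, a i ^ p := by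
    intro I
    rw [← Finset.sum_subset (Finset.subset_univ I)]
    · exact Finset.sum_congr rfl fun i hi => by simp [restrict, hi]; rfl
    · intro i _ hi
      simp [restrict, hi, Real.zero_rpow hp0.ne']
  have hres2 : ∑ i, ‖restrict S d i‖ ^ 2 = ∑ i ∈ S, a i ^ 2 := by
    rw [← Finset.sum_subset (Finset.subset_univ S)]
    · exact Finset.sum_congr rfl fun i hi => by simp [restrict, hi]; rfl
    · intro i _ hi; simp [restrict, hi]
  -- key 1 : sum over Sᶜ ≤ sum over S
  have key1 : ∑ i ∈ Sᶜ, a i ^ p ≤ ∑ i ∈ S, a i ^ p := by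
    have hxc : ∀ i ∈ Sᶜ, a i ^ p = ‖x i‖ ^ p := by
      intro i hi
      have hxi : xperp i = 0 := by
        by_contra h
        exact (Finset.mem_compl.mp hi) (hsupp i h)
      simp [haf, hd, hxi]
    have hsplit : (∑ i ∈ S, ‖x i‖ ^ p) + ∑ i ∈ Sᶜ, ‖x i‖ ^ p
        = lpPow p x := Finset.sum_add_sum_compl S _
    have hsplit' : (∑ i ∈ S, ‖xperp i‖ ^ p)
        + ∑ i ∈ Sᶜ, ‖xperp i‖ ^ p = lpPow p xperp :=
      Finset.sum_add_sum_compl S _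
    have hzero : ∑ i ∈ Sᶜ, ‖xperp i‖ ^ p = 0 := by
      refine Finset.sum_eq_zero fun i hi => ?_
      have hxi : xperp i = 0 := by
        by_contra h
        exact (Finset.mem_compl.mp hi) (hsupp i h)
      simp [hxi, Real.zero_rpow hp0.ne']
    have hterm : ∀ i ∈ S, ‖xperp i‖ ^ p ≤ a i ^ p + ‖x i‖ ^ p := by
      intro i _
      have h1 : ‖xperp i‖ ≤ a i + ‖x i‖ := by
        have hx : xperp i = x i - d i := by simp [hd]
        calc ‖xperp i‖ = ‖x i - d i‖ := by rw [hx]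
          _ ≤ ‖x i‖ + ‖d i‖ := norm_sub_le _ _
          _ = a i + ‖x i‖ := add_comm _ _
      calc ‖xperp i‖ ^ p ≤ (a i + ‖x i‖) ^ p :=
            Real.rpow_le_rpow (norm_nonneg _) h1 hp0.le
        _ ≤ a i ^ p + ‖x i‖ ^ p :=
            real_rpow_add_le_add_rpow (ha i) (norm_nonneg _) hp0.le hp1
    have h2 : ∑ i ∈ Sᶜ, ‖x i‖ ^ p
        ≤ ∑ i ∈ S, (‖xperp i‖ ^ p - ‖x i‖ ^ p) := by
      rw [Finset.sum_sub_distrib]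
      linarith [hfeas, hsplit, hsplit', hzero]
    calc ∑ i ∈ Sᶜ, a i ^ p = ∑ i ∈ Sᶜ, ‖x i‖ ^ p :=
          Finset.sum_congr rfl hxc
      _ ≤ ∑ i ∈ S, (‖xperp i‖ ^ p - ‖x i‖ ^ p) := h2
      _ ≤ ∑ i ∈ S, a i ^ p := by
          refine Finset.sum_le_sum fun i hi => ?_
          linarith [hterm i hi]
  -- key 2 : Hölder
  have h2p : (1 : ℝ) ≤ 2 / p := by
    rw [le_div_iff₀ hp0]; linarith
  have key2 : ∑ i ∈ S, a i ^ p ≤ (s : ℝ) ^ (1 - p / 2) * (∑ i ∈ S, a i ^ 2) ^ (p / 2) := by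
    have := Real.inner_le_weight_mul_Lp_of_nonneg S h2p (fun _ => (1 : ℝ)) (fun i => a i ^ p)
      (fun _ => zero_le_one) (fun i => Real.rpow_nonneg (ha i) p)
    simp only [one_mul] at this
    have hinv : (2 / p : ℝ)⁻¹ = p / 2 := by
      field_simp
    have hexp : ∀ i, (a i ^ p) ^ (2 / p : ℝ) = a i ^ 2 := by
      intro i
      rw [← Real.rpow_natCast (a i) 2, ← Real.rpow_mul (ha i)]
      congr 1
      field_simp
      norm_num
    rw [hinv] at this
    simp only [hexp] at this
    calc ∑ i ∈ S, a i ^ p ≤ (∑ _i ∈ S, (1:ℝ)) ^ (1 - p / 2) * (∑ i ∈ S, a i ^ 2) ^ (p / 2) :=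
          this
      _ = (s : ℝ) ^ (1 - p / 2) * (∑ i ∈ S, a i ^ 2) ^ (p / 2) := by
          rw [Finset.sum_const, nsmul_eq_mul, mul_one, hScard]
  -- combine
  have hT : (0 : ℝ) ≤ ∑ i ∈ S, a i ^ 2 :=
    Finset.sum_nonneg fun i _ => sq_nonneg _
  have hA : (0 : ℝ) ≤ ∑ i ∈ Sᶜ, a i ^ p :=
    Finset.sum_nonneg fun i _ => Real.rpow_nonneg (ha i) p
  have hs0 : (0 : ℝ) ≤ (s : ℝ) := Nat.cast_nonneg s
  have hfin : (∑ i ∈ Sᶜ, a i ^ p) ^ (1/p)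
      ≤ (s : ℝ) ^ ((1 : ℝ) / p - 1 / 2) * Real.sqrt (∑ i ∈ S, a i ^ 2) := by
    have step : (∑ i ∈ Sᶜ, a i ^ p) ^ (1/p)
        ≤ ((s : ℝ) ^ (1 - p / 2) * (∑ i ∈ S, a i ^ 2) ^ (p / 2)) ^ (1/p) :=
      Real.rpow_le_rpow hA (key1.trans key2) (by positivity)
    refine step.trans_eq ?_
    rw [Real.mul_rpow (Real.rpow_nonneg hs0 _) (Real.rpow_nonneg hT _),
      ← Real.rpow_mul hs0, ← Real.rpow_mul hT, Real.sqrt_eq_rpow]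
    have e2 : (p / 2) * (1 / p) = 1 / 2 := by
      field_simp
    have e1 : (1 - p / 2) * (1 / p) = 1 / p - 1 / 2 := by
      rw [sub_mul, one_mul, e2]
    rw [e1, e2]
  calc lpnorm p (restrict Sᶜ d) = (∑ i ∈ Sᶜ, a i ^ p) ^ (1/p) := by
        rw [lpnorm, hres Sᶜ]
    _ ≤ (s : ℝ) ^ ((1 : ℝ) / p - 1 / 2) * Real.sqrt (∑ i ∈ S, a i ^ 2) := hfin
    _ = (s : ℝ) ^ ((1 : ℝ) / p - 1 / 2) * l2norm (restrict S d) := by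
        rw [l2norm, hres2]
end

section
/- Let p ∈ (0,1], s ≥ 1, and S ⊆ {1,…,n} with |S| = s. Let x⊥ ∈ ℂⁿ with supp(x⊥) ⊆ S, and let x, x' ∈ ℂⁿ satisfy ‖x‖_p^p ≤ ‖x⊥‖_p^p and ‖x'‖_p^p ≤ ‖x⊥‖_p^p. Set d = x − x⊥ and d' = x' − x⊥. Let A ∈ ℂ^{m×n} satisfy β‖v‖₂² ≤ ‖Av‖₂² ≤ α‖v‖₂² for every 3s-sparse v, with 0 < β ≤ α, and suppose η > 0 satisfies |η(α+β)/2 − 1| ≤ τ for some τ ≥ 0. Then, with ρ = (α−β)/(α+β), Re[⟨d, d'⟩ − η⟨Ad, Ad'⟩] ≤ ((1+τ)ρ + τ)·(1 + √(2p)·(2/(2−p))^{1/2−1/p})²·‖d‖₂·‖d'‖₂. -/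
open scoped Classical

namespace BRaux

lemma l2norm_nonneg {n : ℕ} (v : Fin n → ℂ) : 0 ≤ l2norm v := Real.sqrt_nonneg _

lemma l2norm_sq {n : ℕ} (v : Fin n → ℂ) :
    l2norm v ^ 2 = ∑ i, ‖v i‖ ^ 2 := by
  rw [l2norm, Real.sq_sqrt]
  exact Finset.sum_nonneg fun i _ => sq_nonneg _

lemma l2norm_eq_zero {n : ℕ} {v : Fin n → ℂ} (h : l2norm v = 0) : v = 0 := by
  have h2 : ∑ i, ‖v i‖ ^ 2 = 0 := by
    rw [← l2norm_sq, h]; ring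
  funext i
  have h3 := (Finset.sum_eq_zero_iff_of_nonneg
    (fun i _ => sq_nonneg (‖v i‖))).1 h2 i (Finset.mem_univ i)
  have h4 : ‖v i‖ = 0 := pow_eq_zero_iff (two_ne_zero) |>.1 h3
  simpa using h4

lemma l2norm_smul {n : ℕ} (c : ℝ) (hc : 0 ≤ c) (v : Fin n → ℂ) :
    l2norm ((c : ℂ) • v) = c * l2norm v := by
  rw [l2norm, l2norm]
  have h : ∀ i, ‖((c:ℂ) • v) i‖ ^ 2 = c ^ 2 * ‖v i‖ ^ 2 := by
    intro i
    simp [Pi.smul_apply, map_mul, Complex.norm_real, abs_of_nonneg hc, mul_pow]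
  rw [Finset.sum_congr rfl fun i _ => h i, ← Finset.mul_sum,
    Real.sqrt_mul (sq_nonneg c), Real.sqrt_sq hc]

lemma herm_sum_left {n : ℕ} (F : Finset ℕ) (u : ℕ → (Fin n → ℂ)) (v : Fin n → ℂ) :
    herm (∑ j ∈ F, u j) v = ∑ j ∈ F, herm (u j) v := by
  simp only [herm]
  have h : ∀ i, (starRingEnd ℂ) ((∑ j ∈ F, u j) i) * v i
      = ∑ j ∈ F, (starRingEnd ℂ) (u j i) * v i := by
    intro i
    simp [Finset.sum_apply, map_sum, Finset.sum_mul]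
  rw [Finset.sum_congr rfl fun i _ => h i, Finset.sum_comm]

lemma herm_sum_right {n : ℕ} (F : Finset ℕ) (u : Fin n → ℂ) (v : ℕ → (Fin n → ℂ)) :
    herm u (∑ j ∈ F, v j) = ∑ j ∈ F, herm u (v j) := by
  simp only [herm]
  have h : ∀ i, (starRingEnd ℂ) (u i) * (∑ j ∈ F, v j) i
      = ∑ j ∈ F, (starRingEnd ℂ) (u i) * v j i := by
    intro i
    simp [Finset.sum_apply, Finset.mul_sum]
  rw [Finset.sum_congr rfl fun i _ => h i, Finset.sum_comm]

lemma herm_smul_real {n : ℕ} (a b : ℝ) (u v : Fin n → ℂ) :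
    herm ((a : ℂ) • u) ((b : ℂ) • v) = (a * b : ℂ) * herm u v := by
  simp only [herm, Pi.smul_apply, smul_eq_mul, map_mul, Complex.conj_ofReal, Finset.mul_sum]
  congr 1; funext i; ring

-- polarization : re of herm via squared norms
lemma polar {n : ℕ} (u v : Fin n → ℂ) :
    (herm u v).re = (l2norm (u + v) ^ 2 - l2norm (u - v) ^ 2) / 4 := by
  rw [l2norm_sq, l2norm_sq, herm]
  rw [Complex.re_sum]
  have h : ∀ i : Fin n,
      ‖(u + v) i‖ ^ 2 - ‖(u - v) i‖ ^ 2
        = 4 * ((starRingEnd ℂ) (u i) * v i).re := by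
    intro i
    simp only [Pi.add_apply, Pi.sub_apply, Complex.sq_norm, Complex.normSq_apply,
      Complex.mul_re, Complex.add_re, Complex.add_im, Complex.sub_re, Complex.sub_im,
      Complex.conj_re, Complex.conj_im]
    ring
  have h2 : (∑ i, ‖(u + v) i‖ ^ 2) - (∑ i, ‖(u - v) i‖ ^ 2)
      = ∑ i, (‖(u + v) i‖ ^ 2 - ‖(u - v) i‖ ^ 2) := by
    rw [Finset.sum_sub_distrib]
  rw [h2, Finset.sum_congr rfl fun i _ => h i, ← Finset.mul_sum]
  ring


lemma parallelogram {n : ℕ} (u v : Fin n → ℂ) :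
    l2norm (u + v) ^ 2 + l2norm (u - v) ^ 2 = 2 * l2norm u ^ 2 + 2 * l2norm v ^ 2 := by
  simp only [l2norm_sq]
  have h : ∀ i : Fin n, ‖(u + v) i‖ ^ 2 + ‖(u - v) i‖ ^ 2
      = 2 * ‖u i‖ ^ 2 + 2 * ‖v i‖ ^ 2 := by
    intro i
    simp only [Pi.add_apply, Pi.sub_apply, Complex.sq_norm, Complex.normSq_apply,
      Complex.add_re, Complex.add_im, Complex.sub_re, Complex.sub_im]
    ring
  rw [← Finset.sum_add_distrib, Finset.sum_congr rfl fun i _ => h i]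
  rw [Finset.sum_add_distrib, ← Finset.mul_sum, ← Finset.mul_sum]

lemma bilin_bound {m n : ℕ} (A : Matrix (Fin m) (Fin n) ℂ) (η δ : ℝ) (t : ℕ)
    (hQ : ∀ w : Fin n → ℂ, Sparse t w →
      |l2norm w ^ 2 - η * l2norm (A.mulVec w) ^ 2| ≤ δ * l2norm w ^ 2)
    (u v : Fin n → ℂ) (U : Finset (Fin n)) (hU : U.card ≤ t)
    (hu : ∀ i, u i ≠ 0 → i ∈ U) (hv : ∀ i, v i ≠ 0 → i ∈ U) :
    (herm u v - (η : ℂ) * herm (A.mulVec u) (A.mulVec v)).re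
      ≤ δ * l2norm u * l2norm v := by
  -- general half bound
  have key : ∀ u' v' : Fin n → ℂ, (∀ i, u' i ≠ 0 → i ∈ U) → (∀ i, v' i ≠ 0 → i ∈ U) →
      (herm u' v' - (η : ℂ) * herm (A.mulVec u') (A.mulVec v')).re
        ≤ δ / 2 * (l2norm u' ^ 2 + l2norm v' ^ 2) := by
    intro u' v' hu' hv'
    have hsp : ∀ w : Fin n → ℂ, (∀ i, w i ≠ 0 → i ∈ U) → Sparse t w := by
      intro w hw
      refine le_trans (Finset.card_le_card ?_) hU
      intro i hi
      exact hw i (by simpa using hi)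
    have hsum : Sparse t (u' + v') := by
      refine hsp _ fun i hi => ?_
      by_cases h1 : u' i = 0
      · exact hv' i (by simpa [h1] using hi)
      · exact hu' i h1
    have hdiff : Sparse t (u' - v') := by
      refine hsp _ fun i hi => ?_
      by_cases h1 : u' i = 0
      · refine hv' i fun h2 => ?_
        simp [h1, h2] at hi
      · exact hu' i h1
    have e1 : (herm u' v' - (η : ℂ) * herm (A.mulVec u') (A.mulVec v')).re
        = ((l2norm (u' + v') ^ 2 - η * l2norm (A.mulVec (u' + v')) ^ 2)
          - (l2norm (u' - v') ^ 2 - η * l2norm (A.mulVec (u' - v')) ^ 2)) / 4 := by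
      rw [Complex.sub_re, polar]
      have : ((η : ℂ) * herm (A.mulVec u') (A.mulVec v')).re
          = η * (herm (A.mulVec u') (A.mulVec v')).re := by
        simp [Complex.mul_re, Complex.ofReal_re, Complex.ofReal_im]
      rw [this, polar, Matrix.mulVec_add, Matrix.mulVec_sub]
      ring
    rw [e1]
    have q1 := hQ _ hsum
    have q2 := hQ _ hdiff
    have par := parallelogram u' v'
    have b1 : l2norm (u' + v') ^ 2 - η * l2norm (A.mulVec (u' + v')) ^ 2
        ≤ δ * l2norm (u' + v') ^ 2 := le_trans (le_abs_self _) q1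
    have b2 : -(l2norm (u' - v') ^ 2 - η * l2norm (A.mulVec (u' - v')) ^ 2)
        ≤ δ * l2norm (u' - v') ^ 2 := le_trans (neg_le_abs _) q2
    have b3 : δ * l2norm (u' + v') ^ 2 + δ * l2norm (u' - v') ^ 2
        = δ * (2 * l2norm u' ^ 2 + 2 * l2norm v' ^ 2) := by rw [← mul_add, par]
    linarith
  by_cases hu0 : l2norm u = 0
  · have : u = 0 := l2norm_eq_zero hu0
    subst this
    simp [herm, Matrix.mulVec_zero, hu0]
  by_cases hv0 : l2norm v = 0
  · have : v = 0 := l2norm_eq_zero hv0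
    subst this
    simp [herm, Matrix.mulVec_zero, hv0]
  have hupos : 0 < l2norm u := lt_of_le_of_ne (l2norm_nonneg u) (Ne.symm hu0)
  have hvpos : 0 < l2norm v := lt_of_le_of_ne (l2norm_nonneg v) (Ne.symm hv0)
  set c : ℝ := Real.sqrt (l2norm v / l2norm u) with hc
  have hcpos : 0 < c := Real.sqrt_pos.2 (div_pos hvpos hupos)
  have hc2 : c ^ 2 = l2norm v / l2norm u := Real.sq_sqrt (le_of_lt (div_pos hvpos hupos))
  have happ := key ((c : ℂ) • u) (((c⁻¹ : ℝ) : ℂ) • v)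
    (fun i hi => hu i (by intro h; apply hi; simp [h]))
    (fun i hi => hv i (by intro h; apply hi; simp [h]))
  have e2 : herm ((c : ℂ) • u) (((c⁻¹ : ℝ) : ℂ) • v) = herm u v := by
    rw [herm_smul_real, ← Complex.ofReal_mul, mul_inv_cancel₀ (ne_of_gt hcpos)]
    simp
  have e3 : herm (A.mulVec ((c : ℂ) • u)) (A.mulVec (((c⁻¹ : ℝ) : ℂ) • v))
      = herm (A.mulVec u) (A.mulVec v) := by
    rw [Matrix.mulVec_smul, Matrix.mulVec_smul, herm_smul_real, ← Complex.ofReal_mul,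
      mul_inv_cancel₀ (ne_of_gt hcpos)]
    simp
  rw [e2, e3, l2norm_smul c (le_of_lt hcpos), l2norm_smul _ (by positivity)] at happ
  refine le_trans happ (le_of_eq ?_)
  have hinv2 : (c⁻¹) ^ 2 = l2norm u / l2norm v := by
    rw [inv_pow, hc2, inv_div]
  rw [mul_pow, mul_pow, hc2, hinv2]
  field_simp
  ring

variable {ι : Type*} [DecidableEq ι]

lemma exists_topk (g : ι → ℝ) (C : Finset ι) (k : ℕ) (hk : k ≤ C.card) :
    ∃ U : Finset ι, U ⊆ C ∧ U.card = k ∧ ∀ i ∈ C \ U, ∀ j ∈ U, g i ≤ g j := by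
  induction k with
  | zero => exact ⟨∅, Finset.empty_subset _, rfl, fun i _ j hj => absurd hj (by simp)⟩
  | succ k ih =>
    obtain ⟨U, hUC, hUcard, hUtop⟩ := ih (le_trans (Nat.le_succ k) hk)
    have hne : (C \ U).Nonempty := by
      rw [← Finset.card_pos, Finset.card_sdiff_of_subset hUC, hUcard]
      omega
    obtain ⟨m, hm, hmax⟩ := Finset.exists_max_image (C \ U) g hne
    refine ⟨insert m U, ?_, ?_, ?_⟩
    · intro i hi
      rcases Finset.mem_insert.1 hi with h | h
      · subst h; exact (Finset.mem_sdiff.1 hm).1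
      · exact hUC h
    · rw [Finset.card_insert_of_notMem (Finset.mem_sdiff.1 hm).2, hUcard]
    · intro i hi j hj
      have hiCU : i ∈ C \ U := by
        rcases Finset.mem_sdiff.1 hi with ⟨hiC, hiU⟩
        exact Finset.mem_sdiff.2 ⟨hiC, fun h => hiU (Finset.mem_insert_of_mem h)⟩
      rcases Finset.mem_insert.1 hj with h | h
      · subst h; exact hmax i hiCU
      · exact hUtop i hiCU j h

lemma exists_blocks (g : ι → ℝ) (s : ℕ) (hs : 1 ≤ s) (C : Finset ι) :
    ∃ T : ℕ → Finset ι,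
      (∀ j, T j ⊆ C) ∧
      (∀ j, (T j).card ≤ s) ∧
      (∀ j k, j < k → Disjoint (T j) (T k)) ∧
      (∀ j, (T (j + 1)).Nonempty → (T j).card = s) ∧
      (∀ j, ∀ i ∈ T (j + 1), ∀ i' ∈ T j, g i ≤ g i') ∧
      (∀ k, C.card ≤ k → (Finset.range k).biUnion T = C) := by
  -- topk choice function
  have topspec : ∀ R : Finset ι, ∃ U : Finset ι, U ⊆ R ∧ U.card = min s R.card ∧
      ∀ i ∈ R \ U, ∀ j ∈ U, g i ≤ g j :=
    fun R => exists_topk g R _ (min_le_right _ _)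
  set top : Finset ι → Finset ι := fun R => (topspec R).choose with htop
  have topsub : ∀ R, top R ⊆ R := fun R => (topspec R).choose_spec.1
  have topcard : ∀ R, (top R).card = min s R.card := fun R => (topspec R).choose_spec.2.1
  have toporder : ∀ R, ∀ i ∈ R \ top R, ∀ j ∈ top R, g i ≤ g j :=
    fun R => (topspec R).choose_spec.2.2
  -- remaining sets
  set rem : ℕ → Finset ι := fun j => Nat.rec C (fun _ R => R \ top R) j with hrem
  have hrem0 : rem 0 = C := rfl
  have hremsucc : ∀ j, rem (j + 1) = rem j \ top (rem j) := fun j => rfl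
  set T : ℕ → Finset ι := fun j => top (rem j) with hT
  have hTsub : ∀ j, T j ⊆ rem j := fun j => topsub _
  have hremmono : ∀ j k, j ≤ k → rem k ⊆ rem j := by
    intro j k hjk
    induction k with
    | zero => cases Nat.le_zero.1 hjk; exact Finset.Subset.refl _
    | succ k ih =>
      rcases Nat.lt_or_ge j (k+1) with h | h
      · exact Finset.Subset.trans (by rw [hremsucc]; exact Finset.sdiff_subset)
          (ih (Nat.lt_succ_iff.1 h))
      · have : j = k + 1 := le_antisymm hjk h
        subst this; exact Finset.Subset.refl _
  have hsubC : ∀ j, T j ⊆ C := fun j =>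
    Finset.Subset.trans (hTsub j) (by rw [← hrem0]; exact hremmono 0 j (Nat.zero_le _))
  have hcard : ∀ j, (T j).card ≤ s := fun j => le_trans (le_of_eq (topcard _)) (min_le_left _ _)
  have hdisj : ∀ j k, j < k → Disjoint (T j) (T k) := by
    intro j k hjk
    have h1 : T k ⊆ rem (j + 1) := Finset.Subset.trans (hTsub k) (hremmono (j+1) k hjk)
    refine Finset.disjoint_left.2 fun i hi hik => ?_
    have h2 : i ∈ rem (j + 1) := h1 hik
    rw [hremsucc j] at h2
    exact (Finset.mem_sdiff.1 h2).2 hi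
  have hfull : ∀ j, (T (j + 1)).Nonempty → (T j).card = s := by
    intro j hne
    have h1 : (rem (j+1)).Nonempty := ⟨hne.choose, hTsub (j+1) hne.choose_spec⟩
    rw [hremsucc] at h1
    obtain ⟨i, hi⟩ := h1
    rcases Nat.le_total s (rem j).card with h | h
    · rw [topcard, min_eq_left h]
    · -- then top (rem j) = rem j, so rem (j+1) empty, contradiction
      have hc : (T j).card = (rem j).card := by rw [topcard, min_eq_right h]
      have : T j = rem j := Finset.eq_of_subset_of_card_le (hTsub j) (le_of_eq hc.symm)
      rcases Finset.mem_sdiff.1 hi with ⟨ha, hb⟩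
      exact absurd (show i ∈ top (rem j) by show i ∈ T j; rw [this]; exact ha) hb
  have horder : ∀ j, ∀ i ∈ T (j + 1), ∀ i' ∈ T j, g i ≤ g i' := by
    intro j i hi i' hi'
    have h1 : i ∈ rem j \ top (rem j) := by
      rw [← hremsucc]; exact hTsub (j+1) hi
    exact toporder (rem j) i h1 i' hi'
  -- coverage
  have hdec : ∀ k, rem k = ∅ ∨ (rem k).card + k ≤ C.card := by
    intro k
    induction k with
    | zero => right; simp [hrem0]
    | succ k ih =>
      rcases ih with h | h
      · left; rw [hremsucc, h]; simp
      · rcases Finset.eq_empty_or_nonempty (rem k) with he | hne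
        · left; rw [hremsucc, he]; simp
        · right
          have hcardT : 1 ≤ (T k).card := by
            rw [topcard]
            have : 1 ≤ (rem k).card := Finset.card_pos.2 hne
            omega
          have : (rem (k+1)).card = (rem k).card - (T k).card := by
            rw [hremsucc, Finset.card_sdiff_of_subset (hTsub k)]
          have hle : (T k).card ≤ (rem k).card := Finset.card_le_card (hTsub k)
          omega
  refine ⟨T, hsubC, hcard, hdisj, hfull, horder, ?_⟩
  intro k hk
  have hremk : rem k = ∅ := by
    rcases hdec k with h | h
    · exact h
    · have : (rem k).card = 0 := by omega
      exact Finset.card_eq_zero.1 this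
  apply Finset.Subset.antisymm
  · intro i hi
    rcases Finset.mem_biUnion.1 hi with ⟨j, _, hij⟩
    exact hsubC j hij
  · intro i hiC
    have hnotk : i ∉ rem k := by rw [hremk]; exact Finset.notMem_empty i
    have : ∀ l, i ∉ rem l → ∃ j < l, i ∈ T j := by
      intro l
      induction l with
      | zero => intro h; exact absurd (hrem0 ▸ hiC) h
      | succ l ih =>
        intro h
        by_cases hl : i ∈ rem l
        · refine ⟨l, Nat.lt_succ_self l, ?_⟩
          rw [hremsucc] at h
          by_contra hT'
          exact h (Finset.mem_sdiff.2 ⟨hl, hT'⟩)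
        · obtain ⟨j, hj, hij⟩ := ih hl
          exact ⟨j, Nat.lt_succ_of_lt hj, hij⟩
    obtain ⟨j, hj, hij⟩ := this k hnotk
    exact Finset.mem_biUnion.2 ⟨j, Finset.mem_range.2 hj, hij⟩

lemma rpow_subadd {a b p : ℝ} (ha : 0 ≤ a) (hb : 0 ≤ b) (hp0 : 0 < p) (hp1 : p ≤ 1) :
    (a + b) ^ p ≤ a ^ p + b ^ p := by
  have h := NNReal.rpow_add_le_add_rpow (a.toNNReal) (b.toNNReal) (le_of_lt hp0) hp1
  have := NNReal.coe_le_coe.2 h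
  push_cast at this
  rwa [Real.coe_toNNReal _ ha, Real.coe_toNNReal _ hb] at this

-- step 1 : x^(1-p) (1-x)^p ≤ (1-p)^(1-p) p^p   for x ∈ [0,1], p ∈ (0,1]
lemma amgm_step {p x : ℝ} (hp0 : 0 < p) (hp1 : p ≤ 1) (hx0 : 0 ≤ x) (hx1 : x ≤ 1) :
    x ^ (1 - p) * (1 - x) ^ p ≤ (1 - p) ^ (1 - p) * p ^ p := by
  rcases eq_or_lt_of_le hp1 with hpe | hplt
  · subst hpe
    simp only [sub_self, Real.rpow_zero, Real.rpow_one, one_mul]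
    linarith
  · have h1p : 0 < 1 - p := by linarith
    have key := Real.geom_mean_le_arith_mean2_weighted
      (w₁ := 1 - p) (w₂ := p) (p₁ := x / (1 - p)) (p₂ := (1 - x) / p)
      (by linarith) (le_of_lt hp0) (div_nonneg hx0 (le_of_lt h1p)) (div_nonneg (by linarith) (le_of_lt hp0)) (by ring)
    have e1 : (x / (1 - p)) ^ (1 - p) * ((1 - x) / p) ^ p
        = (x ^ (1 - p) * (1 - x) ^ p) / ((1 - p) ^ (1 - p) * p ^ p) := by
      rw [Real.div_rpow hx0 (le_of_lt h1p), Real.div_rpow (by linarith) (le_of_lt hp0)]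
      field_simp
    have e2 : (1 - p) * (x / (1 - p)) + p * ((1 - x) / p) = 1 := by
      field_simp
      ring
    rw [e1, e2] at key
    have hpos : 0 < (1 - p) ^ (1 - p) * p ^ p := by
      have := Real.rpow_pos_of_pos h1p (1 - p)
      have := Real.rpow_pos_of_pos hp0 p
      positivity
    calc x ^ (1 - p) * (1 - x) ^ p
        = (x ^ (1 - p) * (1 - x) ^ p) / ((1 - p) ^ (1 - p) * p ^ p)
          * ((1 - p) ^ (1 - p) * p ^ p) := by field_simp
      _ ≤ 1 * ((1 - p) ^ (1 - p) * p ^ p) := by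
          exact mul_le_mul_of_nonneg_right key (le_of_lt hpos)
      _ = (1 - p) ^ (1 - p) * p ^ p := one_mul _

-- step 2 : (1-p)^(1-p) * p^p ≤ (2p)^p * ((2-p)/2)^(2-p)
lemma const_step {p : ℝ} (hp0 : 0 < p) (hp1 : p ≤ 1) :
    (1 - p) ^ (1 - p) * p ^ p ≤ (2 * p) ^ p * ((2 - p) / 2) ^ (2 - p) := by
  have h2p : (0:ℝ) < 2 - p := by linarith
  have h1p : (0:ℝ) ≤ 1 - p := by linarith
  -- (4(1-p))^(1-p) ≤ (2-p)^(2-p)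
  have hA : (4 * (1 - p)) ^ (1 - p) ≤ ((2 - p) ^ (2:ℕ)) ^ (1 - p) := by
    apply Real.rpow_le_rpow (by linarith) (by nlinarith) h1p
  have hB : ((2 - p) ^ (2:ℕ)) ^ (1 - p) = (2 - p) ^ (2 - 2*p) := by
    rw [← Real.rpow_natCast (2 - p) 2, ← Real.rpow_mul (le_of_lt h2p)]
    congr 1
    push_cast
    ring
  have hC : (2 - p) ^ (2 - 2*p) ≤ (2 - p) ^ (2 - p) := by
    apply Real.rpow_le_rpow_of_exponent_le (by linarith) (by linarith)
  have hmain : 4 ^ (1 - p) * (1 - p) ^ (1 - p) ≤ (2 - p) ^ (2 - p) := by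
    rw [← Real.mul_rpow (by norm_num) h1p]
    exact le_trans hA (hB ▸ hC)
  -- rearrange
  have h4 : ((4:ℝ)) ^ (1 - p) > 0 := Real.rpow_pos_of_pos (by norm_num) _
  have key : (1 - p) ^ (1 - p) ≤ (2 - p) ^ (2 - p) / 4 ^ (1 - p) := by
    rw [le_div_iff₀ h4]
    linarith [hmain]
  have hfin : (2 - p) ^ (2 - p) / 4 ^ (1 - p) * p ^ p = (2 * p) ^ p * ((2 - p) / 2) ^ (2 - p) := by
    rw [Real.mul_rpow (by norm_num) (le_of_lt hp0),
      Real.div_rpow (le_of_lt h2p) (by norm_num)]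
    have e4 : (4:ℝ) ^ (1 - p) = 2 ^ (2 - p) / 2 ^ p := by
      rw [show (4:ℝ) = 2 ^ (2:ℝ) by
        rw [show ((2:ℝ)) = ((2:ℕ):ℝ) by norm_num, Real.rpow_natCast]; norm_num,
        ← Real.rpow_mul (by norm_num), ← Real.rpow_sub (by norm_num)]
      ring_nf
    rw [e4]
    have c1 : (0:ℝ) < 2 ^ (2 - p) := Real.rpow_pos_of_pos (by norm_num) _
    have c2 : (0:ℝ) < 2 ^ p := Real.rpow_pos_of_pos (by norm_num) _
    field_simp
  calc (1 - p) ^ (1 - p) * p ^ p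
      ≤ ((2 - p) ^ (2 - p) / 4 ^ (1 - p)) * p ^ p := by
        exact mul_le_mul_of_nonneg_right key (le_of_lt (Real.rpow_pos_of_pos hp0 p))
    _ = (2 * p) ^ p * ((2 - p) / 2) ^ (2 - p) := hfin

-- the x-inequality
lemma key_x_ineq {p x : ℝ} (hp0 : 0 < p) (hp1 : p ≤ 1) (hx0 : 0 ≤ x) (hx1 : x ≤ 1) :
    x ^ ((1 - p) / (2 * p)) * (1 - x) ^ ((1:ℝ)/2)
      ≤ Real.sqrt (2 * p) * (2 / (2 - p)) ^ ((1:ℝ) / 2 - 1 / p) := by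
  have h2p : (0:ℝ) < 2 - p := by linarith
  have hbase : (0:ℝ) < 2 / (2 - p) := by positivity
  have hγ : 0 ≤ Real.sqrt (2 * p) * (2 / (2 - p)) ^ ((1:ℝ) / 2 - 1 / p) := by
    have := Real.rpow_pos_of_pos hbase ((1:ℝ)/2 - 1/p)
    positivity
  have hL : 0 ≤ x ^ ((1 - p) / (2 * p)) * (1 - x) ^ ((1:ℝ)/2) := by
    have := Real.rpow_nonneg hx0 ((1 - p) / (2 * p))
    have := Real.rpow_nonneg (show (0:ℝ) ≤ 1 - x by linarith) ((1:ℝ)/2)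
    positivity
  rw [← Real.rpow_le_rpow_iff hL hγ (show (0:ℝ) < 2 * p by linarith)]
  -- LHS^(2p)
  have eL : (x ^ ((1 - p) / (2 * p)) * (1 - x) ^ ((1:ℝ)/2)) ^ (2 * p)
      = x ^ (1 - p) * (1 - x) ^ p := by
    rw [Real.mul_rpow (Real.rpow_nonneg hx0 _)
      (Real.rpow_nonneg (show (0:ℝ) ≤ 1 - x by linarith) _),
      ← Real.rpow_mul hx0, ← Real.rpow_mul (show (0:ℝ) ≤ 1 - x by linarith)]
    rw [show (1 - p) / (2 * p) * (2 * p) = 1 - p by field_simp,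
      show (1:ℝ)/2 * (2 * p) = p by ring]
  -- RHS^(2p)
  have eR : (Real.sqrt (2 * p) * (2 / (2 - p)) ^ ((1:ℝ) / 2 - 1 / p)) ^ (2 * p)
      = (2 * p) ^ p * ((2 - p) / 2) ^ (2 - p) := by
    rw [Real.mul_rpow (Real.sqrt_nonneg _) (le_of_lt (Real.rpow_pos_of_pos hbase _)),
      Real.sqrt_eq_rpow, ← Real.rpow_mul (by linarith), ← Real.rpow_mul (le_of_lt hbase)]
    have e5 : ((1:ℝ)/2 - 1/p) * (2 * p) = -(2 - p) := by
      field_simp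
      try ring
    rw [show (1:ℝ)/2 * (2 * p) = p by ring, e5,
      Real.rpow_neg (le_of_lt hbase), ← Real.inv_rpow (le_of_lt hbase), inv_div]
  rw [eL, eR]
  exact le_trans (amgm_step hp0 hp1 hx0 hx1) (const_step hp0 hp1)


lemma l2norm_restrict {n : ℕ} (I : Finset (Fin n)) (d : Fin n → ℂ) :
    l2norm (restrict I d) = Real.sqrt (∑ i ∈ I, ‖d i‖ ^ 2) := by
  rw [l2norm]
  congr 1
  rw [← Finset.sum_subset (Finset.subset_univ I)
    (fun i _ hi => by simp [restrict, hi])]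
  exact Finset.sum_congr rfl fun i hi => by simp [restrict, hi]

lemma sqrt_sum_sq_le {n : ℕ} (I : Finset (Fin n)) (d : Fin n → ℂ) :
    Real.sqrt (∑ i ∈ I, ‖d i‖ ^ 2) ≤ l2norm d := by
  apply Real.sqrt_le_sqrt
  exact Finset.sum_le_sum_of_subset_of_nonneg (Finset.subset_univ I)
    (fun i _ _ => sq_nonneg _)

lemma powmean {ι : Type} (S : Finset ι) (g : ι → ℝ) (hg : ∀ i, 0 ≤ g i) {p : ℝ}
    (hp0 : 0 < p) (hp1 : p ≤ 1) (hcard : 0 < S.card) :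
    ∑ i ∈ S, g i ^ p ≤ (S.card : ℝ) ^ (1 - p/2) * (∑ i ∈ S, g i ^ (2:ℕ)) ^ (p/2) := by
  set c : ℝ := (S.card : ℝ) with hc
  have hcpos : (0:ℝ) < c := by rw [hc]; exact_mod_cast hcard
  have h1 := Real.rpow_arith_mean_le_arith_mean_rpow S (fun _ => 1/c) (fun i => g i ^ p)
    (fun i _ => by positivity) (by simp [Finset.sum_const, hc]; field_simp)
    (fun i _ => Real.rpow_nonneg (hg i) p) (show (1:ℝ) ≤ 2/p by
      rw [le_div_iff₀ hp0]; linarith)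
  have e1 : ∀ i, (g i ^ p) ^ ((2:ℝ)/p) = g i ^ (2:ℕ) := by
    intro i
    rw [← Real.rpow_natCast (g i) 2, ← Real.rpow_mul (hg i)]
    congr 1
    field_simp
    norm_num
  have h2 : (∑ i ∈ S, 1/c * g i ^ p) ^ ((2:ℝ)/p) ≤ 1/c * ∑ i ∈ S, g i ^ (2:ℕ) := by
    refine le_trans h1 (le_of_eq ?_)
    rw [← Finset.mul_sum]
    congr 1
    exact Finset.sum_congr rfl fun i _ => e1 i
  have h3 : ∑ i ∈ S, 1/c * g i ^ p = 1/c * ∑ i ∈ S, g i ^ p := by rw [Finset.mul_sum]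
  rw [h3] at h2
  -- apply rpow (p/2)
  have hnn : 0 ≤ 1/c * ∑ i ∈ S, g i ^ p :=
    mul_nonneg (by positivity) (Finset.sum_nonneg fun i _ => Real.rpow_nonneg (hg i) p)
  have h4 : ((1/c * ∑ i ∈ S, g i ^ p) ^ ((2:ℝ)/p)) ^ (p/2) = 1/c * ∑ i ∈ S, g i ^ p := by
    rw [← Real.rpow_mul hnn, show (2:ℝ)/p * (p/2) = 1 by field_simp, Real.rpow_one]
  have h5 : 1/c * ∑ i ∈ S, g i ^ p ≤ (1/c * ∑ i ∈ S, g i ^ (2:ℕ)) ^ (p/2) := by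
    rw [← h4]
    exact Real.rpow_le_rpow (Real.rpow_nonneg hnn _) h2 (by positivity)
  have h6 : (1/c * ∑ i ∈ S, g i ^ (2:ℕ)) ^ (p/2)
      = (1/c) ^ (p/2) * (∑ i ∈ S, g i ^ (2:ℕ)) ^ (p/2) :=
    Real.mul_rpow (by positivity) (Finset.sum_nonneg fun i _ => by positivity)
  have h7 : c * ((1/c) ^ (p/2)) = c ^ (1 - p/2) := by
    rw [one_div, Real.inv_rpow (le_of_lt hcpos), ← Real.rpow_neg (le_of_lt hcpos)]
    nth_rewrite 1 [← Real.rpow_one c]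
    rw [← Real.rpow_add hcpos]
    ring_nf
  calc ∑ i ∈ S, g i ^ p = c * (1/c * ∑ i ∈ S, g i ^ p) := by field_simp
    _ ≤ c * ((1/c) ^ (p/2) * (∑ i ∈ S, g i ^ (2:ℕ)) ^ (p/2)) := by
        rw [← h6]; exact mul_le_mul_of_nonneg_left h5 (le_of_lt hcpos)
    _ = c ^ (1 - p/2) * (∑ i ∈ S, g i ^ (2:ℕ)) ^ (p/2) := by rw [← mul_assoc, h7]

set_option maxHeartbeats 2000000 in
lemma exists_decomp {n : ℕ} (p : ℝ) (hp0 : 0 < p) (hp1 : p ≤ 1)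
    (s : ℕ) (hs : 1 ≤ s) (S : Finset (Fin n)) (hScard : S.card = s)
    (d : Fin n → ℂ)
    (hd : ∑ i ∈ Finset.univ \ S, ‖d i‖ ^ p ≤ ∑ i ∈ S, ‖d i‖ ^ p) :
    ∃ (M : ℕ) (T : ℕ → Finset (Fin n)),
      0 < M ∧
      (∀ j, T j ⊆ Finset.univ \ S) ∧
      (∀ j, (T j).card ≤ s) ∧
      (∀ j k, j < k → Disjoint (T j) (T k)) ∧
      ((Finset.range M).biUnion T = Finset.univ \ S) ∧
      (∑ k ∈ Finset.range (M - 1), l2norm (restrict (T (k + 1)) d)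
        ≤ Real.sqrt (2 * p) * (2 / (2 - p)) ^ ((1:ℝ)/2 - 1/p) * l2norm d) := by
  classical
  have h2p : (0:ℝ) < 2 - p := by linarith
  set C : Finset (Fin n) := Finset.univ \ S with hC
  set g : Fin n → ℝ := fun i => ‖d i‖ with hgdef
  have hgnn : ∀ i, 0 ≤ g i := fun i => norm_nonneg _
  obtain ⟨T, hTC, hTcard, hTdisj, hTfull, hTord, hTcover⟩ := exists_blocks g s hs C
  set K : ℕ := C.card with hK
  refine ⟨K + 1, T, Nat.succ_pos _, hTC, hTcard, hTdisj, hTcover (K+1) (Nat.le_succ _), ?_⟩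
  have hM1 : K + 1 - 1 = K := rfl
  rw [hM1]
  set γ : ℝ := Real.sqrt (2 * p) * (2 / (2 - p)) ^ ((1:ℝ)/2 - 1/p) with hγdef
  have hγnn : 0 ≤ γ :=
    mul_nonneg (Real.sqrt_nonneg _) (Real.rpow_nonneg (by positivity) _)
  set a : ℕ → ℝ := fun j => ∑ i ∈ T j, g i ^ p with hadef
  have hann : ∀ j, 0 ≤ a j := fun j =>
    Finset.sum_nonneg fun i _ => Real.rpow_nonneg (hgnn i) p
  have hs' : (0:ℝ) < (s:ℝ) := by exact_mod_cast hs
  have hblockmax : ∀ j, ∀ i ∈ T (j+1), g i ^ p ≤ a j / (s:ℝ) := by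
    intro j i hi
    have hfull := hTfull j ⟨i, hi⟩
    have h1 : ∀ i' ∈ T j, g i ^ p ≤ g i' ^ p := fun i' hi' =>
      Real.rpow_le_rpow (hgnn i) (hTord j i hi i' hi') (le_of_lt hp0)
    have h2 : (T j).card • (g i ^ p) ≤ ∑ i' ∈ T j, g i' ^ p :=
      Finset.card_nsmul_le_sum (T j) _ _ h1
    rw [hfull, nsmul_eq_mul] at h2
    rw [le_div_iff₀ hs']
    calc g i ^ p * (s:ℝ) = (s:ℝ) * (g i ^ p) := by ring
      _ ≤ ∑ i' ∈ T j, g i' ^ p := h2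
      _ = a j := rfl
  have hamono : ∀ j, a (j+1) ≤ a j := by
    intro j
    rcases Finset.eq_empty_or_nonempty (T (j+1)) with he | hne
    · have hz : a (j+1) = 0 := by
        show (∑ i ∈ T (j+1), g i ^ p) = 0
        rw [he, Finset.sum_empty]
      rw [hz]; exact hann j
    · have h1 : a (j+1) ≤ ∑ _i ∈ T (j+1), a j / (s:ℝ) :=
        Finset.sum_le_sum (fun i hi => hblockmax j i hi)
      have h2 : ∑ _i ∈ T (j+1), a j / (s:ℝ) = ((T (j+1)).card : ℝ) * (a j / s) := by
        rw [Finset.sum_const, nsmul_eq_mul]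
      have h3 : ((T (j+1)).card : ℝ) * (a j / s) ≤ (s:ℝ) * (a j / s) := by
        apply mul_le_mul_of_nonneg_right _ (div_nonneg (hann j) (le_of_lt hs'))
        exact_mod_cast hTcard (j+1)
      have h4 : (s:ℝ) * (a j / s) = a j := by field_simp
      linarith
  have ha0 : ∀ j, a j ≤ a 0 := by
    intro j
    induction j with
    | zero => exact le_refl _
    | succ j ih => exact le_trans (hamono j) ih
  set A : ℝ := ∑ j ∈ Finset.range (K+1), a j with hAdef
  have hAnn : 0 ≤ A := Finset.sum_nonneg fun j _ => hann j
  have haleA : ∀ j ∈ Finset.range (K+1), a j ≤ A := fun j hj =>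
    Finset.single_le_sum (fun k _ => hann k) hj
  -- per-block ℓ2 bound
  have hl2 : ∀ k, l2norm (restrict (T (k+1)) d)
      ≤ (a k / s) ^ ((2-p)/(2*p)) * Real.sqrt (a (k+1)) := by
    intro k
    rw [l2norm_restrict]
    have hterm : ∀ i ∈ T (k+1),
        ‖d i‖ ^ 2 ≤ (a k / s) ^ ((2-p)/p) * (g i ^ p) := by
      intro i hi
      have hgb := hblockmax k i hi
      have h2ne : (2 - p) + p ≠ 0 := by ring_nf; norm_num
      have e1 : (‖d i‖ : ℝ) ^ (2:ℕ) = g i ^ ((2:ℝ) - p) * g i ^ p := by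
        rw [show (‖d i‖ : ℝ) = g i from rfl,
          ← Real.rpow_natCast (g i) 2,
          show ((2:ℕ):ℝ) = (2 - p) + p by push_cast; ring,
          Real.rpow_add' (hgnn i) h2ne]
      have e3 : g i ^ ((2:ℝ) - p) = (g i ^ p) ^ ((2 - p)/p) := by
        rw [← Real.rpow_mul (hgnn i), show p * ((2-p)/p) = 2 - p by field_simp]
      have e2 : g i ^ ((2:ℝ) - p) ≤ (a k / s) ^ ((2-p)/p) := by
        rw [e3]
        exact Real.rpow_le_rpow (Real.rpow_nonneg (hgnn i) p) hgb
          (div_nonneg (by linarith) (le_of_lt hp0))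
      calc (‖d i‖ : ℝ) ^ 2 = g i ^ ((2:ℝ) - p) * g i ^ p := e1
        _ ≤ (a k / s) ^ ((2-p)/p) * (g i ^ p) :=
            mul_le_mul_of_nonneg_right e2 (Real.rpow_nonneg (hgnn i) p)
    have hsum2 : ∑ i ∈ T (k+1), ‖d i‖ ^ 2
        ≤ (a k / s) ^ ((2-p)/p) * a (k+1) := by
      calc ∑ i ∈ T (k+1), ‖d i‖ ^ 2
          ≤ ∑ i ∈ T (k+1), (a k / s) ^ ((2-p)/p) * (g i ^ p) :=
            Finset.sum_le_sum hterm
        _ = (a k / s) ^ ((2-p)/p) * a (k+1) := by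
            rw [← Finset.mul_sum]
    have e4 : Real.sqrt ((a k / s) ^ ((2-p)/p) * a (k+1))
        = (a k / s) ^ ((2-p)/(2*p)) * Real.sqrt (a (k+1)) := by
      rw [Real.sqrt_mul (Real.rpow_nonneg (div_nonneg (hann k) (le_of_lt hs')) _)]
      congr 1
      rw [Real.sqrt_eq_rpow, ← Real.rpow_mul (div_nonneg (hann k) (le_of_lt hs')),
        show (2-p)/p * (1/2:ℝ) = (2-p)/(2*p) by ring]
    calc Real.sqrt (∑ i ∈ T (k+1), ‖d i‖ ^ 2)
        ≤ Real.sqrt ((a k / s) ^ ((2-p)/p) * a (k+1)) := Real.sqrt_le_sqrt hsum2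
      _ = (a k / s) ^ ((2-p)/(2*p)) * Real.sqrt (a (k+1)) := e4
  -- Cauchy-Schwarz setup
  set f : ℕ → ℝ := fun k => a k ^ (1/(2*p)) with hfdef
  set h : ℕ → ℝ := fun k => a k ^ ((1-p)/(2*p)) * Real.sqrt (a (k+1)) with hhdef
  have hfnn : ∀ k, 0 ≤ f k := fun k => Real.rpow_nonneg (hann k) _
  have hhnn : ∀ k, 0 ≤ h k := fun k =>
    mul_nonneg (Real.rpow_nonneg (hann k) _) (Real.sqrt_nonneg _)
  have hsplit : ∀ k, (a k / s) ^ ((2-p)/(2*p)) * Real.sqrt (a (k+1))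
      = f k * h k / (s:ℝ) ^ ((2-p)/(2*p)) := by
    intro k
    rw [Real.div_rpow (hann k) (le_of_lt hs')]
    have e5 : a k ^ ((2-p)/(2*p)) = f k * a k ^ ((1-p)/(2*p)) := by
      show a k ^ ((2-p)/(2*p)) = a k ^ (1/(2*p)) * a k ^ ((1-p)/(2*p))
      rw [← Real.rpow_add' (hann k) (by
        rw [show 1/(2*p) + (1-p)/(2*p) = (2-p)/(2*p) by ring]
        exact div_ne_zero (by linarith) (by linarith))]
      congr 1
      ring
    rw [e5]
    show f k * a k ^ ((1-p)/(2*p)) / (s:ℝ) ^ ((2-p)/(2*p)) * Real.sqrt (a (k+1)) = _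
    rw [hhdef]
    ring
  have hCS : ∑ k ∈ Finset.range K, f k * h k
      ≤ Real.sqrt (∑ k ∈ Finset.range K, f k ^ 2)
        * Real.sqrt (∑ k ∈ Finset.range K, h k ^ 2) := by
    have h1 := Finset.sum_mul_sq_le_sq_mul_sq (Finset.range K) f h
    have lhsnn : 0 ≤ ∑ k ∈ Finset.range K, f k * h k :=
      Finset.sum_nonneg fun k _ => mul_nonneg (hfnn k) (hhnn k)
    calc ∑ k ∈ Finset.range K, f k * h k
        = Real.sqrt ((∑ k ∈ Finset.range K, f k * h k) ^ 2) := (Real.sqrt_sq lhsnn).symm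
      _ ≤ Real.sqrt ((∑ k ∈ Finset.range K, f k ^ 2) * ∑ k ∈ Finset.range K, h k ^ 2) :=
          Real.sqrt_le_sqrt h1
      _ = _ := Real.sqrt_mul (Finset.sum_nonneg fun k _ => sq_nonneg _) _
  have hf2 : ∀ k, f k ^ 2 = a k ^ ((1:ℝ)/p) := by
    intro k
    show (a k ^ (1/(2*p))) ^ (2:ℕ) = a k ^ ((1:ℝ)/p)
    rw [← Real.rpow_natCast (a k ^ (1/(2*p))) 2, ← Real.rpow_mul (hann k)]
    congr 1
    push_cast
    ring
  have hh2 : ∀ k, h k ^ 2 = a k ^ ((1-p)/p) * a (k+1) := by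
    intro k
    show (a k ^ ((1-p)/(2*p)) * Real.sqrt (a (k+1))) ^ (2:ℕ) = _
    rw [mul_pow, Real.sq_sqrt (hann (k+1)),
      ← Real.rpow_natCast (a k ^ ((1-p)/(2*p))) 2, ← Real.rpow_mul (hann k)]
    congr 2
    push_cast
    ring
  have hone_div_pos : (0:ℝ) < 1/p := by positivity
  have hexp1 : (0:ℝ) ≤ 1/p - 1 := by
    rw [sub_nonneg, le_div_iff₀ hp0]
    linarith
  have hb1 : ∑ k ∈ Finset.range K, f k ^ 2 ≤ A ^ ((1:ℝ)/p) := by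
    have hstep : ∀ k ∈ Finset.range K, f k ^ 2 ≤ a k * A ^ ((1:ℝ)/p - 1) := by
      intro k hk
      have hkM : k ∈ Finset.range (K+1) := by
        rw [Finset.mem_range] at *
        omega
      rw [hf2 k]
      have e5 : a k ^ ((1:ℝ)/p) = a k ^ (1:ℝ) * a k ^ ((1:ℝ)/p - 1) := by
        rw [← Real.rpow_add' (hann k) (by
          rw [show (1:ℝ) + (1/p - 1) = 1/p by ring]
          exact ne_of_gt hone_div_pos)]
        congr 1
        ring
      rw [e5, Real.rpow_one]
      exact mul_le_mul_of_nonneg_left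
        (Real.rpow_le_rpow (hann k) (haleA k hkM) hexp1) (hann k)
    calc ∑ k ∈ Finset.range K, f k ^ 2
        ≤ ∑ k ∈ Finset.range K, a k * A ^ ((1:ℝ)/p - 1) := Finset.sum_le_sum hstep
      _ = (∑ k ∈ Finset.range K, a k) * A ^ ((1:ℝ)/p - 1) := by rw [Finset.sum_mul]
      _ ≤ A * A ^ ((1:ℝ)/p - 1) := by
          apply mul_le_mul_of_nonneg_right _ (Real.rpow_nonneg hAnn _)
          exact Finset.sum_le_sum_of_subset_of_nonneg
            (Finset.range_subset_range.2 (Nat.le_succ K)) (fun j _ _ => hann j)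
      _ = A ^ ((1:ℝ)/p) := by
          nth_rewrite 1 [← Real.rpow_one A]
          rw [← Real.rpow_add' hAnn (by
            rw [show (1:ℝ) + (1/p - 1) = 1/p by ring]
            exact ne_of_gt hone_div_pos)]
          congr 1
          ring
  have hsumshift : ∑ k ∈ Finset.range K, a (k+1) = A - a 0 := by
    have := Finset.sum_range_succ' a K
    rw [hAdef]
    rw [this]
    ring
  have hb2 : ∑ k ∈ Finset.range K, h k ^ 2 ≤ a 0 ^ ((1-p)/p) * (A - a 0) := by
    have hstep : ∀ k ∈ Finset.range K, h k ^ 2 ≤ a 0 ^ ((1-p)/p) * a (k+1) := by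
      intro k _
      rw [hh2 k]
      exact mul_le_mul_of_nonneg_right
        (Real.rpow_le_rpow (hann k) (ha0 k) (div_nonneg (by linarith) (le_of_lt hp0)))
        (hann (k+1))
    calc ∑ k ∈ Finset.range K, h k ^ 2
        ≤ ∑ k ∈ Finset.range K, a 0 ^ ((1-p)/p) * a (k+1) := Finset.sum_le_sum hstep
      _ = a 0 ^ ((1-p)/p) * ∑ k ∈ Finset.range K, a (k+1) := by rw [Finset.mul_sum]
      _ = a 0 ^ ((1-p)/p) * (A - a 0) := by rw [hsumshift]
  -- the x-inequality application
  have hXnn : 0 ≤ a 0 ^ ((1-p)/p) * (A - a 0) := by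
    have := hb2
    have h0 : 0 ≤ ∑ k ∈ Finset.range K, h k ^ 2 :=
      Finset.sum_nonneg fun k _ => sq_nonneg _
    linarith
  have hX : Real.sqrt (A ^ ((1:ℝ)/p)) * Real.sqrt (a 0 ^ ((1-p)/p) * (A - a 0))
      ≤ γ * A ^ ((1:ℝ)/p) := by
    rcases eq_or_lt_of_le hAnn with hA0 | hApos
    · have hz : A ^ ((1:ℝ)/p) = 0 := by
        rw [← hA0, Real.zero_rpow (ne_of_gt hone_div_pos)]
      rw [hz, Real.sqrt_zero, zero_mul, mul_zero]
    · have ha0A : a 0 ≤ A := haleA 0 (Finset.mem_range.2 (Nat.succ_pos _))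
      set xx : ℝ := a 0 / A with hxxdef
      have hx0 : 0 ≤ xx := div_nonneg (hann 0) (le_of_lt hApos)
      have hx1 : xx ≤ 1 := (div_le_one hApos).2 ha0A
      have hkey := key_x_ineq hp0 hp1 hx0 hx1
      have ea0 : a 0 = xx * A := by
        rw [hxxdef]
        field_simp
      have eA1 : A - a 0 = (1 - xx) * A := by rw [ea0]; ring
      have e6 : Real.sqrt (A ^ ((1:ℝ)/p)) = A ^ ((1:ℝ)/(2*p)) := by
        rw [Real.sqrt_eq_rpow, ← Real.rpow_mul hAnn,
          show (1:ℝ)/p * (1/2) = 1/(2*p) by ring]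
      have e7 : Real.sqrt (a 0 ^ ((1-p)/p) * (A - a 0))
          = xx ^ ((1-p)/(2*p)) * (1 - xx) ^ ((1:ℝ)/2)
            * (A ^ ((1-p)/(2*p)) * A ^ ((1:ℝ)/2)) := by
        rw [Real.sqrt_mul (Real.rpow_nonneg (hann 0) _), eA1, ea0,
          Real.mul_rpow hx0 (le_of_lt hApos)]
        have e8 : Real.sqrt ((xx ^ ((1-p)/p)) * A ^ ((1-p)/p))
            = xx ^ ((1-p)/(2*p)) * A ^ ((1-p)/(2*p)) := by
          rw [Real.sqrt_mul (Real.rpow_nonneg hx0 _), Real.sqrt_eq_rpow,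
            Real.sqrt_eq_rpow, ← Real.rpow_mul hx0, ← Real.rpow_mul (le_of_lt hApos),
            show (1-p)/p * (1/2:ℝ) = (1-p)/(2*p) by ring]
        have e9 : Real.sqrt ((1 - xx) * A)
            = (1 - xx) ^ ((1:ℝ)/2) * A ^ ((1:ℝ)/2) := by
          rw [Real.sqrt_mul (by linarith), Real.sqrt_eq_rpow, Real.sqrt_eq_rpow]
        rw [e8, e9]
        ring
      rw [e6, e7]
      have e10 : A ^ ((1:ℝ)/(2*p)) * (A ^ ((1-p)/(2*p)) * A ^ ((1:ℝ)/2))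
          = A ^ ((1:ℝ)/p) := by
        rw [← Real.rpow_add hApos, ← Real.rpow_add hApos]
        congr 1
        field_simp
        try ring
      calc A ^ ((1:ℝ)/(2*p)) * (xx ^ ((1-p)/(2*p)) * (1 - xx) ^ ((1:ℝ)/2)
            * (A ^ ((1-p)/(2*p)) * A ^ ((1:ℝ)/2)))
          = (xx ^ ((1-p)/(2*p)) * (1 - xx) ^ ((1:ℝ)/2))
            * (A ^ ((1:ℝ)/(2*p)) * (A ^ ((1-p)/(2*p)) * A ^ ((1:ℝ)/2))) := by ring
        _ ≤ γ * (A ^ ((1:ℝ)/(2*p)) * (A ^ ((1-p)/(2*p)) * A ^ ((1:ℝ)/2))) := by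
            exact mul_le_mul_of_nonneg_right hkey
              (mul_nonneg (Real.rpow_nonneg hAnn _)
                (mul_nonneg (Real.rpow_nonneg hAnn _) (Real.rpow_nonneg hAnn _)))
        _ = γ * A ^ ((1:ℝ)/p) := by rw [e10]
  -- feasibility : A ≤ ∑_S g^p, then A^(1/p) ≤ s^((2-p)/(2p)) * sqrt (∑_S g^2)
  have hpd : Set.PairwiseDisjoint ↑(Finset.range (K+1)) T := by
    intro j _ k _ hjk
    rcases lt_or_gt_of_ne hjk with hlt | hgt
    · exact hTdisj j k hlt
    · exact (hTdisj k j hgt).symm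
  have hAC : A = ∑ i ∈ C, g i ^ p := by
    rw [← hTcover (K+1) (Nat.le_succ _), Finset.sum_biUnion hpd]
  have hfeA : A ≤ ∑ i ∈ S, g i ^ p := by rw [hAC]; exact hd
  have hpm := powmean S g hgnn hp0 hp1 (by rw [hScard]; omega)
  have hA1p : A ^ ((1:ℝ)/p)
      ≤ (s:ℝ) ^ ((2-p)/(2*p)) * Real.sqrt (∑ i ∈ S, g i ^ (2:ℕ)) := by
    have h1 : A ≤ (s:ℝ) ^ (1 - p/2) * (∑ i ∈ S, g i ^ (2:ℕ)) ^ (p/2) := by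
      rw [← hScard]
      exact le_trans hfeA hpm
    have hsq : (0:ℝ) ≤ ∑ i ∈ S, g i ^ (2:ℕ) :=
      Finset.sum_nonneg fun i _ => by positivity
    have h2 := Real.rpow_le_rpow hAnn h1 (le_of_lt hone_div_pos)
    rw [Real.mul_rpow (Real.rpow_nonneg (le_of_lt hs') _) (Real.rpow_nonneg hsq _),
      ← Real.rpow_mul (le_of_lt hs'), ← Real.rpow_mul hsq] at h2
    refine le_trans h2 (le_of_eq ?_)
    have e11 : (1 - p/2) * ((1:ℝ)/p) = (2-p)/(2*p) := by
      rw [show 1 - p/2 = (2-p)/2 by ring, div_mul_div_comm, mul_one]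
    have e12 : p/2 * ((1:ℝ)/p) = 1/2 := by
      rw [div_mul_div_comm, mul_one, div_eq_div_iff (by positivity) (by norm_num)]
      ring
    rw [e11, e12, Real.sqrt_eq_rpow]
  -- put it together
  have hspow : (0:ℝ) < (s:ℝ) ^ ((2-p)/(2*p)) := Real.rpow_pos_of_pos hs' _
  calc ∑ k ∈ Finset.range K, l2norm (restrict (T (k+1)) d)
      ≤ ∑ k ∈ Finset.range K, (a k / s) ^ ((2-p)/(2*p)) * Real.sqrt (a (k+1)) :=
        Finset.sum_le_sum fun k _ => hl2 k
    _ = (∑ k ∈ Finset.range K, f k * h k) / (s:ℝ) ^ ((2-p)/(2*p)) := by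
        rw [Finset.sum_div]
        exact Finset.sum_congr rfl fun k _ => hsplit k
    _ ≤ (Real.sqrt (∑ k ∈ Finset.range K, f k ^ 2)
          * Real.sqrt (∑ k ∈ Finset.range K, h k ^ 2)) / (s:ℝ) ^ ((2-p)/(2*p)) := by
        gcongr
    _ ≤ (Real.sqrt (A ^ ((1:ℝ)/p)) * Real.sqrt (a 0 ^ ((1-p)/p) * (A - a 0)))
          / (s:ℝ) ^ ((2-p)/(2*p)) := by
        refine (div_le_div_iff_of_pos_right hspow).2 ?_
        exact mul_le_mul (Real.sqrt_le_sqrt hb1) (Real.sqrt_le_sqrt hb2)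
          (Real.sqrt_nonneg _) (Real.sqrt_nonneg _)
    _ ≤ (γ * A ^ ((1:ℝ)/p)) / (s:ℝ) ^ ((2-p)/(2*p)) :=
        (div_le_div_iff_of_pos_right hspow).2 hX
    _ ≤ (γ * ((s:ℝ) ^ ((2-p)/(2*p)) * Real.sqrt (∑ i ∈ S, g i ^ (2:ℕ))))
          / (s:ℝ) ^ ((2-p)/(2*p)) :=
        (div_le_div_iff_of_pos_right hspow).2 (mul_le_mul_of_nonneg_left hA1p hγnn)
    _ = γ * Real.sqrt (∑ i ∈ S, g i ^ (2:ℕ)) := by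
        field_simp
    _ ≤ γ * l2norm d := mul_le_mul_of_nonneg_left (sqrt_sum_sq_le S d) hγnn


lemma feas_tail {n : ℕ} (p : ℝ) (hp0 : 0 < p) (hp1 : p ≤ 1) (S : Finset (Fin n))
    (xperp x : Fin n → ℂ)
    (hsupp : ∀ i : Fin n, xperp i ≠ 0 → i ∈ S)
    (hfeas : lpPow p x ≤ lpPow p xperp) :
    ∑ i ∈ Finset.univ \ S, ‖(x - xperp) i‖ ^ p
      ≤ ∑ i ∈ S, ‖(x - xperp) i‖ ^ p := by
  classical
  have hzero : ∀ i ∈ Finset.univ \ S, xperp i = 0 := by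
    intro i hi
    by_contra h
    exact (Finset.mem_sdiff.1 hi).2 (hsupp i h)
  have hsplit : ∀ v : Fin n → ℂ,
      (∑ i, ‖v i‖ ^ p)
        = (∑ i ∈ Finset.univ \ S, ‖v i‖ ^ p)
          + ∑ i ∈ S, ‖v i‖ ^ p :=
    fun v => (Finset.sum_sdiff (Finset.subset_univ S)).symm
  have e1 : ∑ i ∈ Finset.univ \ S, ‖(x - xperp) i‖ ^ p
      = ∑ i ∈ Finset.univ \ S, ‖x i‖ ^ p := by
    refine Finset.sum_congr rfl fun i hi => ?_
    rw [Pi.sub_apply, hzero i hi, sub_zero]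
  have e2 : ∑ i ∈ Finset.univ \ S, ‖xperp i‖ ^ p = 0 := by
    refine Finset.sum_eq_zero fun i hi => ?_
    rw [hzero i hi]
    simp [Real.zero_rpow (ne_of_gt hp0)]
  have e3 : ∑ i ∈ S, ‖xperp i‖ ^ p
      ≤ (∑ i ∈ S, ‖x i‖ ^ p)
        + ∑ i ∈ S, ‖(x - xperp) i‖ ^ p := by
    rw [← Finset.sum_add_distrib]
    refine Finset.sum_le_sum fun i _ => ?_
    have htri : ‖xperp i‖ ≤ ‖x i‖ + ‖(x - xperp) i‖ := by
      have : xperp i = x i - (x - xperp) i := by simp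
      rw [this]
      exact le_trans (norm_sub_le _ _) (by rfl)
    calc ‖xperp i‖ ^ p
        ≤ (‖x i‖ + ‖(x - xperp) i‖) ^ p :=
          Real.rpow_le_rpow (norm_nonneg _) htri (le_of_lt hp0)
      _ ≤ ‖x i‖ ^ p + ‖(x - xperp) i‖ ^ p :=
          rpow_subadd (norm_nonneg _) (norm_nonneg _) hp0 hp1
  have h4 := hfeas
  rw [lpPow, lpPow, hsplit x, hsplit xperp, e2] at h4
  rw [e1]
  linarith


end BRaux

open BRaux in
theorem iteration_invariant_bound
    {m n : ℕ} (p : ℝ) (hp0 : 0 < p) (hp1 : p ≤ 1)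
    (s : ℕ) (hs : 1 ≤ s) (S : Finset (Fin n)) (hScard : S.card = s)
    (xperp x x' : Fin n → ℂ)
    (hsupp : ∀ i : Fin n, xperp i ≠ 0 → i ∈ S)
    (hfeas : lpPow p x ≤ lpPow p xperp)
    (hfeas' : lpPow p x' ≤ lpPow p xperp)
    (A : Matrix (Fin m) (Fin n) ℂ) (α β : ℝ) (hβ : 0 < β) (hβα : β ≤ α)
    (hRIP : ∀ v : Fin n → ℂ, Sparse (3 * s) v →
      β * l2norm v ^ 2 ≤ l2norm (A.mulVec v) ^ 2 ∧
      l2norm (A.mulVec v) ^ 2 ≤ α * l2norm v ^ 2)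
    (η τ : ℝ) (hη : 0 < η) (hτ : 0 ≤ τ)
    (hητ : |η * (α + β) / 2 - 1| ≤ τ)
    (ρ : ℝ) (hρ : ρ = (α - β) / (α + β)) :
    (herm (x - xperp) (x' - xperp)
      - (η : ℂ) * herm (A.mulVec (x - xperp)) (A.mulVec (x' - xperp))).re ≤
      ((1 + τ) * ρ + τ) *
        (1 + Real.sqrt (2 * p) * (2 / (2 - p)) ^ ((1 : ℝ) / 2 - 1 / p)) ^ 2 *
        l2norm (x - xperp) * l2norm (x' - xperp) := by
  classical
  set d : Fin n → ℂ := x - xperp with hddef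
  set d' : Fin n → ℂ := x' - xperp with hd'def
  set γ : ℝ := Real.sqrt (2 * p) * (2 / (2 - p)) ^ ((1 : ℝ) / 2 - 1 / p) with hγdef
  set δ : ℝ := (1 + τ) * ρ + τ with hδdef
  have hαβ : (0:ℝ) < α + β := by linarith
  have hρ0 : 0 ≤ ρ := by
    rw [hρ]
    exact div_nonneg (by linarith) (le_of_lt hαβ)
  have hδnn : 0 ≤ δ := by
    rw [hδdef]
    have : 0 ≤ (1 + τ) * ρ := mul_nonneg (by linarith) hρ0
    linarith
  have hγnn : 0 ≤ γ := by
    rw [hγdef]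
    have h2p : (0:ℝ) < 2 - p := by linarith
    exact mul_nonneg (Real.sqrt_nonneg _) (Real.rpow_nonneg (by positivity) _)
  -- the Q bound
  have hQ : ∀ w : Fin n → ℂ, Sparse (3 * s) w →
      |l2norm w ^ 2 - η * l2norm (A.mulVec w) ^ 2| ≤ δ * l2norm w ^ 2 := by
    intro w hw
    set c : ℝ := η * (α + β) / 2 with hcdef
    have hc : |c - 1| ≤ τ := hητ
    have hc1 := (abs_le.1 hc).1
    have hc2 := (abs_le.1 hc).2
    have hcα : c * (1 + ρ) = η * α := by
      rw [hcdef, hρ]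
      field_simp
      ring
    have hcβ : c * (1 - ρ) = η * β := by
      rw [hcdef, hρ]
      field_simp
      ring
    have hcnn : 0 ≤ c := by
      rw [hcdef]
      positivity
    have hcρ : c * ρ ≤ (1 + τ) * ρ := mul_le_mul_of_nonneg_right (by linarith) hρ0
    have hδ1 : |1 - η * β| ≤ δ := by
      rw [← hcβ, abs_le]
      constructor
      · nlinarith
      · nlinarith
    have hδ2 : |1 - η * α| ≤ δ := by
      rw [← hcα, abs_le]
      constructor
      · nlinarith
      · nlinarith
    obtain ⟨hr1, hr2⟩ := hRIP w hw
    have h1 : η * (β * l2norm w ^ 2) ≤ η * l2norm (A.mulVec w) ^ 2 :=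
      mul_le_mul_of_nonneg_left hr1 (le_of_lt hη)
    have h2 : η * l2norm (A.mulVec w) ^ 2 ≤ η * (α * l2norm w ^ 2) :=
      mul_le_mul_of_nonneg_left hr2 (le_of_lt hη)
    have hsq : 0 ≤ l2norm w ^ 2 := sq_nonneg _
    have u1 := (abs_le.1 hδ1).1
    have u2 := (abs_le.1 hδ1).2
    have u3 := (abs_le.1 hδ2).1
    have u4 := (abs_le.1 hδ2).2
    have m1 : 0 ≤ (δ - (1 - η * β)) * l2norm w ^ 2 :=
      mul_nonneg (by linarith) hsq
    have m2 : 0 ≤ (δ + (1 - η * α)) * l2norm w ^ 2 :=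
      mul_nonneg (by linarith) hsq
    have key1 : l2norm w ^ 2 - η * l2norm (A.mulVec w) ^ 2 ≤ δ * l2norm w ^ 2 := by
      have e : (δ - (1 - η * β)) * l2norm w ^ 2
          = δ * l2norm w ^ 2 - l2norm w ^ 2 + η * (β * l2norm w ^ 2) := by ring
      rw [e] at m1
      linarith
    have key2 : -(δ * l2norm w ^ 2) ≤ l2norm w ^ 2 - η * l2norm (A.mulVec w) ^ 2 := by
      have e : (δ + (1 - η * α)) * l2norm w ^ 2
          = δ * l2norm w ^ 2 + l2norm w ^ 2 - η * (α * l2norm w ^ 2) := by ring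
      rw [e] at m2
      linarith
    exact abs_le.2 ⟨key2, key1⟩
  -- feasibility tails
  have hd : ∑ i ∈ Finset.univ \ S, ‖d i‖ ^ p
      ≤ ∑ i ∈ S, ‖d i‖ ^ p :=
    feas_tail p hp0 hp1 S xperp x hsupp hfeas
  have hd' : ∑ i ∈ Finset.univ \ S, ‖d' i‖ ^ p
      ≤ ∑ i ∈ S, ‖d' i‖ ^ p :=
    feas_tail p hp0 hp1 S xperp x' hsupp hfeas'
  obtain ⟨M, T, hM, hTC, hTcard, hTdisj, hTcov, hTtail⟩ :=
    exists_decomp p hp0 hp1 s hs S hScard d hd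
  obtain ⟨M', T', hM', hTC', hTcard', hTdisj', hTcov', hTtail'⟩ :=
    exists_decomp p hp0 hp1 s hs S hScard d' hd'
  set u : ℕ → (Fin n → ℂ) :=
    fun j => if j = 0 then restrict (S ∪ T 0) d else restrict (T j) d with hudef
  set u' : ℕ → (Fin n → ℂ) :=
    fun j => if j = 0 then restrict (S ∪ T' 0) d' else restrict (T' j) d' with hu'def
  -- sum of pieces
  have husum : ∀ (MM : ℕ) (TT : ℕ → Finset (Fin n)) (dd : Fin n → ℂ)
      (uu : ℕ → (Fin n → ℂ)),
      (uu = fun j => if j = 0 then restrict (S ∪ TT 0) dd else restrict (TT j) dd) →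
      0 < MM →
      (∀ j, TT j ⊆ Finset.univ \ S) →
      (∀ j k, j < k → Disjoint (TT j) (TT k)) →
      ((Finset.range MM).biUnion TT = Finset.univ \ S) →
      ∑ j ∈ Finset.range MM, uu j = dd := by
    intro MM TT dd uu huu hMM hTTC hTTdisj hTTcov
    funext i
    rw [Finset.sum_apply]
    by_cases hiS : i ∈ S
    · rw [Finset.sum_eq_single 0]
      · simp [huu, restrict, hiS]
      · intro j _ hj0
        have hnot : i ∉ TT j := fun h => (Finset.mem_sdiff.1 (hTTC j h)).2 hiS
        simp [huu, hj0, restrict, hnot]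
      · intro h
        exact absurd (Finset.mem_range.2 hMM) h
    · have hiC : i ∈ Finset.univ \ S :=
        Finset.mem_sdiff.2 ⟨Finset.mem_univ i, hiS⟩
      rw [← hTTcov] at hiC
      obtain ⟨j1, hj1M, hij1⟩ := Finset.mem_biUnion.1 hiC
      rw [Finset.sum_eq_single j1]
      · by_cases hj10 : j1 = 0
        · subst hj10
          simp [huu, restrict, hij1]
        · simp [huu, hj10, restrict, hij1]
      · intro j _ hjne
        by_cases hj0 : j = 0
        · subst hj0
          have hj1pos : 0 < j1 := Nat.pos_of_ne_zero (fun h => hjne h.symm)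
          have h0 : i ∉ TT 0 :=
            fun h => Finset.disjoint_left.1 (hTTdisj 0 j1 hj1pos) h hij1
          simp [huu, restrict, hiS, h0]
        · have hnot : i ∉ TT j := by
            intro h
            rcases lt_or_gt_of_ne hjne with hlt | hgt
            · exact Finset.disjoint_left.1 (hTTdisj j j1 hlt) h hij1
            · exact Finset.disjoint_left.1 (hTTdisj j1 j hgt) hij1 h
          simp [huu, hj0, restrict, hnot]
      · intro h
        exact absurd hj1M h
  have hdsum : ∑ j ∈ Finset.range M, u j = d :=
    husum M T d u hudef hM hTC hTdisj hTcov
  have hd'sum : ∑ j ∈ Finset.range M', u' j = d' :=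
    husum M' T' d' u' hu'def hM' hTC' hTdisj' hTcov'
  -- support of pieces
  have hsupp_u : ∀ j, ∀ i : Fin n, u j i ≠ 0 → i ∈ S ∪ T j := by
    intro j i hi
    by_cases hj0 : j = 0
    · subst hj0
      simp only [hudef, if_pos rfl, restrict] at hi
      by_cases h : i ∈ S ∪ T 0
      · exact h
      · simp [h] at hi
    · simp only [hudef, if_neg hj0, restrict] at hi
      by_cases h : i ∈ T j
      · exact Finset.mem_union_right _ h
      · simp [h] at hi
  have hsupp_u' : ∀ j, ∀ i : Fin n, u' j i ≠ 0 → i ∈ S ∪ T' j := by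
    intro j i hi
    by_cases hj0 : j = 0
    · subst hj0
      simp only [hu'def, if_pos rfl, restrict] at hi
      by_cases h : i ∈ S ∪ T' 0
      · exact h
      · simp [h] at hi
    · simp only [hu'def, if_neg hj0, restrict] at hi
      by_cases h : i ∈ T' j
      · exact Finset.mem_union_right _ h
      · simp [h] at hi
  -- the expansion
  have hexp : herm d d' - (η:ℂ) * herm (A.mulVec d) (A.mulVec d')
      = ∑ j ∈ Finset.range M, ∑ k ∈ Finset.range M',
        (herm (u j) (u' k)
          - (η:ℂ) * herm (A.mulVec (u j)) (A.mulVec (u' k))) := by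
    have hAd : A.mulVec d = ∑ j ∈ Finset.range M, A.mulVec (u j) := by
      rw [← hdsum]
      have h := map_sum (Matrix.mulVecLin A) u (Finset.range M)
      simp only [Matrix.mulVecLin_apply] at h
      exact h
    have hAd' : A.mulVec d' = ∑ k ∈ Finset.range M', A.mulVec (u' k) := by
      rw [← hd'sum]
      have h := map_sum (Matrix.mulVecLin A) u' (Finset.range M')
      simp only [Matrix.mulVecLin_apply] at h
      exact h
    conv_lhs => rw [hAd, hAd', ← hdsum, ← hd'sum]
    rw [herm_sum_left, herm_sum_left, Finset.mul_sum, ← Finset.sum_sub_distrib]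
    refine Finset.sum_congr rfl fun j _ => ?_
    rw [herm_sum_right, herm_sum_right, Finset.mul_sum, ← Finset.sum_sub_distrib]
  -- per-pair bound, and norm sums
  have hpair : ∀ j k, (herm (u j) (u' k)
      - (η:ℂ) * herm (A.mulVec (u j)) (A.mulVec (u' k))).re
      ≤ δ * l2norm (u j) * l2norm (u' k) := by
    intro j k
    apply bilin_bound A η δ (3 * s) hQ (u j) (u' k) (S ∪ T j ∪ T' k)
    · calc (S ∪ T j ∪ T' k).card ≤ (S ∪ T j).card + (T' k).card :=
          Finset.card_union_le _ _
        _ ≤ S.card + (T j).card + (T' k).card := by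
          have := Finset.card_union_le S (T j)
          omega
        _ ≤ s + s + s := by
          have h1 := hTcard j
          have h2 := hTcard' k
          omega
        _ = 3 * s := by ring
    · intro i hi
      exact Finset.mem_union_left _ (hsupp_u j i hi)
    · intro i hi
      rcases Finset.mem_union.1 (hsupp_u' k i hi) with h | h
      · exact Finset.mem_union_left _ (Finset.mem_union_left _ h)
      · exact Finset.mem_union_right _ h
  have hnorm : ∑ j ∈ Finset.range M, l2norm (u j) ≤ (1 + γ) * l2norm d := by
    have hM1 : M = (M - 1) + 1 := by omega
    rw [hM1, Finset.sum_range_succ']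
    have h0 : l2norm (u 0) ≤ l2norm d := by
      have : u 0 = restrict (S ∪ T 0) d := by simp [hudef]
      rw [this, l2norm_restrict]
      exact sqrt_sum_sq_le _ _
    have htail : ∑ k ∈ Finset.range (M - 1), l2norm (u (k + 1)) ≤ γ * l2norm d := by
      have he : ∀ k, u (k + 1) = restrict (T (k + 1)) d := by
        intro k
        simp [hudef]
      calc ∑ k ∈ Finset.range (M - 1), l2norm (u (k + 1))
          = ∑ k ∈ Finset.range (M - 1), l2norm (restrict (T (k + 1)) d) :=
            Finset.sum_congr rfl fun k _ => by rw [he k]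
        _ ≤ γ * l2norm d := hTtail
    linarith
  have hnorm' : ∑ k ∈ Finset.range M', l2norm (u' k) ≤ (1 + γ) * l2norm d' := by
    have hM1 : M' = (M' - 1) + 1 := by omega
    rw [hM1, Finset.sum_range_succ']
    have h0 : l2norm (u' 0) ≤ l2norm d' := by
      have : u' 0 = restrict (S ∪ T' 0) d' := by simp [hu'def]
      rw [this, l2norm_restrict]
      exact sqrt_sum_sq_le _ _
    have htail : ∑ k ∈ Finset.range (M' - 1), l2norm (u' (k + 1)) ≤ γ * l2norm d' := by
      have he : ∀ k, u' (k + 1) = restrict (T' (k + 1)) d' := by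
        intro k
        simp [hu'def]
      calc ∑ k ∈ Finset.range (M' - 1), l2norm (u' (k + 1))
          = ∑ k ∈ Finset.range (M' - 1), l2norm (restrict (T' (k + 1)) d') :=
            Finset.sum_congr rfl fun k _ => by rw [he k]
        _ ≤ γ * l2norm d' := hTtail'
    linarith
  -- put together
  have hsum_nonneg : 0 ≤ ∑ k ∈ Finset.range M', l2norm (u' k) :=
    Finset.sum_nonneg fun k _ => l2norm_nonneg _
  have hsum_nonneg2 : 0 ≤ ∑ j ∈ Finset.range M, l2norm (u j) :=
    Finset.sum_nonneg fun j _ => l2norm_nonneg _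
  calc (herm d d' - (η:ℂ) * herm (A.mulVec d) (A.mulVec d')).re
      = ∑ j ∈ Finset.range M, ∑ k ∈ Finset.range M',
          (herm (u j) (u' k)
            - (η:ℂ) * herm (A.mulVec (u j)) (A.mulVec (u' k))).re := by
        rw [hexp, Complex.re_sum]
        exact Finset.sum_congr rfl fun j _ => Complex.re_sum _ _
    _ ≤ ∑ j ∈ Finset.range M, ∑ k ∈ Finset.range M',
          δ * l2norm (u j) * l2norm (u' k) :=
        Finset.sum_le_sum fun j _ => Finset.sum_le_sum fun k _ => hpair j k
    _ = δ * ((∑ j ∈ Finset.range M, l2norm (u j))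
          * ∑ k ∈ Finset.range M', l2norm (u' k)) := by
        rw [Finset.sum_mul, Finset.mul_sum]
        refine Finset.sum_congr rfl fun j _ => ?_
        rw [Finset.mul_sum, Finset.mul_sum]
        refine Finset.sum_congr rfl fun k _ => ?_
        ring
    _ ≤ δ * (((1 + γ) * l2norm d) * ((1 + γ) * l2norm d')) := by
        apply mul_le_mul_of_nonneg_left _ hδnn
        exact mul_le_mul hnorm hnorm' hsum_nonneg
          (mul_nonneg (by linarith) (l2norm_nonneg d))
    _ = δ * (1 + γ) ^ 2 * l2norm d * l2norm d' := by ring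
end

section
/- Let p ∈ (0,1], c > 0, let x ∈ ℝⁿ have nonnegative entries, and let x⊥ be a projection of x onto F_p(c) with nonnegative entries. Then there exists λ ≥ 0 such that for every index i in the support of x⊥ one has (x⊥ᵢ)^{1−p}·(xᵢ − x⊥ᵢ) = p·λ. -/
open scoped Classical

theorem lagrange_condition_on_support
    {n : ℕ} (p c : ℝ) (hp0 : 0 < p) (hp1 : p ≤ 1) (hc : 0 < c)
    (x xp : Fin n → ℝ) (hx : ∀ i, 0 ≤ x i) (hxp : ∀ i, 0 ≤ xp i)
    (hproj : IsProj p c (fun i => (x i : ℂ)) (fun i => (xp i : ℂ))) :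
    ∃ lam : ℝ, 0 ≤ lam ∧
      ∀ i : Fin n, xp i ≠ 0 → xp i ^ ((1 : ℝ) - p) * (x i - xp i) = p * lam := by
  classical
  have hp_ne : p ≠ 0 := ne_of_gt hp0
  have hfeas : ∑ i, xp i ^ p ≤ c := by
    have h1 := hproj.1
    simp only [Fball, Set.mem_setOf_eq, Complex.norm_real, Real.norm_eq_abs] at h1
    calc ∑ i, xp i ^ p = ∑ i, |xp i| ^ p :=
          Finset.sum_congr rfl fun i _ => by rw [abs_of_nonneg (hxp i)]
      _ ≤ c := h1
  have hmin : ∀ u : Fin n → ℝ, (∀ k, 0 ≤ u k) → (∑ k, u k ^ p) ≤ c →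
      ∑ k, (x k - xp k) ^ 2 ≤ ∑ k, (x k - u k) ^ 2 := by
    intro u hu hus
    have hmem : (fun i => (u i : ℂ)) ∈ Fball p c := by
      simp only [Fball, Set.mem_setOf_eq, Complex.norm_real, Real.norm_eq_abs]
      calc ∑ i, |u i| ^ p = ∑ i, u i ^ p :=
            Finset.sum_congr rfl fun i _ => by rw [abs_of_nonneg (hu i)]
        _ ≤ c := hus
    have h2 := hproj.2 _ hmem
    have key : ∀ v : Fin n → ℝ,
        l2norm ((fun i => (x i : ℂ)) - fun i => (v i : ℂ))
          = Real.sqrt (∑ i, (x i - v i) ^ 2) := by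
      intro v
      unfold l2norm
      congr 1
      refine Finset.sum_congr rfl fun i _ => ?_
      simp [Pi.sub_apply, ← Complex.ofReal_sub, Complex.norm_real, Real.norm_eq_abs, sq_abs]
    rw [key, key] at h2
    exact (Real.sqrt_le_sqrt_iff (by positivity)).mp h2
  have step1 : ∀ i, xp i ≠ 0 → xp i ≤ x i := by
    intro i hi
    by_contra hlt
    push_neg at hlt
    have hxpi : 0 < xp i := lt_of_le_of_ne (hxp i) (Ne.symm hi)
    set t := min (xp i) (xp i - x i) with ht
    have ht0 : 0 < t := lt_min hxpi (by linarith)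
    have htle : t ≤ xp i := min_le_left _ _
    have htle2 : t ≤ xp i - x i := min_le_right _ _
    set u := Function.update xp i (xp i - t) with hu
    have hui : u i = xp i - t := Function.update_self i _ xp
    have hu0 : ∀ k, 0 ≤ u k := by
      intro k
      by_cases hk : k = i
      · subst hk; rw [hui]; linarith
      · rw [hu, Function.update_of_ne hk]; exact hxp k
    have hus : ∑ k, u k ^ p ≤ c := by
      have hle : ∑ k, u k ^ p ≤ ∑ k, xp k ^ p := by
        refine Finset.sum_le_sum fun k _ => ?_
        by_cases hk : k = i
        · subst hk; rw [hui]
          exact Real.rpow_le_rpow (by linarith) (by linarith) hp0.le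
        · rw [hu, Function.update_of_ne hk]
      linarith
    have h := hmin u hu0 hus
    have hdiff : ∑ k, (x k - u k) ^ 2 - ∑ k, (x k - xp k) ^ 2
        = (x i - u i) ^ 2 - (x i - xp i) ^ 2 := by
      rw [← Finset.sum_sub_distrib]
      refine Finset.sum_eq_single i (fun k _ hk => ?_) (fun h => absurd (Finset.mem_univ i) h)
      rw [hu, Function.update_of_ne hk]; ring
    rw [hui] at hdiff
    nlinarith [h, hdiff]
  have exchange : ∀ i j : Fin n, i ≠ j → xp i ≠ 0 → xp j ≠ 0 →
      xp i ^ ((1 : ℝ) - p) * (x i - xp i) = xp j ^ ((1 : ℝ) - p) * (x j - xp j) := by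
    intro i j hij hi hj
    have hxpi : 0 < xp i := lt_of_le_of_ne (hxp i) (Ne.symm hi)
    have hxpj : 0 < xp j := lt_of_le_of_ne (hxp j) (Ne.symm hj)
    set a := xp i ^ p with ha'
    set b := xp j ^ p with hb'
    have ha : 0 < a := Real.rpow_pos_of_pos hxpi p
    have hb : 0 < b := Real.rpow_pos_of_pos hxpj p
    have hai : a ^ p⁻¹ = xp i := Real.rpow_rpow_inv (hxp i) hp_ne
    have hbj : b ^ p⁻¹ = xp j := Real.rpow_rpow_inv (hxp j) hp_ne
    set φ : ℝ → ℝ := fun t => (x i - (a + t) ^ p⁻¹) ^ 2 + (x j - (b - t) ^ p⁻¹) ^ 2 with hφ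
    have hloc : IsLocalMin φ 0 := by
      have hmem : Set.Ioo (-(min a b)) (min a b) ∈ nhds (0 : ℝ) :=
        Ioo_mem_nhds (by simp [lt_min ha hb]) (lt_min ha hb)
      filter_upwards [hmem] with t ht
      obtain ⟨ht1, ht2⟩ := ht
      have hat : 0 ≤ a + t := by
        have := min_le_left a b; linarith
      have hbt : 0 ≤ b - t := by
        have := min_le_right a b; linarith
      set u : Fin n → ℝ := fun k =>
        if k = i then (a + t) ^ p⁻¹ else if k = j then (b - t) ^ p⁻¹ else xp k with hudef
      have hui : u i = (a + t) ^ p⁻¹ := by simp [hudef]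
      have huj : u j = (b - t) ^ p⁻¹ := by simp [hudef, hij.symm]
      have huk : ∀ k, k ≠ i → k ≠ j → u k = xp k := by
        intro k h1 h2; simp [hudef, h1, h2]
      have hu0 : ∀ k, 0 ≤ u k := by
        intro k
        by_cases h1 : k = i
        · subst h1; rw [hui]; exact Real.rpow_nonneg hat _
        by_cases h2 : k = j
        · subst h2; rw [huj]; exact Real.rpow_nonneg hbt _
        · rw [huk k h1 h2]; exact hxp k
      have pairsum : ∀ f : Fin n → ℝ, (∀ k, k ≠ i → k ≠ j → f k = 0) →
          ∑ k, f k = f i + f j := by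
        intro f hf
        rw [← Finset.sum_subset (Finset.subset_univ ({i, j} : Finset (Fin n)))
            (fun k _ hk => by
              simp only [Finset.mem_insert, Finset.mem_singleton, not_or] at hk
              exact hf k hk.1 hk.2)]
        exact Finset.sum_pair hij
      have hus : ∑ k, u k ^ p ≤ c := by
        have hdiff : ∑ k, (u k ^ p - xp k ^ p) = (u i ^ p - xp i ^ p) + (u j ^ p - xp j ^ p) := by
          refine pairsum _ fun k h1 h2 => ?_
          rw [huk k h1 h2]; ring
        have hip : u i ^ p = a + t := by rw [hui]; exact Real.rpow_inv_rpow hat hp_ne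
        have hjp : u j ^ p = b - t := by rw [huj]; exact Real.rpow_inv_rpow hbt hp_ne
        have : ∑ k, u k ^ p = ∑ k, xp k ^ p := by
          have hsum : ∑ k, u k ^ p - ∑ k, xp k ^ p = 0 := by
            rw [← Finset.sum_sub_distrib, hdiff, hip, hjp, ← ha', ← hb']; ring
          linarith
        linarith
      have h := hmin u hu0 hus
      have hdiff2 : ∑ k, ((x k - u k) ^ 2 - (x k - xp k) ^ 2)
          = ((x i - u i) ^ 2 - (x i - xp i) ^ 2) + ((x j - u j) ^ 2 - (x j - xp j) ^ 2) := by
        refine pairsum _ fun k h1 h2 => ?_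
        rw [huk k h1 h2]; ring
      rw [Finset.sum_sub_distrib] at hdiff2
      have hphi0 : φ 0 = (x i - xp i) ^ 2 + (x j - xp j) ^ 2 := by
        simp only [hφ, add_zero, sub_zero, hai, hbj]
      have hphit : φ t = (x i - u i) ^ 2 + (x j - u j) ^ 2 := by
        rw [hφ, hui, huj]
      rw [hphi0, hphit]
      linarith
    have hA : HasDerivAt (fun t : ℝ => (a + t) ^ p⁻¹) (p⁻¹ * a ^ (p⁻¹ - 1)) 0 := by
      have h1 : HasDerivAt (fun s : ℝ => s ^ p⁻¹) (p⁻¹ * a ^ (p⁻¹ - 1)) a :=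
        Real.hasDerivAt_rpow_const (Or.inl ha.ne')
      have h2 : HasDerivAt (fun t : ℝ => a + t) 1 0 := (hasDerivAt_id 0).const_add a
      have h1' : HasDerivAt (fun s : ℝ => s ^ p⁻¹) (p⁻¹ * a ^ (p⁻¹ - 1)) ((fun t : ℝ => a + t) 0) := by
        simpa using h1
      have := h1'.comp 0 h2
      simpa [Function.comp_def] using this
    have hB : HasDerivAt (fun t : ℝ => (b - t) ^ p⁻¹) (-(p⁻¹ * b ^ (p⁻¹ - 1))) 0 := by
      have h1 : HasDerivAt (fun s : ℝ => s ^ p⁻¹) (p⁻¹ * b ^ (p⁻¹ - 1)) b :=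
        Real.hasDerivAt_rpow_const (Or.inl hb.ne')
      have h2 : HasDerivAt (fun t : ℝ => b - t) (-1) 0 := (hasDerivAt_id 0).const_sub b
      have h1' : HasDerivAt (fun s : ℝ => s ^ p⁻¹) (p⁻¹ * b ^ (p⁻¹ - 1)) ((fun t : ℝ => b - t) 0) := by
        simpa using h1
      have := h1'.comp 0 h2
      simpa [Function.comp_def] using this
    have hf : HasDerivAt (fun t : ℝ => (x i - (a + t) ^ p⁻¹) ^ 2)
        (2 * (x i - a ^ p⁻¹) ^ 1 * (0 - p⁻¹ * a ^ (p⁻¹ - 1))) 0 := by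
      have := ((hasDerivAt_const (0:ℝ) (x i)).sub hA).pow 2
      simpa [Pi.pow_def, Pi.sub_def] using this
    have hg : HasDerivAt (fun t : ℝ => (x j - (b - t) ^ p⁻¹) ^ 2)
        (2 * (x j - b ^ p⁻¹) ^ 1 * (0 - -(p⁻¹ * b ^ (p⁻¹ - 1)))) 0 := by
      have := ((hasDerivAt_const (0:ℝ) (x j)).sub hB).pow 2
      simpa [Pi.pow_def, Pi.sub_def] using this
    have hd : HasDerivAt φ
        (2 * (x i - a ^ p⁻¹) ^ 1 * (0 - p⁻¹ * a ^ (p⁻¹ - 1))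
          + 2 * (x j - b ^ p⁻¹) ^ 1 * (0 - -(p⁻¹ * b ^ (p⁻¹ - 1)))) 0 := by
      simpa [hφ, add_zero, sub_zero, Pi.add_def] using hf.add hg
    have hE : 2 * (x i - a ^ p⁻¹) ^ 1 * (0 - p⁻¹ * a ^ (p⁻¹ - 1))
          + 2 * (x j - b ^ p⁻¹) ^ 1 * (0 - -(p⁻¹ * b ^ (p⁻¹ - 1))) = 0 := by
      rw [← hd.deriv]; exact hloc.deriv_eq_zero
    have hexp : p * (p⁻¹ - 1) = 1 - p := by field_simp
    have hai2 : a ^ (p⁻¹ - 1) = xp i ^ ((1:ℝ) - p) := by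
      rw [ha', ← Real.rpow_mul (hxp i), hexp]
    have hbj2 : b ^ (p⁻¹ - 1) = xp j ^ ((1:ℝ) - p) := by
      rw [hb', ← Real.rpow_mul (hxp j), hexp]
    rw [hai, hbj, hai2, hbj2] at hE
    have hpinv : p * p⁻¹ = 1 := mul_inv_cancel₀ hp_ne
    nlinarith [hE, hpinv, sq_nonneg p]
  by_cases hsupp : ∃ j : Fin n, xp j ≠ 0
  · obtain ⟨j, hj⟩ := hsupp
    refine ⟨xp j ^ ((1:ℝ) - p) * (x j - xp j) / p, ?_, ?_⟩
    · apply div_nonneg _ hp0.le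
      exact mul_nonneg (Real.rpow_nonneg (hxp j) _) (by linarith [step1 j hj])
    · intro i hi
      rcases eq_or_ne i j with rfl | hij
      · field_simp
      · rw [exchange i j hij hi hj]; field_simp
  · push_neg at hsupp
    exact ⟨0, le_refl 0, fun i hi => absurd (hsupp i) hi⟩
end

section
/- Let p ∈ (0,1), λ > 0, set T₀ = (2−p)·(p·(1−p)^{p−1}·λ)^{1/(2−p)}, let T > T₀, and define h_p(t) = t^{1−p}·(T − t) for t > 0. Then the equation h_p(t) = p·λ has exactly two solutions in (0, ∞): a unique t₋ ∈ (0, (1−p)T/(2−p)) and a unique t₊ ∈ ((1−p)T/(2−p), T). -/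
open scoped Classical

theorem shrinkage_equation_two_roots
    (p lam : ℝ) (hp0 : 0 < p) (hp1 : p < 1) (hlam : 0 < lam)
    (T0 T : ℝ)
    (hT0 : T0 = (2 - p) * (p * (1 - p) ^ (p - 1) * lam) ^ (1 / (2 - p)))
    (hT : T0 < T) :
    ∃ tm tp : ℝ,
      0 < tm ∧ tm < (1 - p) * T / (2 - p) ∧
      (1 - p) * T / (2 - p) < tp ∧ tp < T ∧
      tm ^ ((1 : ℝ) - p) * (T - tm) = p * lam ∧
      tp ^ ((1 : ℝ) - p) * (T - tp) = p * lam ∧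
      ∀ t : ℝ, 0 < t → t ^ ((1 : ℝ) - p) * (T - t) = p * lam → t = tm ∨ t = tp := by
  have hq : (0:ℝ) < 1 - p := by linarith
  have h2p : (0:ℝ) < 2 - p := by linarith
  have hB : (0:ℝ) < p * (1 - p) ^ (p - 1) * lam := by
    have := Real.rpow_pos_of_pos hq (p - 1)
    positivity
  have hT0pos : 0 < T0 := by
    rw [hT0]
    have := Real.rpow_pos_of_pos hB (1 / (2 - p))
    positivity
  have hTpos : 0 < T := hT0pos.trans hT
  set M := (1 - p) * T / (2 - p) with hMdef
  have hMpos : 0 < M := by positivity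
  have hMT : M < T := by
    rw [hMdef, div_lt_iff₀ h2p]; nlinarith
  set f : ℝ → ℝ := fun t => t ^ ((1:ℝ) - p) * (T - t) with hfdef
  -- key: p*lam < f M
  have hT0pow : T0 ^ ((2:ℝ) - p) = (2 - p) ^ ((2:ℝ) - p) * (p * (1 - p) ^ (p - 1) * lam) := by
    rw [hT0, Real.mul_rpow h2p.le (Real.rpow_nonneg hB.le _), ← Real.rpow_mul hB.le]
    rw [show 1 / (2 - p) * (2 - p) = 1 by field_simp]
    rw [Real.rpow_one]
  have hfM : f M = (1 - p) ^ ((1:ℝ) - p) * T ^ ((2:ℝ) - p) / (2 - p) ^ ((2:ℝ) - p) := by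
    have hTM : T - M = T / (2 - p) := by
      rw [hMdef]; field_simp; ring
    have hMrw : M ^ ((1:ℝ) - p) = (1 - p) ^ ((1:ℝ) - p) * T ^ ((1:ℝ) - p) / (2 - p) ^ ((1:ℝ) - p) := by
      rw [hMdef, Real.div_rpow (by positivity) h2p.le, Real.mul_rpow hq.le hTpos.le]
    show M ^ ((1:ℝ) - p) * (T - M) = _
    rw [hMrw, hTM]
    have e1 : T ^ ((1:ℝ) - p) * T = T ^ ((2:ℝ) - p) := by
      rw [show (2:ℝ) - p = (1 - p) + 1 by ring, Real.rpow_add_one hTpos.ne']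
    have e2 : (2 - p) ^ ((1:ℝ) - p) * (2 - p) = (2 - p) ^ ((2:ℝ) - p) := by
      rw [← Real.rpow_add_one h2p.ne']
      congr 1
      ring
    field_simp
    rw [← e1, ← e2]
    ring
  have hkey : p * lam < f M := by
    have h1 : T0 ^ ((2:ℝ) - p) < T ^ ((2:ℝ) - p) := Real.rpow_lt_rpow hT0pos.le hT h2p
    rw [hT0pow] at h1
    have h4 : (1 - p) ^ ((1:ℝ) - p) * (1 - p) ^ (p - 1) = 1 := by
      rw [← Real.rpow_add hq, show (1:ℝ) - p + (p - 1) = 0 by ring, Real.rpow_zero]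
    rw [hfM, lt_div_iff₀ (Real.rpow_pos_of_pos h2p _)]
    have hA : (0:ℝ) < (1 - p) ^ ((1:ℝ) - p) := Real.rpow_pos_of_pos hq _
    have h6 := mul_lt_mul_of_pos_left h1 hA
    have h7 : (1 - p) ^ ((1:ℝ) - p) * ((2 - p) ^ ((2:ℝ) - p) * (p * (1 - p) ^ (p - 1) * lam))
        = (2 - p) ^ ((2:ℝ) - p) * (p * lam) := by
      linear_combination (2 - p) ^ ((2:ℝ) - p) * p * lam * h4
    rw [h7] at h6
    linarith
  -- continuity
  have hcont : Continuous f := by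
    exact (Real.continuous_rpow_const hq.le).mul (by continuity)
  -- derivative
  have hderiv : ∀ x : ℝ, 0 < x →
      HasDerivAt f (x ^ (-p) * ((1 - p) * (T - x) - x)) x := by
    intro x hx
    have h1 : HasDerivAt (fun t : ℝ => t ^ ((1:ℝ) - p)) ((1 - p) * x ^ ((1:ℝ) - p - 1)) x :=
      Real.hasDerivAt_rpow_const (Or.inl hx.ne')
    have h2 : HasDerivAt (fun t : ℝ => T - t) (-1) x := by
      simpa using (hasDerivAt_id x).const_sub T
    have h3 := h1.mul h2
    have e1 : (1:ℝ) - p - 1 = -p := by ring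
    have e2 : x ^ ((1:ℝ) - p) = x ^ (-p) * x := by
      rw [show (1:ℝ) - p = -p + 1 by ring, Real.rpow_add_one hx.ne']
    refine h3.congr_deriv ?_
    rw [e1, e2]; ring
  have hf0 : f 0 = 0 := by
    show (0:ℝ) ^ ((1:ℝ) - p) * (T - 0) = 0
    rw [Real.zero_rpow hq.ne']; ring
  have hfT : f T = 0 := by show T ^ ((1:ℝ) - p) * (T - T) = 0; ring
  have hmono : StrictMonoOn f (Set.Icc 0 M) := by
    apply strictMonoOn_of_deriv_pos (convex_Icc 0 M) hcont.continuousOn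
    intro x hx
    rw [interior_Icc] at hx
    rw [(hderiv x hx.1).deriv]
    have : 0 < (1 - p) * (T - x) - x := by
      have := hx.2
      rw [hMdef, lt_div_iff₀ h2p] at this
      nlinarith
    have := Real.rpow_pos_of_pos hx.1 (-p)
    positivity
  have hanti : StrictAntiOn f (Set.Icc M T) := by
    apply strictAntiOn_of_deriv_neg (convex_Icc M T) hcont.continuousOn
    intro x hx
    rw [interior_Icc] at hx
    have hx0 : 0 < x := hMpos.trans hx.1
    rw [(hderiv x hx0).deriv]
    have hneg : (1 - p) * (T - x) - x < 0 := by
      have := hx.1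
      rw [hMdef, div_lt_iff₀ h2p] at this
      nlinarith
    have hpow := Real.rpow_pos_of_pos hx0 (-p)
    nlinarith
  -- roots by IVT
  obtain ⟨tm, htm, htmf⟩ := intermediate_value_Ioo hMpos.le hcont.continuousOn
    (show p * lam ∈ Set.Ioo (f 0) (f M) by rw [hf0]; exact ⟨by positivity, hkey⟩)
  obtain ⟨tp, htp, htpf⟩ := intermediate_value_Ioo' hMT.le hcont.continuousOn
    (show p * lam ∈ Set.Ioo (f T) (f M) by rw [hfT]; exact ⟨by positivity, hkey⟩)
  refine ⟨tm, tp, htm.1, htm.2, htp.1, htp.2, htmf, htpf, ?_⟩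
  intro t ht hteq
  have htfeq : f t = p * lam := hteq
  have htT : t < T := by
    by_contra hcon
    push_neg at hcon
    have h1 := Real.rpow_pos_of_pos ht ((1:ℝ) - p)
    have : f t ≤ 0 := by
      show t ^ ((1:ℝ) - p) * (T - t) ≤ 0
      nlinarith
    nlinarith [mul_pos hp0 hlam]
  have htne : t ≠ M := by
    intro h
    rw [h] at htfeq
    linarith [hkey]
  rcases lt_or_gt_of_ne htne with h | h
  · left
    exact hmono.injOn ⟨ht.le, h.le⟩ ⟨htm.1.le, htm.2.le⟩ (htfeq.trans htmf.symm)
  · right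
    exact hanti.injOn ⟨h.le, htT.le⟩ ⟨htp.1.le, htp.2.le⟩ (htfeq.trans htpf.symm)
end

section
/- Let p ∈ (0,1), λ > 0, and T₀ = (2−p)·(p·(1−p)^{p−1}·λ)^{1/(2−p)}. For T > T₀ let t₋(T) ∈ (0, (1−p)T/(2−p)) and t₊(T) ∈ ((1−p)T/(2−p), T) be the two solutions of t^{1−p}(T − t) = p·λ. Then for any T₀ < T < T', one has t₋(T') < t₋(T) and t₊(T) < t₊(T'); that is, t₋ is strictly decreasing and t₊ is strictly increasing in T. Moreover, as T decreases to T₀ both t₋(T) and t₊(T) tend to the common value (1−p)T₀/(2−p). -/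
open scoped Classical

lemma fderiv_aux (p T t : ℝ) (ht : 0 < t) :
    HasDerivAt (fun s : ℝ => s ^ ((1:ℝ) - p) * (T - s))
      (t ^ (-p) * ((1 - p) * T - (2 - p) * t)) t := by
  have h1 : HasDerivAt (fun s : ℝ => s ^ ((1:ℝ) - p)) (((1:ℝ) - p) * t ^ ((1:ℝ) - p - 1)) t :=
    Real.hasDerivAt_rpow_const (Or.inl ht.ne')
  have h2 : HasDerivAt (fun s : ℝ => T - s) (-1) t := (hasDerivAt_id t).const_sub T
  have h := h1.mul h2
  refine h.congr_deriv ?_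
  have e1 : (1:ℝ) - p - 1 = -p := by ring
  have e2 : t ^ ((1:ℝ) - p) = t ^ (-p) * t := by
    have e : (1:ℝ) - p = -p + 1 := by ring
    rw [e, Real.rpow_add ht, Real.rpow_one]
  rw [e1, e2]; ring

lemma fcont_aux (p T : ℝ) (hp1 : p < 1) :
    Continuous (fun t : ℝ => t ^ ((1:ℝ) - p) * (T - t)) :=
  (continuous_id.rpow_const fun _ => Or.inr (by linarith)).mul
    (continuous_const.sub continuous_id)

lemma mono_aux (p T : ℝ) (hp0 : 0 < p) (hp1 : p < 1) :
    StrictMonoOn (fun t : ℝ => t ^ ((1:ℝ) - p) * (T - t))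
      (Set.Icc 0 ((1 - p) * T / (2 - p))) := by
  have h2p : (0:ℝ) < 2 - p := by linarith
  apply strictMonoOn_of_deriv_pos (convex_Icc _ _) (fcont_aux p T hp1).continuousOn
  intro x hx
  rw [interior_Icc] at hx
  rw [(fderiv_aux p T x hx.1).deriv]
  have h1 : (0:ℝ) < x ^ (-p) := Real.rpow_pos_of_pos hx.1 _
  have h2 : x * (2 - p) < (1 - p) * T := (lt_div_iff₀ h2p).mp hx.2
  have h3 : 0 < (1 - p) * T - (2 - p) * x := by nlinarith
  exact mul_pos h1 h3

lemma anti_aux (p T : ℝ) (hp0 : 0 < p) (hp1 : p < 1) (hT : 0 < T) :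
    StrictAntiOn (fun t : ℝ => t ^ ((1:ℝ) - p) * (T - t))
      (Set.Ici ((1 - p) * T / (2 - p))) := by
  have h2p : (0:ℝ) < 2 - p := by linarith
  have h1p : (0:ℝ) < 1 - p := by linarith
  have hst : (0:ℝ) < (1 - p) * T / (2 - p) := by positivity
  apply strictAntiOn_of_deriv_neg (convex_Ici _) (fcont_aux p T hp1).continuousOn
  intro x hx
  rw [interior_Ici] at hx
  have hx0 : 0 < x := hst.trans hx
  rw [(fderiv_aux p T x hx0).deriv]
  have h1 : (0:ℝ) < x ^ (-p) := Real.rpow_pos_of_pos hx0 _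
  have h2 : (1 - p) * T < x * (2 - p) := (div_lt_iff₀ h2p).mp hx
  have h3 : (1 - p) * T - (2 - p) * x < 0 := by nlinarith
  exact mul_neg_of_pos_of_neg h1 h3

lemma hval_aux (p lam : ℝ) (hp0 : 0 < p) (hp1 : p < 1) (hlam : 0 < lam)
    (T0 : ℝ) (hT0 : T0 = (2 - p) * (p * (1 - p) ^ (p - 1) * lam) ^ (1 / (2 - p))) :
    ((1 - p) * T0 / (2 - p)) ^ ((1:ℝ) - p) * (T0 - (1 - p) * T0 / (2 - p)) = p * lam := by
  have h2p : (0:ℝ) < 2 - p := by linarith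
  have h1p : (0:ℝ) < 1 - p := by linarith
  set b : ℝ := p * (1 - p) ^ (p - 1) * lam with hb
  have hbpos : 0 < b := by
    have := Real.rpow_pos_of_pos h1p (p - 1)
    positivity
  set c : ℝ := b ^ (1 / (2 - p)) with hc
  have hcpos : 0 < c := Real.rpow_pos_of_pos hbpos _
  have e1 : (1 - p) * T0 / (2 - p) = (1 - p) * c := by
    rw [hT0]; field_simp
  have e2 : T0 - (1 - p) * T0 / (2 - p) = c := by
    rw [hT0]; field_simp; ring
  rw [e2, e1]
  rw [Real.mul_rpow h1p.le hcpos.le]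
  have e3 : (1 - p) ^ ((1:ℝ) - p) * c ^ ((1:ℝ) - p) * c = (1 - p) ^ ((1:ℝ) - p) * c ^ ((2:ℝ) - p) := by
    rw [mul_assoc]
    congr 1
    nth_rewrite 2 [← Real.rpow_one c]
    rw [← Real.rpow_add hcpos]; congr 1; ring
  rw [e3]
  have e4 : c ^ ((2:ℝ) - p) = b := by
    rw [hc, ← Real.rpow_mul hbpos.le]
    rw [one_div, inv_mul_cancel₀ h2p.ne', Real.rpow_one]
  rw [e4, hb]
  have e5 : (1 - p) ^ ((1:ℝ) - p) * (p * (1 - p) ^ (p - 1) * lam)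
      = ((1 - p) ^ ((1:ℝ) - p) * (1 - p) ^ (p - 1)) * (p * lam) := by ring
  rw [e5, ← Real.rpow_add h1p]
  norm_num

theorem shrinkage_roots_monotone
    (p lam : ℝ) (hp0 : 0 < p) (hp1 : p < 1) (hlam : 0 < lam)
    (T0 : ℝ)
    (hT0 : T0 = (2 - p) * (p * (1 - p) ^ (p - 1) * lam) ^ (1 / (2 - p)))
    (tm tp : ℝ → ℝ)
    (htm : ∀ T : ℝ, T0 < T →
      0 < tm T ∧ tm T < (1 - p) * T / (2 - p) ∧
      tm T ^ ((1 : ℝ) - p) * (T - tm T) = p * lam)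
    (htp : ∀ T : ℝ, T0 < T →
      (1 - p) * T / (2 - p) < tp T ∧ tp T < T ∧
      tp T ^ ((1 : ℝ) - p) * (T - tp T) = p * lam) :
    (∀ T T' : ℝ, T0 < T → T < T' → tm T' < tm T) ∧
    (∀ T T' : ℝ, T0 < T → T < T' → tp T < tp T') ∧
    Filter.Tendsto tm (nhdsWithin T0 (Set.Ioi T0)) (nhds ((1 - p) * T0 / (2 - p))) ∧
    Filter.Tendsto tp (nhdsWithin T0 (Set.Ioi T0)) (nhds ((1 - p) * T0 / (2 - p))) := by
  have h2p : (0:ℝ) < 2 - p := by linarith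
  have h1p : (0:ℝ) < 1 - p := by linarith
  have hT0pos : 0 < T0 := by
    rw [hT0]
    have hbpos : 0 < p * (1 - p) ^ (p - 1) * lam := by
      have := Real.rpow_pos_of_pos h1p (p - 1); positivity
    have := Real.rpow_pos_of_pos hbpos (1 / (2 - p))
    positivity
  set f : ℝ → ℝ → ℝ := fun T t => t ^ ((1:ℝ) - p) * (T - t) with hf
  set L : ℝ := (1 - p) * T0 / (2 - p) with hL
  have hLpos : 0 < L := by rw [hL]; positivity
  have hstmono : ∀ T T' : ℝ, T < T' → (1 - p) * T / (2 - p) < (1 - p) * T' / (2 - p) := by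
    intro T T' h
    apply div_lt_div_of_pos_right _ h2p
    · exact mul_lt_mul_of_pos_left h h1p
  have hvL : f T0 L = p * lam := hval_aux p lam hp0 hp1 hlam T0 hT0
  have hplam : 0 < p * lam := by positivity
  constructor
  · -- tm strictly decreasing
    intro T T' hT hTT'
    by_contra hcon
    push_neg at hcon
    obtain ⟨hm1, hm2, hm3⟩ := htm T hT
    obtain ⟨hm1', hm2', hm3'⟩ := htm T' (hT.trans hTT')
    have hmemT : tm T ∈ Set.Icc 0 ((1 - p) * T' / (2 - p)) :=
      ⟨hm1.le, (hm2.trans (hstmono T T' hTT')).le⟩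
    have hmemT' : tm T' ∈ Set.Icc 0 ((1 - p) * T' / (2 - p)) := ⟨hm1'.le, hm2'.le⟩
    have h1 : f T' (tm T) ≤ f T' (tm T') :=
      (mono_aux p T' hp0 hp1).monotoneOn hmemT hmemT' hcon
    have h2 : p * lam < f T' (tm T) := by
      have : f T (tm T) < f T' (tm T) := by
        have hpow : 0 < tm T ^ ((1:ℝ) - p) := Real.rpow_pos_of_pos hm1 _
        simp only [hf]
        exact mul_lt_mul_of_pos_left (by linarith) hpow
      rw [← hm3]; exact this
    rw [show f T' (tm T') = p * lam from hm3'] at h1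
    linarith
  constructor
  · -- tp strictly increasing
    intro T T' hT hTT'
    by_contra hcon
    push_neg at hcon
    obtain ⟨hp1', hp2', hp3'⟩ := htp T' (hT.trans hTT')
    obtain ⟨hq1, hq2, hq3⟩ := htp T hT
    have hTpos : 0 < T := hT0pos.trans hT
    have hstT : 0 < (1 - p) * T / (2 - p) := by positivity
    have hmemT' : tp T' ∈ Set.Ici ((1 - p) * T / (2 - p)) :=
      ((hstmono T T' hTT').trans hp1').le
    have hmemT : tp T ∈ Set.Ici ((1 - p) * T / (2 - p)) := hq1.le
    have h1 : f T (tp T) ≤ f T (tp T') :=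
      (anti_aux p T hp0 hp1 hTpos).antitoneOn hmemT' hmemT hcon
    have h2 : f T (tp T') < p * lam := by
      have hT'pos : 0 < T' := hT0pos.trans (hT.trans hTT')
      have hpos' : 0 < tp T' := lt_trans (by positivity) hp1'
      have hpow : 0 < tp T' ^ ((1:ℝ) - p) := Real.rpow_pos_of_pos hpos' _
      have : f T (tp T') < f T' (tp T') := by
        simp only [hf]
        exact mul_lt_mul_of_pos_left (by linarith) hpow
      rw [← hp3']; exact this
    rw [show f T (tp T) = p * lam from hq3] at h1
    linarith
  constructor
  · -- tm tends to L
    rw [Metric.tendsto_nhdsWithin_nhds]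
    intro ε hε
    set a : ℝ := max (L - ε) (L / 2) with ha
    have ha0 : 0 < a := lt_max_of_lt_right (by linarith)
    have haL : a < L := max_lt (by linarith) (by linarith)
    have hfa : f T0 a < p * lam := by
      rw [← hvL]
      exact mono_aux p T0 hp0 hp1 ⟨ha0.le, haL.le⟩ ⟨hLpos.le, le_rfl⟩ haL
    set m : ℝ := p * lam - f T0 a with hm
    have hm0 : 0 < m := by linarith
    have hapow : 0 < a ^ ((1:ℝ) - p) := Real.rpow_pos_of_pos ha0 _
    refine ⟨min (ε * (2 - p) / (1 - p)) (m / a ^ ((1:ℝ) - p)), by positivity, ?_⟩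
    intro T hTmem hdist
    rw [Real.dist_eq] at hdist ⊢
    have hTgt : T0 < T := hTmem
    have hdT : T - T0 < min (ε * (2 - p) / (1 - p)) (m / a ^ ((1:ℝ) - p)) := by
      rw [abs_of_pos (by linarith)] at hdist; exact hdist
    have hd1 : T - T0 < ε * (2 - p) / (1 - p) := lt_of_lt_of_le hdT (min_le_left _ _)
    have hd2 : T - T0 < m / a ^ ((1:ℝ) - p) := lt_of_lt_of_le hdT (min_le_right _ _)
    obtain ⟨hm1, hm2, hm3⟩ := htm T hTgt
    have hub : tm T < L + ε := by
      have h4 : (T - T0) * (1 - p) < ε * (2 - p) := (lt_div_iff₀ h1p).mp hd1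
      have h5 : (1 - p) * T / (2 - p) - L = (1 - p) * (T - T0) / (2 - p) := by
        rw [hL]; ring
      have h6 : (1 - p) * (T - T0) / (2 - p) < ε := (div_lt_iff₀ h2p).mpr (by linarith [mul_comm (T - T0) (1 - p), mul_comm ε (2 - p)])
      linarith [hm2]
    have hlb : L - ε < tm T := by
      rcases lt_or_ge a (tm T) with h | h
      · have : L - ε ≤ a := le_max_left _ _
        linarith
      · exfalso
        have hmemTm : tm T ∈ Set.Icc 0 ((1 - p) * T / (2 - p)) := ⟨hm1.le, hm2.le⟩
        have hmema : a ∈ Set.Icc 0 ((1 - p) * T / (2 - p)) :=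
          ⟨ha0.le, (haL.trans (hstmono T0 T hTgt)).le⟩
        have h1 : f T (tm T) ≤ f T a :=
          (mono_aux p T hp0 hp1).monotoneOn hmemTm hmema h
        have h2 : f T a < p * lam := by
          have e : f T a = f T0 a + a ^ ((1:ℝ) - p) * (T - T0) := by
            simp only [hf]; ring
          have h7 : a ^ ((1:ℝ) - p) * (T - T0) < m := by
            have h8 := (lt_div_iff₀ hapow).mp hd2
            rw [mul_comm]; exact h8
          rw [e]; linarith
        rw [show f T (tm T) = p * lam from hm3] at h1
        linarith
    rw [abs_lt]; constructor <;> linarith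
  · -- tp tends to L
    rw [Metric.tendsto_nhdsWithin_nhds]
    intro ε hε
    set b : ℝ := L + ε with hb
    have hbL : L < b := by linarith
    have hb0 : 0 < b := by linarith
    have hfb : f T0 b < p * lam := by
      rw [← hvL]
      exact anti_aux p T0 hp0 hp1 hT0pos (le_refl L) hbL.le hbL
    set m : ℝ := p * lam - f T0 b with hm
    have hm0 : 0 < m := by linarith
    have hbpow : 0 < b ^ ((1:ℝ) - p) := Real.rpow_pos_of_pos hb0 _
    refine ⟨min (ε * (2 - p) / (1 - p)) (m / b ^ ((1:ℝ) - p)), by positivity, ?_⟩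
    intro T hTmem hdist
    rw [Real.dist_eq] at hdist ⊢
    have hTgt : T0 < T := hTmem
    have hdT : T - T0 < min (ε * (2 - p) / (1 - p)) (m / b ^ ((1:ℝ) - p)) := by
      rw [abs_of_pos (by linarith)] at hdist; exact hdist
    have hd1 : T - T0 < ε * (2 - p) / (1 - p) := lt_of_lt_of_le hdT (min_le_left _ _)
    have hd2 : T - T0 < m / b ^ ((1:ℝ) - p) := lt_of_lt_of_le hdT (min_le_right _ _)
    obtain ⟨hq1, hq2, hq3⟩ := htp T hTgt
    have hstTb : (1 - p) * T / (2 - p) < b := by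
      have h4 : (T - T0) * (1 - p) < ε * (2 - p) := (lt_div_iff₀ h1p).mp hd1
      have h5 : (1 - p) * T / (2 - p) - L = (1 - p) * (T - T0) / (2 - p) := by
        rw [hL]; ring
      have h6 : (1 - p) * (T - T0) / (2 - p) < ε := (div_lt_iff₀ h2p).mpr (by linarith [mul_comm (T - T0) (1 - p), mul_comm ε (2 - p)])
      linarith
    have hlb : L - ε < tp T := by
      have : L < (1 - p) * T / (2 - p) := hstmono T0 T hTgt
      linarith
    have hub : tp T < L + ε := by
      by_contra hcon
      push_neg at hcon
      rw [← hb] at hcon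
      have hTpos : 0 < T := hT0pos.trans hTgt
      have hmemb : b ∈ Set.Ici ((1 - p) * T / (2 - p)) := hstTb.le
      have hmemtp : tp T ∈ Set.Ici ((1 - p) * T / (2 - p)) := hq1.le
      have h1 : f T (tp T) ≤ f T b :=
        (anti_aux p T hp0 hp1 hTpos).antitoneOn hmemb hmemtp hcon
      have h2 : f T b < p * lam := by
        have e : f T b = f T0 b + b ^ ((1:ℝ) - p) * (T - T0) := by
          simp only [hf]; ring
        have h7 : b ^ ((1:ℝ) - p) * (T - T0) < m := by
          have h8 := (lt_div_iff₀ hbpow).mp hd2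
          rw [mul_comm]; exact h8
        rw [e]; linarith
      rw [show f T (tp T) = p * lam from hq3] at h1
      linarith
    rw [abs_lt]; constructor <;> linarith
end

section
/- Let p ∈ [0,1], c ≥ 0, let x ∈ ℝⁿ have nonnegative entries, and suppose xᵢ = x_j > 0 for two distinct indices i ≠ j. Let x⊥ be a projection of x onto F_p(c) with nonnegative entries (for p = 0 interpret F_0(c) as the set of vectors with at most c nonzero entries, c a nonnegative integer). If x⊥ᵢ = x⊥_j > 0, then x⊥ᵢ ≥ ((1−p)/(2−p))·xᵢ. -/
open scoped Classical

noncomputable def FballGen {n : ℕ} (p c : ℝ) : Set (Fin n → ℂ) :=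
  if p = 0 then {x | ((Finset.univ.filter fun i => x i ≠ 0).card : ℝ) ≤ c}
  else {x | ∑ i, ‖x i‖ ^ p ≤ c}

def IsProjGen {n : ℕ} (p c : ℝ) (x xp : Fin n → ℂ) : Prop :=
  xp ∈ FballGen p c ∧ ∀ u ∈ FballGen p c, l2norm (x - xp) ≤ l2norm (x - u)

section AuxAnalysis

open Set

private lemma rpow_mvt_upper' {p u v : ℝ} (hp : 0 < p) (hp1 : p < 1) (hu : 0 < u) (huv : u < v) :
    v ^ p - u ^ p ≤ p * u ^ (p - 1) * (v - u) := by
  obtain ⟨ξ, hξ, hslope⟩ := exists_hasDerivAt_eq_slope (fun t => t ^ p)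
      (fun t => p * t ^ (p - 1)) huv
      (fun t ht => (Real.continuousAt_rpow_const t p
        (Or.inl (by rcases ht with ⟨h1, _⟩; exact (lt_of_lt_of_le hu h1).ne'))).continuousWithinAt)
      (fun t ht => by
        have ht0 : t ≠ 0 := (lt_trans hu ht.1).ne'
        simpa [mul_comm] using Real.hasDerivAt_rpow_const (p := p) (Or.inl ht0))
  have hξu : u < ξ := hξ.1
  have hξ0 : 0 < ξ := lt_trans hu hξu
  have hle : ξ ^ (p - 1) ≤ u ^ (p - 1) :=
    Real.rpow_le_rpow_of_nonpos hu hξu.le (by linarith)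
  rw [eq_div_iff (sub_ne_zero.mpr huv.ne')] at hslope
  have hvu : 0 ≤ v - u := by linarith
  nlinarith [mul_le_mul_of_nonneg_right hle hvu, hp.le,
    mul_le_mul_of_nonneg_left (mul_le_mul_of_nonneg_right hle hvu) hp.le]

private lemma rpow_slope_lower' {p u v M : ℝ} (hp : 0 < p) (hp1 : p < 1) (hu : 0 < u)
    (huv : u < v) (hvM : v ≤ M) :
    (1 - p) * M ^ (p - 2) * (v - u) ≤ u ^ (p - 1) - v ^ (p - 1) := by
  obtain ⟨ξ, hξ, hslope⟩ := exists_hasDerivAt_eq_slope (fun t => t ^ (p - 1))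
      (fun t => (p - 1) * t ^ (p - 2)) huv
      (fun t ht => (Real.continuousAt_rpow_const t (p - 1)
        (Or.inl (lt_of_lt_of_le hu ht.1).ne')).continuousWithinAt)
      (fun t ht => by
        have ht0 : t ≠ 0 := (lt_trans hu ht.1).ne'
        simpa [mul_comm, show p - 1 - 1 = p - 2 by ring] using
          Real.hasDerivAt_rpow_const (p := p - 1) (Or.inl ht0))
  have hξ0 : 0 < ξ := lt_trans hu hξ.1
  have hle : M ^ (p - 2) ≤ ξ ^ (p - 2) :=
    Real.rpow_le_rpow_of_nonpos hξ0 (le_trans hξ.2.le hvM) (by linarith)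
  rw [eq_div_iff (sub_ne_zero.mpr huv.ne')] at hslope
  have hvu : 0 ≤ v - u := by linarith
  nlinarith [mul_le_mul_of_nonneg_right hle hvu,
    mul_le_mul_of_nonneg_left (mul_le_mul_of_nonneg_right hle hvu) (by linarith : (0:ℝ) ≤ 1 - p)]

private lemma key_gap' {p b δ : ℝ} (hp : 0 < p) (hp1 : p < 1) (hb : 0 < b) (hδ : 0 < δ)
    (hδb : δ < b) :
    p * (1 - p) * (b + δ) ^ (p - 2) * δ ^ 2 ≤ 2 * b ^ p - (b - δ) ^ p - (b + δ) ^ p := by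
  set K : ℝ := p * (1 - p) * (b + δ) ^ (p - 2) with hK
  have hKpos : 0 < K := by
    apply mul_pos (mul_pos hp (by linarith))
    exact Real.rpow_pos_of_pos (by linarith) _
  set ψ : ℝ → ℝ := fun s => 2 * b ^ p - (b - s) ^ p - (b + s) ^ p - K * s ^ 2 with hψ
  have hmono : MonotoneOn ψ (Icc 0 δ) := by
    apply monotoneOn_of_hasDerivWithinAt_nonneg (convex_Icc 0 δ)
      (f' := fun s => p * (b - s) ^ (p - 1) - p * (b + s) ^ (p - 1) - 2 * K * s)
    · intro s hs
      have h1 : b - s ≠ 0 := by rcases hs with ⟨h1, h2⟩; nlinarith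
      have h2 : b + s ≠ 0 := by rcases hs with ⟨h1, h2⟩; nlinarith
      apply ContinuousWithinAt.sub
      apply ContinuousWithinAt.sub
      apply ContinuousWithinAt.sub
      · exact continuousWithinAt_const
      · exact ((continuous_const.sub continuous_id).continuousAt.rpow_const
          (Or.inl h1)).continuousWithinAt
      · exact ((continuous_const.add continuous_id).continuousAt.rpow_const
          (Or.inl h2)).continuousWithinAt
      · exact (continuous_const.mul (continuous_pow 2)).continuousWithinAt
    · intro s hs
      rw [interior_Icc] at hs
      have h1 : b - s ≠ 0 := by rcases hs with ⟨h1, h2⟩; nlinarith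
      have h2 : b + s ≠ 0 := by rcases hs with ⟨h1, h2⟩; nlinarith
      have d1 : HasDerivAt (fun s : ℝ => (b - s) ^ p) (p * (b - s) ^ (p - 1) * (-1)) s := by
        have := (Real.hasDerivAt_rpow_const (x := b - s) (p := p) (Or.inl h1)).comp s
          ((hasDerivAt_id s).const_sub b)
        simpa [Function.comp_def] using this
      have d2 : HasDerivAt (fun s : ℝ => (b + s) ^ p) (p * (b + s) ^ (p - 1) * 1) s := by
        have := (Real.hasDerivAt_rpow_const (x := b + s) (p := p) (Or.inl h2)).comp s
          ((hasDerivAt_id s).const_add b)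
        simpa [Function.comp_def] using this
      have d3 : HasDerivAt (fun s : ℝ => K * s ^ 2) (K * (2 * s)) s := by
        simpa using ((hasDerivAt_pow 2 s).const_mul K)
      have := (((hasDerivAt_const s (2 * b ^ p)).sub d1).sub d2).sub d3
      apply this.hasDerivWithinAt.congr_deriv
      ring
    · intro s hs
      rw [interior_Icc] at hs
      rcases hs with ⟨hs0, hsδ⟩
      have hkey := rpow_slope_lower' hp hp1 (by linarith : (0:ℝ) < b - s)
        (by linarith : b - s < b + s) (by linarith : b + s ≤ b + δ)
      have : (1 - p) * (b + δ) ^ (p - 2) * (b + s - (b - s)) =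
          (1 - p) * (b + δ) ^ (p - 2) * (2 * s) := by ring
      rw [this] at hkey
      nlinarith [mul_le_mul_of_nonneg_left hkey hp.le]
  have h0 : ψ 0 = 0 := by simp [hψ]; ring
  have hδmem : δ ∈ Icc 0 δ := ⟨hδ.le, le_refl δ⟩
  have h0mem : (0:ℝ) ∈ Icc 0 δ := ⟨le_refl 0, hδ.le⟩
  have := hmono h0mem hδmem hδ.le
  rw [h0] at this
  simp only [hψ] at this
  nlinarith [this]

private lemma feas_bump' {p b δ : ℝ} (hp : 0 < p) (hp1 : p < 1) (hb : 0 < b) (hδ : 0 < δ)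
    (hδb : δ < b) :
    (b + (δ + (1 - p) * δ ^ 2 / (b + δ))) ^ p + (b - δ) ^ p ≤ 2 * b ^ p := by
  set η : ℝ := (1 - p) * δ ^ 2 / (b + δ) with hη
  have hbδ : 0 < b + δ := by linarith
  have hηpos : 0 < η := by
    exact div_pos (mul_pos (by linarith) (by positivity)) hbδ
  have hA := rpow_mvt_upper' hp hp1 hbδ (by linarith : b + δ < b + δ + η)
  have hmul : p * (b + δ) ^ (p - 1) * (b + δ + η - (b + δ)) =
      p * (1 - p) * (b + δ) ^ (p - 2) * δ ^ 2 := by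
    have h1 : (b + δ) ^ (p - 1) = (b + δ) ^ (p - 2) * (b + δ) := by
      rw [show p - 1 = p - 2 + 1 by ring, Real.rpow_add hbδ, Real.rpow_one]
    rw [h1]
    rw [hη]
    field_simp
    ring
  rw [hmul] at hA
  have hG := key_gap' hp hp1 hb hδ hδb
  have : b + (δ + η) = b + δ + η := by ring
  rw [this]
  linarith

private lemma sum_split' {n : ℕ} (i j : Fin n) (hij : i ≠ j) (f : Fin n → ℝ) :
    ∑ t, f t = f i + f j + ∑ t ∈ (Finset.univ.erase i).erase j, f t := by
  have h1 : ∑ t, f t = f i + ∑ t ∈ Finset.univ.erase i, f t :=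
    (Finset.add_sum_erase _ f (Finset.mem_univ i)).symm
  have hj : j ∈ Finset.univ.erase i := Finset.mem_erase.mpr ⟨Ne.symm hij, Finset.mem_univ j⟩
  have h2 : ∑ t ∈ Finset.univ.erase i, f t = f j + ∑ t ∈ (Finset.univ.erase i).erase j, f t :=
    (Finset.add_sum_erase _ f hj).symm
  rw [h1, h2, add_assoc]

private lemma proj_pair_ineq' {n : ℕ} {p c : ℝ} {x xp : Fin n → ℝ}
    (hproj : IsProjGen p c (fun t => (x t : ℂ)) (fun t => (xp t : ℂ)))
    {i j : Fin n} (hij : i ≠ j) (ui uj : ℝ)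
    (hu : (fun t => if t = i then ((ui : ℝ) : ℂ) else if t = j then ((uj : ℝ) : ℂ)
      else ((xp t : ℝ) : ℂ)) ∈ FballGen p c) :
    (x i - xp i) ^ 2 + (x j - xp j) ^ 2 ≤ (x i - ui) ^ 2 + (x j - uj) ^ 2 := by
  set u : Fin n → ℂ := fun t => if t = i then ((ui : ℝ) : ℂ) else if t = j then ((uj : ℝ) : ℂ)
      else ((xp t : ℝ) : ℂ) with hudef
  have h := hproj.2 u hu
  unfold l2norm at h
  have habs : ∀ (y z : ℝ), ‖(y : ℂ) - (z : ℂ)‖ ^ 2 = (y - z) ^ 2 := by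
    intro y z
    rw [← Complex.ofReal_sub, Complex.norm_real, Real.norm_eq_abs, sq_abs]
  have hA : (∑ t, ‖((fun t => (x t : ℂ)) - fun t => (xp t : ℂ)) t‖ ^ 2)
      ≤ ∑ t, ‖((fun t => (x t : ℂ)) - u) t‖ ^ 2 := by
    have h1 : (0:ℝ) ≤ ∑ t, ‖((fun t => (x t : ℂ)) - fun t => (xp t : ℂ)) t‖ ^ 2 :=
      Finset.sum_nonneg fun t _ => sq_nonneg _
    have h2 : (0:ℝ) ≤ ∑ t, ‖((fun t => (x t : ℂ)) - u) t‖ ^ 2 :=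
      Finset.sum_nonneg fun t _ => sq_nonneg _
    calc (∑ t, ‖((fun t => (x t : ℂ)) - fun t => (xp t : ℂ)) t‖ ^ 2)
        = Real.sqrt _ ^ 2 := (Real.sq_sqrt h1).symm
      _ ≤ Real.sqrt _ ^ 2 := by
          apply pow_le_pow_left₀ (Real.sqrt_nonneg _) h
      _ = _ := Real.sq_sqrt h2
  rw [sum_split' i j hij, sum_split' i j hij] at hA
  have hrest : ∑ t ∈ (Finset.univ.erase i).erase j,
        ‖((fun t => (x t : ℂ)) - u) t‖ ^ 2
      = ∑ t ∈ (Finset.univ.erase i).erase j,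
        ‖((fun t => (x t : ℂ)) - fun t => (xp t : ℂ)) t‖ ^ 2 := by
    apply Finset.sum_congr rfl
    intro t ht
    have hti : t ≠ i := (Finset.mem_erase.mp (Finset.mem_erase.mp ht).2).1
    have htj : t ≠ j := (Finset.mem_erase.mp ht).1
    simp only [Pi.sub_apply, hudef, if_neg hti, if_neg htj]
  rw [hrest] at hA
  have e1 : u i = ((ui : ℝ) : ℂ) := by simp [hudef]
  have e2 : u j = ((uj : ℝ) : ℂ) := by simp [hudef, Ne.symm hij]
  simp only [Pi.sub_apply] at hA
  rw [e1, e2] at hA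
  simp only [habs] at hA
  linarith

end AuxAnalysis

theorem equal_entries_projection_lower_bound
    {n : ℕ} (p c : ℝ) (hp0 : 0 ≤ p) (hp1 : p ≤ 1) (hc : 0 ≤ c)
    (hcint : p = 0 → ∃ k : ℕ, c = (k : ℝ))
    (x xp : Fin n → ℝ) (hx : ∀ i, 0 ≤ x i) (hxp : ∀ i, 0 ≤ xp i)
    (hproj : IsProjGen p c (fun t => (x t : ℂ)) (fun t => (xp t : ℂ)))
    (i j : Fin n) (hij : i ≠ j) (hxeq : x i = x j) (hxpos : 0 < x i)
    (hxpeq : xp i = xp j) (hxppos : 0 < xp i) :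
    (1 - p) / (2 - p) * x i ≤ xp i := by
  by_cases hp : p = 0
  · -- p = 0 case: the projection must match x at i and j exactly
    subst hp
    have hu : (fun t => if t = i then ((x i : ℝ) : ℂ) else if t = j then ((x i : ℝ) : ℂ)
        else ((xp t : ℝ) : ℂ)) ∈ FballGen (0:ℝ) c := by
      have hmem := hproj.1
      have hdef : (FballGen (0:ℝ) c : Set (Fin n → ℂ)) =
          {v : Fin n → ℂ | ((Finset.univ.filter fun t => v t ≠ 0).card : ℝ) ≤ c} := by
          unfold FballGen; exact if_pos rfl
      rw [hdef] at hmem ⊢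
      simp only [Set.mem_setOf_eq] at hmem ⊢
      have hfilter : (Finset.univ.filter fun t =>
            (if t = i then ((x i : ℝ) : ℂ) else if t = j then ((x i : ℝ) : ℂ)
              else ((xp t : ℝ) : ℂ)) ≠ 0)
          = Finset.univ.filter fun t => ((xp t : ℝ) : ℂ) ≠ 0 := by
        apply Finset.filter_congr
        intro t _
        by_cases hti : t = i
        · subst hti
          simp only [if_pos rfl]
          constructor
          · intro _; exact Complex.ofReal_ne_zero.mpr hxppos.ne'
          · intro _; exact Complex.ofReal_ne_zero.mpr hxpos.ne'
        · by_cases htj : t = j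
          · subst htj
            simp only [if_neg hti, if_pos rfl]
            constructor
            · intro _
              rw [← hxpeq]
              exact Complex.ofReal_ne_zero.mpr hxppos.ne'
            · intro _; exact Complex.ofReal_ne_zero.mpr hxpos.ne'
          · simp only [if_neg hti, if_neg htj]
      rw [hfilter]
      exact hmem
    have hq := proj_pair_ineq' hproj hij (x i) (x i) hu
    rw [← hxeq, ← hxpeq] at hq
    have : x i = xp i := by nlinarith [sq_nonneg (x i - xp i)]
    rw [← this]
    norm_num
    linarith
  · by_cases hp1' : p = 1
    · subst hp1'
      norm_num
      exact hxppos.le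
    · -- 0 < p < 1
      have hppos : 0 < p := lt_of_le_of_ne hp0 (Ne.symm hp)
      have hplt : p < 1 := lt_of_le_of_ne hp1 hp1'
      set a : ℝ := x i with ha
      set b : ℝ := xp i with hb
      have key : ∀ δ : ℝ, 0 < δ → δ < b → (1 - p) * (a - b) ≤ b + 3 * δ := by
        intro δ hδ hδb
        set η : ℝ := (1 - p) * δ ^ 2 / (b + δ) with hη
        have hbδ : 0 < b + δ := by linarith
        have hηpos : 0 < η :=
          div_pos (mul_pos (by linarith) (by positivity)) hbδ
        have hηδ : η ≤ δ := by
          rw [hη, div_le_iff₀ hbδ]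
          nlinarith
        have hηmul : η * (b + δ) = (1 - p) * δ ^ 2 :=
          div_mul_cancel₀ _ hbδ.ne'
        -- feasibility of the perturbed vector
        have hu : (fun t => if t = i then ((b + (δ + η) : ℝ) : ℂ)
            else if t = j then ((b - δ : ℝ) : ℂ)
            else ((xp t : ℝ) : ℂ)) ∈ FballGen p c := by
          have hmem := hproj.1
          simp only [FballGen, if_neg hp, Set.mem_setOf_eq] at hmem ⊢
          rw [sum_split' i j hij] at hmem ⊢
          have hrest : ∑ t ∈ (Finset.univ.erase i).erase j,
                ‖if t = i then ((b + (δ + η) : ℝ) : ℂ)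
                  else if t = j then ((b - δ : ℝ) : ℂ) else ((xp t : ℝ) : ℂ)‖ ^ p
              = ∑ t ∈ (Finset.univ.erase i).erase j,
                ‖((xp t : ℝ) : ℂ)‖ ^ p := by
            apply Finset.sum_congr rfl
            intro t ht
            have hti : t ≠ i := (Finset.mem_erase.mp (Finset.mem_erase.mp ht).2).1
            have htj : t ≠ j := (Finset.mem_erase.mp ht).1
            rw [if_neg hti, if_neg htj]
          rw [if_pos rfl, if_neg (Ne.symm hij), if_pos rfl, hrest]
          have hvi : ‖((b + (δ + η) : ℝ) : ℂ)‖ = b + (δ + η) := by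
            rw [Complex.norm_real, Real.norm_eq_abs, abs_of_nonneg (by linarith)]
          have hvj : ‖((b - δ : ℝ) : ℂ)‖ = b - δ := by
            rw [Complex.norm_real, Real.norm_eq_abs, abs_of_nonneg (by linarith)]
          have hxi : ‖((xp i : ℝ) : ℂ)‖ = b := by
            rw [Complex.norm_real, Real.norm_eq_abs, abs_of_nonneg (hxp i)]
          have hxj : ‖((xp j : ℝ) : ℂ)‖ = b := by
            rw [Complex.norm_real, Real.norm_eq_abs, abs_of_nonneg (hxp j), ← hxpeq]
          rw [hvi, hvj]
          rw [hxi, hxj] at hmem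
          have hfb := feas_bump' hppos hplt hxppos hδ hδb
          rw [← hη] at hfb
          linarith
        have hq := proj_pair_ineq' hproj hij (b + (δ + η)) (b - δ) hu
        rw [← hxeq, ← hxpeq, ← ha, ← hb] at hq
        -- from hq : 2 (a-b)^2 ≤ (a - (b+δ+η))^2 + (a - (b-δ))^2
        have h2 : 2 * (a - b) * η ≤ 2 * δ ^ 2 + 2 * δ * η + η ^ 2 := by nlinarith [hq]
        -- conclude
        have h3 : (1 - p) * (2 * (a - b) * η) ≤ (1 - p) * (2 * δ ^ 2 + 2 * δ * η + η ^ 2) :=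
          mul_le_mul_of_nonneg_left h2 (by linarith)
        have h5 : (1 - p) * (δ * η) ≤ δ * η :=
          mul_le_of_le_one_left (mul_nonneg hδ.le hηpos.le) (by linarith)
        have h6 : (1 - p) * η ^ 2 ≤ δ * η := by
          have h61 : (1 - p) * η ≤ η := mul_le_of_le_one_left hηpos.le (by linarith)
          have h62 : (1 - p) * η ≤ δ := le_trans h61 hηδ
          calc (1 - p) * η ^ 2 = ((1 - p) * η) * η := by ring
            _ ≤ δ * η := mul_le_mul_of_nonneg_right h62 hηpos.le
        nlinarith [h3, h5, h6, hηmul, hηpos, hδ]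
      have hfinal : (1 - p) * (a - b) ≤ b := by
        by_contra hlt
        push_neg at hlt
        set g : ℝ := (1 - p) * (a - b) - b with hg
        have hgpos : 0 < g := by linarith
        set δ : ℝ := min (b / 2) (g / 6) with hδdef
        have hδpos : 0 < δ := lt_min (by linarith) (by linarith)
        have hδb : δ < b := lt_of_le_of_lt (min_le_left _ _) (by linarith)
        have h3δ : 3 * δ ≤ g / 2 := by
          have := min_le_right (b / 2) (g / 6)
          rw [← hδdef] at this
          linarith
        have := key δ hδpos hδb
        linarith
      rw [div_mul_eq_mul_div, div_le_iff₀ (by linarith : (0:ℝ) < 2 - p)]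
      nlinarith [hfinal]
end

section
/- The function ξ(p) = √p · (2/(2−p))^{1/2 − 1/p} is strictly increasing on the interval (0, 1], satisfies ξ(1) = 1/√2, and tends to 0 as p → 0⁺. -/
open scoped Classical

noncomputable def xi (p : ℝ) : ℝ :=
  Real.sqrt p * (2 / (2 - p)) ^ ((1 : ℝ) / 2 - 1 / p)

noncomputable def xilog (p : ℝ) : ℝ :=
  (1/2) * Real.log p + (1/2 - 1/p) * (Real.log 2 - Real.log (2 - p))

lemma xi_eq_exp {p : ℝ} (hp : 0 < p) (hp1 : p ≤ 1) : xi p = Real.exp (xilog p) := by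
  have h2p : 0 < 2 - p := by linarith
  have hb : (0:ℝ) < 2 / (2 - p) := by positivity
  rw [xi, xilog, Real.exp_add, Real.sqrt_eq_rpow,
    Real.rpow_def_of_pos hp, Real.rpow_def_of_pos hb,
    Real.log_div (by norm_num) h2p.ne']
  ring_nf

lemma xilog_deriv {x : ℝ} (hx : 0 < x) (hx1 : x < 2) :
    HasDerivAt xilog ((x^2)⁻¹ * (Real.log 2 - Real.log (2 - x))) x := by
  have h2x : 0 < 2 - x := by linarith
  have h1 : HasDerivAt (fun p : ℝ => (1/2) * Real.log p) ((1/2) * x⁻¹) x :=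
    (Real.hasDerivAt_log hx.ne').const_mul _
  have h2 : HasDerivAt (fun p : ℝ => 1/2 - 1/p) ((x^2)⁻¹) x := by
    have := (hasDerivAt_inv hx.ne').const_sub (1/2 : ℝ)
    simpa [one_div, sub_neg_eq_add] using this
  have h3 : HasDerivAt (fun p : ℝ => Real.log 2 - Real.log (2 - p)) ((2 - x)⁻¹) x := by
    have hs : HasDerivAt (fun p : ℝ => 2 - p) (-1 : ℝ) x := by
      simpa using (hasDerivAt_id x).const_sub (2:ℝ)
    have := (Real.hasDerivAt_log h2x.ne').comp x hs
    have := this.const_sub (Real.log 2)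
    simpa using this
  have h4 := h2.mul h3
  have := h1.add h4
  refine this.congr_deriv ?_
  have hne : x ≠ 0 := hx.ne'
  have h2ne : (2 - x) ≠ 0 := h2x.ne'
  field_simp
  ring

lemma xilog_strictMono : StrictMonoOn xilog (Set.Ioc (0:ℝ) 1) := by
  apply strictMonoOn_of_deriv_pos (convex_Ioc 0 1)
  · intro x hx
    exact ((xilog_deriv hx.1 (by linarith [hx.2])).continuousAt).continuousWithinAt
  · intro x hx
    rw [interior_Ioc] at hx
    rw [(xilog_deriv hx.1 (by linarith [hx.2])).deriv]
    have h2x : 2 - x < 2 := by linarith [hx.1]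
    have h2x0 : 0 < 2 - x := by linarith [hx.2]
    have : Real.log (2 - x) < Real.log 2 := Real.log_lt_log h2x0 h2x
    have hx2 : (0:ℝ) < (x^2)⁻¹ := by have h0 := hx.1; positivity
    nlinarith

theorem xi_properties :
    StrictMonoOn xi (Set.Ioc (0 : ℝ) 1) ∧
    xi 1 = 1 / Real.sqrt 2 ∧
    Filter.Tendsto xi (nhdsWithin 0 (Set.Ioi 0)) (nhds 0) := by
  refine ⟨?_, ?_, ?_⟩
  · intro a ha b hb hab
    rw [xi_eq_exp ha.1 ha.2, xi_eq_exp hb.1 hb.2]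
    exact Real.exp_lt_exp.mpr (xilog_strictMono ha hb hab)
  · rw [xi]
    norm_num
    rw [Real.rpow_neg (by norm_num), Real.sqrt_eq_rpow]
  · apply squeeze_zero'
    · filter_upwards [Ioo_mem_nhdsGT_of_mem (by norm_num : (0:ℝ) ∈ Set.Ico 0 1)]
        with p hp
      have hp0 : (0:ℝ) < p := hp.1
      have h2p : (0:ℝ) < 2 - p := by linarith [hp.2]
      have hb : (0:ℝ) < 2 / (2 - p) := by positivity
      rw [xi]
      positivity
    · filter_upwards [Ioo_mem_nhdsGT_of_mem (by norm_num : (0:ℝ) ∈ Set.Ico 0 1)]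
        with p hp
      have hp0 : (0:ℝ) < p := hp.1
      have h2p : (0:ℝ) < 2 - p := by linarith [hp.2]
      have hb : (1:ℝ) ≤ 2 / (2 - p) := by
        rw [le_div_iff₀ h2p]; linarith
      have he : (1:ℝ)/2 - 1/p ≤ 0 := by
        have : (1:ℝ) ≤ 1/p := by
          rw [le_div_iff₀ hp0]; linarith [hp.2]
        linarith
      calc xi p ≤ Real.sqrt p * 1 := by
            exact mul_le_mul_of_nonneg_left
              (Real.rpow_le_one_of_one_le_of_nonpos hb he) (Real.sqrt_nonneg p)
        _ = Real.sqrt p := mul_one _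
    · have : Filter.Tendsto Real.sqrt (nhdsWithin 0 (Set.Ioi 0)) (nhds (Real.sqrt 0)) :=
        (Real.continuous_sqrt.continuousWithinAt)
      simpa using this
end
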